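/- arXiv:2201.03100 — 10 statements merged into one kernel-verified Lean document; each statement's English description precedes it below -/
import Mathlib

section
/- Let q be an odd prime power and let X be a Peisert-type graph of type (m,q). Then for every maximum clique C of X (a clique of the largest possible size), the characteristic vector of C in ℚ^(F_{q²}) lies in the ℚ-linear span of the characteristic vectors of the canonical cliques of X. (EKR-module property of Peisert-type graphs.) -/
section Aux

variable {F : Type} [Field F] (K : Subfield F)

/-- The "line through the origin" in direction `d`. -/
def aline (d : F) : Set F := {z : F | z / d ∈ (K : Set F)}

lemma mem_aline {d z : F} : z ∈ aline K d ↔ z / d ∈ K := Iff.rfl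

lemma aline_self {d : F} (hd : d ≠ 0) : d ∈ aline K d := by
  simp [aline, div_self hd]

lemma aline_eq {d z : F} (hd : d ≠ 0) (hz : z ≠ 0) (hzd : z / d ∈ K) :
    aline K z = aline K d := by
  ext w
  simp only [aline, Set.mem_setOf_eq, SetLike.mem_coe]
  constructor
  · intro h
    have h2 := mul_mem h hzd
    rwa [div_mul_div_comm, mul_comm w z, mul_div_mul_left _ _ hz] at h2
  · intro h
    have h2 := mul_mem h (inv_mem hzd)
    rwa [inv_div, div_mul_div_comm, mul_comm w d, mul_div_mul_left _ _ hd] at h2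

/-- The line through origin as an additive subgroup. -/
def alineA (d : F) : AddSubgroup F where
  carrier := aline K d
  zero_mem' := by simp [aline]
  add_mem' := by
    intro a b ha hb
    simp only [aline, Set.mem_setOf_eq, SetLike.mem_coe] at *
    rw [add_div]; exact add_mem ha hb
  neg_mem' := by
    intro a ha
    simp only [aline, Set.mem_setOf_eq, SetLike.mem_coe] at *
    rw [neg_div]; exact neg_mem ha

lemma mem_alineA {d z : F} : z ∈ alineA K d ↔ z / d ∈ K := Iff.rfl

lemma ncard_alineA {d : F} (hd : d ≠ 0) : Nat.card (alineA K d) = Nat.card K := by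
  refine Nat.card_congr ⟨fun z => ⟨z.1 / d, z.2⟩,
    fun k => ⟨d * k.1, by
      rw [mem_alineA, mul_div_cancel_left₀ _ hd]; exact k.2⟩, ?_, ?_⟩
  · intro z; apply Subtype.ext; simp only
    rw [mul_comm, div_mul_cancel₀ _ hd]
  · intro k; apply Subtype.ext; simp only
    rw [mul_div_cancel_left₀ _ hd]

end Aux

/-- EKR-module property of Peisert-type graphs: the characteristic vector of every
maximum clique lies in the ℚ-span of the characteristic vectors of canonical cliques. -/
theorem stmt_0
    (q m : ℕ) (hqodd : Odd q) (hqpp : IsPrimePow q) (hm : m ≤ q)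
    (F : Type) [Field F] [Fintype F] [DecidableEq F]
    (hF : Fintype.card F = q ^ 2)
    (K : Subfield F) (hK : Nat.card K = q)
    (c : Fin m → F) (hc : ∀ i, c i ≠ 0)
    (hdistinct : ∀ i j : Fin m, i ≠ j → c i / c j ∉ K)
    (S : Set F)
    (hS : S = ⋃ i : Fin m, {x : F | ∃ k ∈ (K : Set F), k ≠ 0 ∧ x = c i * k})
    (hKS : ∀ k : F, k ∈ K → k ≠ 0 → k ∈ S)
    (X : SimpleGraph F)
    (hX : ∀ x y : F, X.Adj x y ↔ x ≠ y ∧ x - y ∈ S)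
    (C : Finset F) (hC : X.IsClique (C : Set F))
    (hCmax : ∀ D : Finset F, X.IsClique (D : Set F) → D.card ≤ C.card) :
    (fun x : F => if x ∈ C then (1 : ℚ) else 0) ∈
      Submodule.span ℚ
        {f : F → ℚ | ∃ a ∈ S, ∃ b : F,
          f = Set.indicator {x : F | ∃ k ∈ (K : Set F), x = a * k + b}
                (fun _ => (1 : ℚ))} := by
  classical
  have hq2 : 2 ≤ q := hqpp.two_le
  have hq0 : (q : ℚ) ≠ 0 := by positivity
  have hcardF : Nat.card F = q ^ 2 := by rw [Nat.card_eq_fintype_card, hF]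
  -- basic facts about S
  have hSiff : ∀ z : F, z ∈ S ↔ z ≠ 0 ∧ ∃ i, z / c i ∈ K := by
    intro z
    rw [hS]
    simp only [Set.mem_iUnion, Set.mem_setOf_eq, SetLike.mem_coe]
    constructor
    · rintro ⟨i, k, hkK, hk0, rfl⟩
      refine ⟨mul_ne_zero (hc i) hk0, i, ?_⟩
      rwa [mul_div_cancel_left₀ _ (hc i)]
    · rintro ⟨hz, i, hzi⟩
      exact ⟨i, z / c i, hzi, div_ne_zero hz (hc i), by rw [mul_comm, div_mul_cancel₀ _ (hc i)]⟩
  have huniq : ∀ z : F, z ≠ 0 → ∀ i j : Fin m, z / c i ∈ K → z / c j ∈ K → i = j := by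
    intro z hz i j hi hj
    by_contra hne
    apply hdistinct i j hne
    have h2 := mul_mem hj (inv_mem hi)
    have h3 : (z / c j) * (z / c i)⁻¹ = c i / c j := by
      rw [inv_div, div_mul_div_comm, mul_comm z (c i), mul_div_mul_right _ _ hz]
    rwa [h3] at h2
  have hciS : ∀ i, c i ∈ S := fun i =>
    (hSiff _).2 ⟨hc i, i, by rw [div_self (hc i)]; exact K.one_mem⟩
  have hm1 : 1 ≤ m := by
    obtain ⟨-, i, -⟩ := (hSiff 1).1 (hKS 1 K.one_mem one_ne_zero)
    exact i.pos
  -- card of K-related filters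
  have hfK : (Finset.univ.filter fun z : F => z ∈ K).card = q := by
    rw [← Fintype.card_subtype, ← Nat.card_eq_fintype_card]
    exact hK
  have hfK1 : (Finset.univ.filter fun z : F => z ≠ 0 ∧ z ∈ K).card = q - 1 := by
    have h2 : (Finset.univ.filter fun z : F => z ≠ 0 ∧ z ∈ K)
        = (Finset.univ.filter fun z : F => z ∈ K).erase 0 := by
      ext z
      simp [Finset.mem_erase, and_comm]
    rw [h2, Finset.card_erase_of_mem (by simp [K.zero_mem]), hfK]
  have hfib : ∀ e : F, e ≠ 0 →
      (Finset.univ.filter fun z : F => z ≠ 0 ∧ z / e ∈ K).card = q - 1 := by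
    intro e he
    rw [← hfK1]
    refine Finset.card_bij' (fun z _ => z / e) (fun w _ => e * w) ?_ ?_ ?_ ?_
    · intro a ha
      simp only [Finset.mem_filter, Finset.mem_univ, true_and] at ha ⊢
      exact ⟨div_ne_zero ha.1 he, ha.2⟩
    · intro a ha
      simp only [Finset.mem_filter, Finset.mem_univ, true_and] at ha ⊢
      refine ⟨mul_ne_zero he ha.1, ?_⟩
      rw [mul_div_cancel_left₀ _ he]; exact ha.2
    · intro a ha
      show e * (a / e) = a
      rw [mul_comm, div_mul_cancel₀ _ he]
    · intro a ha
      show e * a / e = a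
      rw [mul_div_cancel_left₀ _ he]
  -- the finset of all lines through the origin
  set 𝓛 : Finset (Set F) :=
    (Finset.univ.filter fun d : F => d ≠ 0).image (fun d => aline K d) with h𝓛
  have hlines_card : 𝓛.card = q + 1 := by
    have h0 : (Finset.univ.filter fun d : F => d ≠ 0).card = q ^ 2 - 1 := by
      rw [Finset.filter_ne', Finset.card_erase_of_mem (Finset.mem_univ 0),
        Finset.card_univ, hF]
    have h1 := Finset.card_eq_sum_card_image (fun d : F => aline K d)
      (Finset.univ.filter fun d : F => d ≠ 0)
    have h2 : ∀ L ∈ 𝓛,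
        ((Finset.univ.filter fun d : F => d ≠ 0).filter fun d => aline K d = L).card
          = q - 1 := by
      intro L hL
      simp only [h𝓛, Finset.mem_image, Finset.mem_filter, Finset.mem_univ, true_and] at hL
      obtain ⟨d₀, hd₀, rfl⟩ := hL
      rw [Finset.filter_filter]
      have heq : (Finset.univ.filter fun d : F => d ≠ 0 ∧ aline K d = aline K d₀)
          = (Finset.univ.filter fun z : F => z ≠ 0 ∧ z / d₀ ∈ K) := by
        ext z
        simp only [Finset.mem_filter, Finset.mem_univ, true_and, and_congr_right_iff]
        intro hz
        constructor
        · intro h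
          have : z ∈ aline K d₀ := by rw [← h]; exact aline_self K hz
          exact this
        · intro h
          exact aline_eq K hd₀ hz h
      rw [heq, hfib d₀ hd₀]
    have h3 : 𝓛.card * (q - 1) = q ^ 2 - 1 := by
      rw [← h0, h1, ← h𝓛, Finset.sum_congr rfl h2, Finset.sum_const, smul_eq_mul]
    have hqq : (q + 1) * (q - 1) = q ^ 2 - 1 := by
      obtain ⟨t, ht⟩ : ∃ t, q = t + 2 := ⟨q - 2, by omega⟩
      subst ht
      have h5 : (t + 2) ^ 2 = (t + 3) * (t + 1) + 1 := by ring
      rw [h5]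
      rfl
    have h6 : 𝓛.card * (q - 1) = (q + 1) * (q - 1) := by rw [hqq, h3]
    exact Nat.eq_of_mul_eq_mul_right (by omega) h6
  set 𝓢 : Finset (Set F) := Finset.univ.image (fun i : Fin m => aline K (c i)) with h𝓢
  have h𝓢sub : 𝓢 ⊆ 𝓛 := by
    intro L hL
    simp only [h𝓢, Finset.mem_image, Finset.mem_univ, true_and] at hL
    obtain ⟨i, rfl⟩ := hL
    simp only [h𝓛, Finset.mem_image, Finset.mem_filter, Finset.mem_univ, true_and]
    exact ⟨c i, hc i, rfl⟩
  have h𝓢card : 𝓢.card = m := by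
    rw [h𝓢, Finset.card_image_of_injective _ ?_, Finset.card_univ, Fintype.card_fin]
    intro i j hij
    by_contra hne
    apply hdistinct i j hne
    have hij' : aline K (c i) = aline K (c j) := hij
    have : c i ∈ aline K (c j) := by rw [← hij']; exact aline_self K (hc i)
    exact this
  have hmissing_ex : ∃ d : F, d ≠ 0 ∧ aline K d ∉ 𝓢 := by
    have : ¬ (𝓛 ⊆ 𝓢) := by
      intro h
      have := Finset.card_le_card h
      omega
    rw [Finset.not_subset] at this
    obtain ⟨L, hL1, hL2⟩ := this
    simp only [h𝓛, Finset.mem_image, Finset.mem_filter, Finset.mem_univ, true_and] at hL1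
    obtain ⟨d, hd, rfl⟩ := hL1
    exact ⟨d, hd, hL2⟩
  -- missing line avoids S
  have hmiss : ∀ d : F, d ≠ 0 → aline K d ∉ 𝓢 →
      ∀ z : F, z ≠ 0 → z / d ∈ K → z ∉ S := by
    intro d hd hdm z hz hzd hzS
    obtain ⟨-, i, hi⟩ := (hSiff z).1 hzS
    have h1 : aline K z = aline K d := aline_eq K hd hz hzd
    have h2 : aline K z = aline K (c i) := aline_eq K (hc i) hz hi
    apply hdm
    simp only [h𝓢, Finset.mem_image, Finset.mem_univ, true_and]
    exact ⟨i, (h1.symm.trans h2).symm⟩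
  -- quotient cardinality
  have hquot : ∀ d : F, d ≠ 0 → Nat.card (F ⧸ alineA K d) = q := by
    intro d hd
    have h1 := AddSubgroup.card_eq_card_quotient_mul_card_addSubgroup (alineA K d)
    rw [hcardF, ncard_alineA K hd, hK] at h1
    have hq0' : 0 < q := by omega
    rw [sq] at h1
    exact Nat.eq_of_mul_eq_mul_right hq0' h1.symm
  -- differences of clique elements lie in S
  have hdiff : ∀ x ∈ C, ∀ y ∈ C, x ≠ y → y - x ∈ S := by
    intro x hx y hy hne
    exact ((hX y x).1 (hC (Finset.mem_coe.mpr hy) (Finset.mem_coe.mpr hx) (Ne.symm hne))).2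
  -- the clique has exactly q elements
  have hq_le : q ≤ C.card := by
    have hclq : X.IsClique ((Finset.univ.filter fun z : F => z ∈ K : Finset F) : Set F) := by
      intro x hx y hy hne
      simp only [Finset.coe_filter, Finset.mem_univ, true_and, Set.mem_setOf_eq] at hx hy
      rw [hX]
      exact ⟨hne, hKS _ (K.sub_mem hx hy) (sub_ne_zero.2 hne)⟩
    have := hCmax _ hclq
    rwa [hfK] at this
  have hC_le : C.card ≤ q := by
    obtain ⟨d, hd, hdm⟩ := hmissing_ex
    have hfin : Finite (F ⧸ alineA K d) := Quotient.finite _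
    have hfty : Fintype (F ⧸ alineA K d) := Fintype.ofFinite _
    have hcardQ : Fintype.card (F ⧸ alineA K d) = q := by
      rw [← Nat.card_eq_fintype_card]; exact hquot d hd
    calc C.card ≤ (Finset.univ : Finset (F ⧸ alineA K d)).card := by
          apply Finset.card_le_card_of_injOn
            (fun x => (QuotientAddGroup.mk x : F ⧸ alineA K d))
            (fun a _ => Finset.mem_univ _)
          intro x hx y hy hxy
          by_contra hne
          have hyx : (y - x) / d ∈ K := by
            have h := QuotientAddGroup.eq.mp hxy
            rwa [neg_add_eq_sub] at h
          exact hmiss d hd hdm (y - x)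
            (sub_ne_zero.2 fun h => hne (h.symm))
            hyx (hdiff x hx y hy hne)
      _ = q := by rw [Finset.card_univ, hcardQ]
  have hCq : C.card = q := le_antisymm hC_le hq_le
  -- transversal property of missing directions
  have htrans : ∀ d : F, d ≠ 0 → aline K d ∉ 𝓢 → ∀ y : F, ∃ x ∈ C, (y - x) / d ∈ K := by
    intro d hd hdm y
    have hfin : Finite (F ⧸ alineA K d) := Quotient.finite _
    set π : {x // x ∈ C} → F ⧸ alineA K d := fun x => QuotientAddGroup.mk x.1 with hπ
    have hinj : Function.Injective π := by
      intro x y hxy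
      by_contra hne
      have hne' : x.1 ≠ y.1 := fun h => hne (Subtype.ext h)
      have hyx : (y.1 - x.1) / d ∈ K := by
        have h := QuotientAddGroup.eq.mp hxy
        rwa [neg_add_eq_sub] at h
      exact hmiss d hd hdm (y.1 - x.1)
        (sub_ne_zero.2 fun h => hne' (h.symm))
        hyx (hdiff x.1 x.2 y.1 y.2 hne')
    have hbij : Function.Bijective π := by
      rw [Nat.bijective_iff_injective_and_card]
      refine ⟨hinj, ?_⟩
      rw [Nat.card_eq_fintype_card, Fintype.card_coe, hCq, hquot d hd]
    obtain ⟨x, hx⟩ := hbij.2 (QuotientAddGroup.mk y)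
    refine ⟨x.1, x.2, ?_⟩
    have h := QuotientAddGroup.eq.mp hx
    rwa [neg_add_eq_sub] at h
  -- the generator functions
  set i₀ : Fin m := ⟨0, hm1⟩ with hi₀
  set gen : F → F → F → ℚ := fun a b =>
    Set.indicator {x : F | ∃ k ∈ (K : Set F), x = a * k + b} (fun _ => (1 : ℚ)) with hgen
  have hgen_apply : ∀ a b y : F, a ≠ 0 →
      gen a b y = if (y - b) / a ∈ K then 1 else 0 := by
    intro a b y ha
    have hiff : y ∈ {x : F | ∃ k ∈ (K : Set F), x = a * k + b} ↔ (y - b) / a ∈ K := by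
      simp only [Set.mem_setOf_eq, SetLike.mem_coe]
      constructor
      · rintro ⟨k, hk, rfl⟩
        rwa [add_sub_cancel_right, mul_div_cancel_left₀ _ ha]
      · intro h
        refine ⟨(y - b) / a, h, ?_⟩
        rw [mul_comm, div_mul_cancel₀ _ ha, sub_add_cancel]
    show Set.indicator {x : F | ∃ k ∈ (K : Set F), x = a * k + b} (fun _ => (1 : ℚ)) y
      = if (y - b) / a ∈ K then 1 else 0
    rw [Set.indicator_apply]
    exact if_congr hiff rfl rfl
  set f1 : F → ℚ := ∑ x ∈ C, ∑ i : Fin m, gen (c i) x with hf1def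
  set f2 : F → ℚ := ∑ b : F, gen (c i₀) b with hf2def
  have hf1mem : f1 ∈ Submodule.span ℚ
      {f : F → ℚ | ∃ a ∈ S, ∃ b : F,
        f = Set.indicator {x : F | ∃ k ∈ (K : Set F), x = a * k + b} (fun _ => (1 : ℚ))} := by
    apply Submodule.sum_mem
    intro x _
    apply Submodule.sum_mem
    intro i _
    exact Submodule.subset_span ⟨c i, hciS i, x, rfl⟩
  have hf2mem : f2 ∈ Submodule.span ℚ
      {f : F → ℚ | ∃ a ∈ S, ∃ b : F,
        f = Set.indicator {x : F | ∃ k ∈ (K : Set F), x = a * k + b} (fun _ => (1 : ℚ))} := by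
    apply Submodule.sum_mem
    intro b _
    exact Submodule.subset_span ⟨c i₀, hciS i₀, b, rfl⟩
  -- value computations
  have hcount : ∀ y : F, f1 y =
      ∑ x ∈ C, ((Finset.univ.filter fun i : Fin m => (y - x) / c i ∈ K).card : ℚ) := by
    intro y
    rw [hf1def, Finset.sum_apply]
    refine Finset.sum_congr rfl ?_
    intro x _
    rw [Finset.sum_apply]
    rw [Finset.sum_congr rfl fun i _ => hgen_apply (c i) x y (hc i)]
    rw [Finset.sum_boole]
  have ht0 : (Finset.univ.filter fun i : Fin m => (0 : F) / c i ∈ K).card = m := by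
    have h : (Finset.univ.filter fun i : Fin m => (0 : F) / c i ∈ K) = Finset.univ := by
      apply Finset.filter_true_of_mem
      intro i _
      rw [zero_div]; exact K.zero_mem
    rw [h, Finset.card_univ, Fintype.card_fin]
  have htS : ∀ z : F, z ∈ S →
      (Finset.univ.filter fun i : Fin m => z / c i ∈ K).card = 1 := by
    intro z hz
    obtain ⟨hz0, j, hj⟩ := (hSiff z).1 hz
    have h : (Finset.univ.filter fun i : Fin m => z / c i ∈ K) = {j} := by
      ext i
      simp only [Finset.mem_filter, Finset.mem_univ, true_and, Finset.mem_singleton]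
      exact ⟨fun hi => huniq z hz0 i j hi hj, fun h => h ▸ hj⟩
    rw [h, Finset.card_singleton]
  have htN : ∀ z : F, z ≠ 0 → z ∉ S →
      (Finset.univ.filter fun i : Fin m => z / c i ∈ K).card = 0 := by
    intro z hz0 hzS
    rw [Finset.card_eq_zero, Finset.filter_eq_empty_iff]
    intro i _ hi
    exact hzS ((hSiff z).2 ⟨hz0, i, hi⟩)
  have hyC : ∀ y ∈ C, f1 y = (q : ℚ) + m - 1 := by
    intro y hy
    rw [hcount y, ← Finset.add_sum_erase _ _ hy]
    have h1 : ((Finset.univ.filter fun i : Fin m => (y - y) / c i ∈ K).card : ℚ) = m := by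
      rw [sub_self, ht0]
    rw [h1]
    have h2 : ∀ x ∈ C.erase y,
        ((Finset.univ.filter fun i : Fin m => (y - x) / c i ∈ K).card : ℚ) = 1 := by
      intro x hx
      rw [htS _ (hdiff x (Finset.mem_of_mem_erase hx) y hy
        (Finset.ne_of_mem_erase hx)), Nat.cast_one]
    rw [Finset.sum_congr rfl h2, Finset.sum_const, Finset.card_erase_of_mem hy, hCq,
      nsmul_eq_mul, mul_one, Nat.cast_sub (by omega : 1 ≤ q), Nat.cast_one]
    ring
  have hNS : ∀ y : F, y ∉ C → (C.filter fun x => y - x ∉ S).card = q + 1 - m := by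
    intro y hy
    have hcard : (C.filter fun x => y - x ∉ S).card = (𝓛 \ 𝓢).card := by
      apply Finset.card_bij (fun x _ => aline K (y - x))
      · intro x hx
        simp only [Finset.mem_filter] at hx
        have hyx : y - x ≠ 0 := sub_ne_zero.2 fun h => hy (h ▸ hx.1)
        rw [Finset.mem_sdiff]
        constructor
        · simp only [h𝓛, Finset.mem_image, Finset.mem_filter, Finset.mem_univ, true_and]
          exact ⟨y - x, hyx, rfl⟩
        · intro hmem
          simp only [h𝓢, Finset.mem_image, Finset.mem_univ, true_and] at hmem
          obtain ⟨i, hi⟩ := hmem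
          have hmem2 : y - x ∈ aline K (c i) := by rw [hi]; exact aline_self K hyx
          exact hx.2 ((hSiff _).2 ⟨hyx, i, hmem2⟩)
      · intro x₁ hx₁ x₂ hx₂ heq
        by_contra hne
        simp only [Finset.mem_filter] at hx₁ hx₂
        have h1 : y - x₁ ≠ 0 := sub_ne_zero.2 fun h => hy (h ▸ hx₁.1)
        have hz : x₁ - x₂ ∈ S := hdiff x₂ hx₂.1 x₁ hx₁.1 fun h => hne h.symm
        have hz0 : x₁ - x₂ ≠ 0 := sub_ne_zero.2 hne
        have hmem2 : y - x₂ ∈ aline K (y - x₁) := by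
          have heq' : aline K (y - x₁) = aline K (y - x₂) := heq
          rw [heq']
          exact aline_self K (sub_ne_zero.2 fun h => hy (h ▸ hx₂.1))
        have hdivmem : (x₁ - x₂) / (y - x₁) ∈ K := by
          have hrw : x₁ - x₂ = (y - x₂) - (y - x₁) := by ring
          rw [hrw, sub_div]
          refine sub_mem hmem2 ?_
          rw [div_self h1]; exact K.one_mem
        obtain ⟨-, j, hj⟩ := (hSiff _).1 hz
        have e1 : aline K (x₁ - x₂) = aline K (y - x₁) := aline_eq K h1 hz0 hdivmem
        have e2 : aline K (x₁ - x₂) = aline K (c j) := aline_eq K (hc j) hz0 hj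
        have hmem3 : y - x₁ ∈ aline K (c j) := by
          rw [← e2, e1]; exact aline_self K h1
        exact hx₁.2 ((hSiff _).2 ⟨h1, j, hmem3⟩)
      · intro L hL
        rw [Finset.mem_sdiff] at hL
        obtain ⟨hL1, hL2⟩ := hL
        simp only [h𝓛, Finset.mem_image, Finset.mem_filter, Finset.mem_univ, true_and] at hL1
        obtain ⟨d, hd, rfl⟩ := hL1
        obtain ⟨x, hxC, hxd⟩ := htrans d hd hL2 y
        have hyx : y - x ≠ 0 := sub_ne_zero.2 fun h => hy (h ▸ hxC)
        exact ⟨x, Finset.mem_filter.2 ⟨hxC, hmiss d hd hL2 (y - x) hyx hxd⟩,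
          aline_eq K hd hyx hxd⟩
    rw [hcard, Finset.card_sdiff_of_subset h𝓢sub, hlines_card, h𝓢card]
  have hyNC : ∀ y : F, y ∉ C → f1 y = (m : ℚ) - 1 := by
    intro y hy
    rw [hcount y, ← Finset.sum_filter_add_sum_filter_not C (fun x => y - x ∈ S)]
    have hA : ∀ x ∈ C.filter (fun x => y - x ∈ S),
        ((Finset.univ.filter fun i : Fin m => (y - x) / c i ∈ K).card : ℚ) = 1 := by
      intro x hx
      rw [htS _ (Finset.mem_filter.1 hx).2, Nat.cast_one]
    have hB : ∀ x ∈ C.filter (fun x => ¬ (y - x ∈ S)),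
        ((Finset.univ.filter fun i : Fin m => (y - x) / c i ∈ K).card : ℚ) = 0 := by
      intro x hx
      obtain ⟨hx1, hx2⟩ := Finset.mem_filter.1 hx
      have hyx : y - x ≠ 0 := sub_ne_zero.2 fun h => hy (h ▸ hx1)
      rw [htN _ hyx hx2, Nat.cast_zero]
    rw [Finset.sum_congr rfl hA, Finset.sum_congr rfl hB,
      Finset.sum_const, Finset.sum_const, smul_zero, add_zero, nsmul_eq_mul, mul_one]
    have hfq := Finset.card_filter_add_card_filter_not (s := C)
      (p := fun x => y - x ∈ S)
    have hnc := hNS y hy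
    have hfS : (C.filter fun x => y - x ∈ S).card = m - 1 := by omega
    rw [hfS, Nat.cast_sub hm1, Nat.cast_one]
  have hf2val : ∀ y : F, f2 y = (q : ℚ) := by
    intro y
    rw [hf2def, Finset.sum_apply]
    rw [Finset.sum_congr rfl fun b _ => hgen_apply (c i₀) b y (hc i₀)]
    rw [Finset.sum_boole]
    have h : (Finset.univ.filter fun b : F => (y - b) / c i₀ ∈ K).card
        = (Finset.univ.filter fun z : F => z ∈ K).card := by
      refine Finset.card_bij' (fun b _ => (y - b) / c i₀) (fun k _ => y - c i₀ * k) ?_ ?_ ?_ ?_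
      · intro b hb
        simp only [Finset.mem_filter, Finset.mem_univ, true_and] at hb ⊢
        exact hb
      · intro k hk
        simp only [Finset.mem_filter, Finset.mem_univ, true_and] at hk ⊢
        rw [sub_sub_cancel, mul_div_cancel_left₀ _ (hc i₀)]
        exact hk
      · intro b hb
        show y - c i₀ * ((y - b) / c i₀) = b
        rw [mul_comm, div_mul_cancel₀ _ (hc i₀), sub_sub_cancel]
      · intro k hk
        show (y - (y - c i₀ * k)) / c i₀ = k
        rw [sub_sub_cancel, mul_div_cancel_left₀ _ (hc i₀)]
    rw [h, hfK]
  -- the final identity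
  have key : (fun x : F => if x ∈ C then (1 : ℚ) else 0)
      = ((q : ℚ))⁻¹ • f1 - (((m : ℚ) - 1) / ((q : ℚ) * q)) • f2 := by
    funext y
    simp only [Pi.sub_apply, Pi.smul_apply, smul_eq_mul]
    rw [hf2val y]
    by_cases hy : y ∈ C
    · rw [if_pos hy, hyC y hy]
      field_simp
      ring
    · rw [if_neg hy, hyNC y hy]
      field_simp
      ring
  rw [key]
  exact sub_mem (Submodule.smul_mem _ _ hf1mem) (Submodule.smul_mem _ _ hf2mem)
end

section
/- Let q be an odd prime power and let X be a Peisert-type graph of type (m,q). Then there exists an orthogonal array A : Fin m × Fin (q²) → Fin q and a graph isomorphism φ from the block graph of A to X such that for every subset D of columns, D is a canonical clique of the block graph of A if and only if φ(D) is a canonical clique of X; in particular φ induces a one-to-one correspondence between canonical cliques of the block graph and canonical cliques of X. -/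
/-- An orthogonal array `OA(m,n)`: any two distinct rows induce a bijection from
columns to pairs of entries. -/
def IsOrthogonalArray (m n : ℕ) (A : Fin m × Fin (n ^ 2) → Fin n) : Prop :=
  ∀ r s : Fin m, r ≠ s →
    Function.Bijective fun col : Fin (n ^ 2) => (A (r, col), A (s, col))

/-- The block graph of an orthogonal array: distinct columns are adjacent iff they
share an entry in some row. -/
def blockGraph {m n : ℕ} (A : Fin m × Fin (n ^ 2) → Fin n) : SimpleGraph (Fin (n ^ 2)) :=
  SimpleGraph.fromRel fun col col' => ∃ r : Fin m, A (r, col) = A (r, col')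

/-- Every Peisert-type graph of type (m,q) is isomorphic to the block graph of an
orthogonal array OA(m,q), with a one-to-one correspondence between canonical cliques. -/
theorem stmt_1
    (q m : ℕ) (hqodd : Odd q) (hqpp : IsPrimePow q) (hm : m ≤ q)
    (F : Type) [Field F] [Fintype F] [DecidableEq F]
    (hF : Fintype.card F = q ^ 2)
    (K : Subfield F) (hK : Nat.card K = q)
    (c : Fin m → F) (hc : ∀ i, c i ≠ 0)
    (hdistinct : ∀ i j : Fin m, i ≠ j → c i / c j ∉ K)
    (S : Set F)
    (hS : S = ⋃ i : Fin m, {x : F | ∃ k ∈ (K : Set F), k ≠ 0 ∧ x = c i * k})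
    (hKS : ∀ k : F, k ∈ K → k ≠ 0 → k ∈ S)
    (X : SimpleGraph F)
    (hX : ∀ x y : F, X.Adj x y ↔ x ≠ y ∧ x - y ∈ S) :
    ∃ A : Fin m × Fin (q ^ 2) → Fin q, IsOrthogonalArray m q A ∧
      ∃ φ : blockGraph A ≃g X,
        ∀ D : Set (Fin (q ^ 2)),
          (∃ (r : Fin m) (i : Fin q), D = {col | A (r, col) = i}) ↔
          (∃ a ∈ S, ∃ b : F, (⇑φ) '' D = {x : F | ∃ k ∈ (K : Set F), x = a * k + b}) := by
  classical
  have hq1 : 1 < q := hqpp.one_lt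
  set W : Fin m → Submodule K F := fun r => Submodule.span K {c r} with hWdef
  have hmemW : ∀ (r : Fin m) (x : F), x ∈ W r ↔ ∃ k ∈ (K : Set F), x = c r * k := by
    intro r x
    rw [hWdef]
    simp only [Submodule.mem_span_singleton]
    constructor
    · rintro ⟨k, rfl⟩
      exact ⟨(k : F), k.2, by rw [mul_comm]; rfl⟩
    · rintro ⟨k, hk, rfl⟩
      exact ⟨⟨k, hk⟩, by rw [mul_comm]; rfl⟩
  -- S membership
  have hmemS : ∀ x : F, x ≠ 0 → (x ∈ S ↔ ∃ r, x ∈ W r) := by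
    intro x hx
    rw [hS]
    simp only [Set.mem_iUnion, Set.mem_setOf_eq]
    constructor
    · rintro ⟨i, k, hk, -, rfl⟩
      exact ⟨i, (hmemW i _).2 ⟨k, hk, rfl⟩⟩
    · rintro ⟨r, hr⟩
      obtain ⟨k, hk, rfl⟩ := (hmemW r _).1 hr
      have hk0 : k ≠ 0 := by rintro rfl; simp at hx
      exact ⟨r, k, hk, hk0, rfl⟩
  -- trivial intersection
  have hintW : ∀ (r s : Fin m), r ≠ s → ∀ x : F, x ∈ W r → x ∈ W s → x = 0 := by
    intro r s hrs x hxr hxs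
    by_contra hx0
    obtain ⟨k, hk, rfl⟩ := (hmemW r x).1 hxr
    obtain ⟨k', hk', hkk⟩ := (hmemW s _).1 hxs
    have hk0 : k ≠ 0 := by rintro rfl; simp at hx0
    apply hdistinct r s hrs
    have : c r / c s = k' / k := by
      rw [div_eq_div_iff (hc s) hk0]
      linear_combination hkk
    rw [this]
    exact K.div_mem hk' hk
  -- cardinalities
  have hcardF : Nat.card F = q ^ 2 := by rw [Nat.card_eq_fintype_card, hF]
  have hcardW : ∀ r, Nat.card (W r) = q := by
    intro r
    rw [← hK]
    exact (Nat.card_congr (LinearEquiv.toSpanNonzeroSingleton K F (c r) (hc r)).toEquiv).symm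
  have hcardQ : ∀ r, Nat.card (F ⧸ W r) = q := by
    intro r
    have h := Submodule.card_eq_card_quotient_mul_card (W r)
    rw [hcardF, hcardW r, pow_two] at h
    have hq0 : 0 < q := by omega
    nlinarith [Nat.card_pos (α := F ⧸ W r)]
  -- equivalences
  let e : Fin (q ^ 2) ≃ F := (Fintype.equivFinOfCardEq hF).symm
  let eqr : ∀ r : Fin m, (F ⧸ W r) ≃ Fin q := fun r => Finite.equivFinOfCardEq (hcardQ r)
  set A : Fin m × Fin (q ^ 2) → Fin q := fun p => eqr p.1 (Submodule.Quotient.mk (e p.2))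
    with hAdef
  have hA : ∀ (r : Fin m) (col col' : Fin (q ^ 2)),
      A (r, col) = A (r, col') ↔ e col - e col' ∈ W r := by
    intro r col col'
    rw [show A (r, col) = eqr r (Submodule.Quotient.mk (e col)) from rfl,
      show A (r, col') = eqr r (Submodule.Quotient.mk (e col')) from rfl,
      (eqr r).apply_eq_iff_eq, Submodule.Quotient.eq]
  have hmap : ∀ a b : Fin (q ^ 2), X.Adj (e a) (e b) ↔ (blockGraph A).Adj a b := by
    intro a b
    rw [hX]
    simp only [blockGraph, SimpleGraph.fromRel_adj]
    constructor
    · rintro ⟨hne, hmem⟩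
      have hne' : a ≠ b := fun h => hne (by rw [h])
      have hsub : e a - e b ≠ 0 := sub_ne_zero.2 hne
      obtain ⟨r, hr⟩ := (hmemS _ hsub).1 hmem
      exact ⟨hne', Or.inl ⟨r, (hA r a b).2 hr⟩⟩
    · rintro ⟨hne, hor⟩
      have hne' : e a ≠ e b := fun h => hne (e.injective h)
      have hsub : e a - e b ≠ 0 := sub_ne_zero.2 hne'
      refine ⟨hne', (hmemS _ hsub).2 ?_⟩
      rcases hor with ⟨r, hr⟩ | ⟨r, hr⟩
      · exact ⟨r, (hA r a b).1 hr⟩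
      · have := (hA r b a).1 hr
        exact ⟨r, by simpa using (W r).neg_mem this⟩
  refine ⟨A, ?_, ⟨e, fun {a b} => hmap a b⟩, ?_⟩
  · -- orthogonal array
    intro r s hrs
    rw [Fintype.bijective_iff_injective_and_card]
    constructor
    · intro col col' h
      simp only [Prod.mk.injEq] at h
      have h1 := (hA r col col').1 h.1
      have h2 := (hA s col col').1 h.2
      have := hintW r s hrs _ h1 h2
      exact e.injective (by rwa [sub_eq_zero] at this)
    · simp [pow_two]
  · -- clique correspondence
    intro D
    have hcoe : ∀ (E : Set (Fin (q ^ 2))),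
        (⇑(⟨e, fun {a b} => hmap a b⟩ : blockGraph A ≃g X)) '' E = e '' E := fun _ => rfl
    rw [hcoe]
    constructor
    · rintro ⟨r, i, rfl⟩
      obtain ⟨b, hb⟩ := Submodule.Quotient.mk_surjective (W r) ((eqr r).symm i)
      refine ⟨c r, ?_, b, ?_⟩
      · rw [hS]
        exact Set.mem_iUnion.2 ⟨r, 1, K.one_mem, one_ne_zero, (mul_one _).symm⟩
      · ext x
        simp only [Set.mem_image, Set.mem_setOf_eq]
        constructor
        · rintro ⟨col, hcol, rfl⟩
          have hq : Submodule.Quotient.mk (p := W r) (e col) = Submodule.Quotient.mk b := by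
            rw [hb, ← hcol]
            exact ((eqr r).symm_apply_apply _).symm
          rw [Submodule.Quotient.eq] at hq
          obtain ⟨k, hk, hek⟩ := (hmemW r _).1 hq
          exact ⟨k, hk, by linear_combination hek⟩
        · rintro ⟨k, hk, rfl⟩
          refine ⟨e.symm (c r * k + b), ?_, by simp⟩
          show eqr r (Submodule.Quotient.mk (e (e.symm _))) = i
          rw [e.apply_symm_apply]
          have hq : Submodule.Quotient.mk (p := W r) (c r * k + b)
              = Submodule.Quotient.mk b := by
            rw [Submodule.Quotient.eq]
            exact (hmemW r _).2 ⟨k, hk, by ring⟩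
          rw [hq, hb, Equiv.apply_symm_apply]
    · rintro ⟨a, haS, b, hImg⟩
      rw [hS] at haS
      obtain ⟨r, k0, hk0K, hk00, rfl⟩ := Set.mem_iUnion.1 haS
      have hset : {x : F | ∃ k ∈ (K : Set F), x = c r * k0 * k + b}
          = {x : F | x - b ∈ W r} := by
        ext x
        simp only [Set.mem_setOf_eq]
        constructor
        · rintro ⟨k, hk, rfl⟩
          exact (hmemW r _).2 ⟨k0 * k, K.mul_mem hk0K hk, by ring⟩
        · intro hx
          obtain ⟨k, hk, hxk⟩ := (hmemW r _).1 hx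
          refine ⟨k0⁻¹ * k, K.mul_mem (K.inv_mem hk0K) hk, ?_⟩
          have hkk : k0 * (k0⁻¹ * k) = k := by field_simp
          rw [mul_assoc, hkk, ← hxk]
          ring
      rw [hset] at hImg
      refine ⟨r, eqr r (Submodule.Quotient.mk b), ?_⟩
      have hD : D = e ⁻¹' {x : F | x - b ∈ W r} := by
        rw [← hImg]
        exact (Set.preimage_image_eq D e.injective).symm
      rw [hD]
      ext col
      simp only [Set.mem_preimage, Set.mem_setOf_eq]
      show e col - b ∈ W r ↔ eqr r (Submodule.Quotient.mk (e col))
        = eqr r (Submodule.Quotient.mk b)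
      rw [(eqr r).apply_eq_iff_eq, Submodule.Quotient.eq]
end

section
/- Let q be an odd prime power and let X be a Peisert-type graph of type (m,q). Then X is a strongly regular graph with parameters (q², m(q−1), (m−1)(m−2)+q−2, m(m−1)). -/
open Finset

/-- A Peisert-type graph of type (m,q) is strongly regular with parameters
(q², m(q−1), (m−1)(m−2)+q−2, m(m−1)). -/
theorem stmt_2
    (q m : ℕ) (hqodd : Odd q) (hqpp : IsPrimePow q) (hm : m ≤ q)
    (F : Type) [Field F] [Fintype F] [DecidableEq F]
    (hF : Fintype.card F = q ^ 2)
    (K : Subfield F) (hK : Nat.card K = q)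
    (c : Fin m → F) (hc : ∀ i, c i ≠ 0)
    (hdistinct : ∀ i j : Fin m, i ≠ j → c i / c j ∉ K)
    (S : Set F)
    (hS : S = ⋃ i : Fin m, {x : F | ∃ k ∈ (K : Set F), k ≠ 0 ∧ x = c i * k})
    (hKS : ∀ k : F, k ∈ K → k ≠ 0 → k ∈ S)
    (X : SimpleGraph F) [DecidableRel X.Adj]
    (hX : ∀ x y : F, X.Adj x y ↔ x ≠ y ∧ x - y ∈ S) :
    X.IsSRGWith (q ^ 2) (m * (q - 1)) ((m - 1) * (m - 2) + q - 2) (m * (m - 1)) := by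
  classical
  have hq2 : 2 ≤ q := hqpp.two_le
  have hq3 : 3 ≤ q := by
    rcases hqodd with ⟨t, ht⟩; omega
  have hcardK : Fintype.card ↥K = q := by
    rw [← Nat.card_eq_fintype_card]; exact hK
  set Cf : Fin m → Finset F := fun i =>
    ((Finset.univ : Finset ↥K).erase 0).image (fun k : ↥K => c i * (k : F)) with hCf
  have hmemCf : ∀ (i : Fin m) (x : F), x ∈ Cf i ↔ ∃ k : ↥K, k ≠ 0 ∧ c i * (k : F) = x := by
    intro i x
    simp only [hCf, Finset.mem_image, Finset.mem_erase, Finset.mem_univ, and_true]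
  have hSC : ∀ x : F, x ∈ S ↔ ∃ i, x ∈ Cf i := by
    intro x
    rw [hS]
    simp only [Set.mem_iUnion, Set.mem_setOf_eq]
    constructor
    · rintro ⟨i, k, hkK, hk0, rfl⟩
      exact ⟨i, (hmemCf i _).2 ⟨⟨k, hkK⟩, fun h0 => hk0 (by simpa using congrArg Subtype.val h0), rfl⟩⟩
    · rintro ⟨i, hx⟩
      obtain ⟨k, hk0, rfl⟩ := (hmemCf i _).1 hx
      exact ⟨i, k, k.2, by simpa using hk0, rfl⟩
  have hCf0 : ∀ i, (0:F) ∉ Cf i := by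
    intro i h
    obtain ⟨k, hk0, hk⟩ := (hmemCf i 0).1 h
    have : (k : F) ≠ 0 := by simpa using hk0
    exact (mul_ne_zero (hc i) this) hk
  have hS0 : (0:F) ∉ S := by
    intro h
    obtain ⟨i, hi⟩ := (hSC 0).1 h
    exact hCf0 i hi
  have hcinj : ∀ i : Fin m, Function.Injective (fun k : ↥K => c i * (k : F)) := by
    intro i k l h
    simp only at h
    exact Subtype.coe_injective (mul_left_cancel₀ (hc i) h)
  have hCfcard : ∀ i, (Cf i).card = q - 1 := by
    intro i
    rw [hCf]
    rw [Finset.card_image_of_injective _ (hcinj i), Finset.card_erase_of_mem (Finset.mem_univ _),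
      Finset.card_univ, hcardK]
  have hmem2 : ∀ (i j : Fin m) (k l : ↥K), k ≠ 0 → c i * (k:F) = c j * (l:F) → i = j := by
    intro i j k l hk h
    by_contra hij
    apply hdistinct i j hij
    have hkF : (k:F) ≠ 0 := by simpa using hk
    have : c i / c j = (l:F) / (k:F) := by
      field_simp [hc j, hkF]
      linear_combination h
    rw [this]
    exact K.div_mem l.2 k.2
  have hgbij : ∀ i j : Fin m, i ≠ j →
      Function.Bijective (fun p : ↥K × ↥K => c i * ((p.1 : ↥K) : F) - c j * ((p.2 : ↥K) : F)) := by
    intro i j hij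
    rw [Fintype.bijective_iff_injective_and_card]
    constructor
    · rintro ⟨k, l⟩ ⟨k', l'⟩ h
      simp only at h
      by_cases hkk : k = k'
      · subst hkk
        have h2 : c j * ((l : ↥K) : F) = c j * ((l' : ↥K) : F) := by linear_combination -h
        exact Prod.ext rfl (Subtype.coe_injective (mul_left_cancel₀ (hc j) h2))
      · exfalso
        have hkk' : (k - k' : ↥K) ≠ 0 := sub_ne_zero.mpr hkk
        have heq : c i * ((k - k' : ↥K) : F) = c j * ((l - l' : ↥K) : F) := by
          push_cast
          linear_combination h
        exact hij (hmem2 i j _ _ hkk' heq)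
    · simp [Fintype.card_prod, hcardK, hF, sq]
  have harith : ∀ a : ℕ, a * a - a = a * (a - 1) := by
    intro a
    cases a with
    | zero => rfl
    | succ n => rw [Nat.succ_sub_one, Nat.mul_succ]; omega
  have hmain : ∀ x y : F, x ≠ y →
      (Finset.univ.filter fun z : F => x - z ∈ S ∧ y - z ∈ S).card =
        if x - y ∈ S then (m-1)*(m-2)+(q-2) else m*(m-1) := by
    intro x y hxy
    have hd0 : x - y ≠ 0 := sub_ne_zero.mpr hxy
    set d := x - y with hdd
    set Zf : Fin m × Fin m → Finset F :=
      fun p => Finset.univ.filter (fun z : F => x - z ∈ Cf p.1 ∧ y - z ∈ Cf p.2) with hZf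
    have hZmem : ∀ (p : Fin m × Fin m) (z : F), z ∈ Zf p ↔ x - z ∈ Cf p.1 ∧ y - z ∈ Cf p.2 := by
      intro p z
      simp [hZf]
    have hcover : (Finset.univ.filter fun z : F => x - z ∈ S ∧ y - z ∈ S) =
        (Finset.univ : Finset (Fin m × Fin m)).biUnion Zf := by
      ext z
      simp only [Finset.mem_filter, Finset.mem_univ, true_and, Finset.mem_biUnion, hSC, hZmem]
      constructor
      · rintro ⟨⟨i, hi⟩, ⟨j, hj⟩⟩
        exact ⟨(i, j), hi, hj⟩
      · rintro ⟨p, hp1, hp2⟩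
        exact ⟨⟨p.1, hp1⟩, ⟨p.2, hp2⟩⟩
    have hZdisj : ∀ p ∈ (Finset.univ : Finset (Fin m × Fin m)), ∀ p' ∈ Finset.univ, p ≠ p' →
        Disjoint (Zf p) (Zf p') := by
      intro p _ p' _ hpp
      refine Finset.disjoint_left.mpr ?_
      intro z hz hz'
      rw [hZmem] at hz hz'
      obtain ⟨k, hk0, hk⟩ := (hmemCf _ _).1 hz.1
      obtain ⟨k2, hk20, hk2⟩ := (hmemCf _ _).1 hz'.1
      obtain ⟨l, hl0, hl⟩ := (hmemCf _ _).1 hz.2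
      obtain ⟨l2, hl20, hl2⟩ := (hmemCf _ _).1 hz'.2
      exact hpp (Prod.ext (hmem2 _ _ k k2 hk0 (hk.trans hk2.symm))
        (hmem2 _ _ l l2 hl0 (hl.trans hl2.symm)))
    have hdiag : ∀ i : Fin m, (Zf (i,i)).card = if d ∈ Cf i then q - 2 else 0 := by
      intro i
      by_cases hdi : d ∈ Cf i
      · rw [if_pos hdi]
        obtain ⟨a, ha0, ha⟩ := (hmemCf i d).1 hdi
        have hinj2 : Function.Injective (fun k : ↥K => x - c i * (k:F)) := by
          intro k l hkl
          simp only at hkl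
          apply hcinj i
          show c i * (k:F) = c i * (l:F)
          linear_combination -hkl
        have hZeq : Zf (i,i) = ((Finset.univ.erase (0:↥K)).erase a).image
            (fun k : ↥K => x - c i * (k:F)) := by
          ext z
          rw [hZmem]
          simp only [Finset.mem_image, Finset.mem_erase, Finset.mem_univ, and_true]
          constructor
          · rintro ⟨h1, h2⟩
            obtain ⟨k, hk0, hk⟩ := (hmemCf i _).1 h1
            obtain ⟨l, hl0, hl⟩ := (hmemCf i _).1 h2
            refine ⟨k, ⟨?_, hk0⟩, by rw [hk]; ring⟩
            rintro rfl
            apply hl0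
            have h0 : c i * ((l : ↥K) : F) = 0 := by linear_combination hl - hk + ha + hdd
            exact Subtype.coe_injective ((mul_eq_zero.mp h0).resolve_left (hc i))
          · rintro ⟨k, ⟨hka, hk0⟩, rfl⟩
            constructor
            · exact (hmemCf i _).2 ⟨k, hk0, by ring⟩
            · refine (hmemCf i _).2 ⟨k - a, sub_ne_zero.mpr hka, ?_⟩
              push_cast
              linear_combination -ha - hdd
        rw [hZeq, Finset.card_image_of_injective _ hinj2,
          Finset.card_erase_of_mem (Finset.mem_erase.mpr ⟨ha0, Finset.mem_univ _⟩),
          Finset.card_erase_of_mem (Finset.mem_univ _), Finset.card_univ, hcardK]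
        omega
      · rw [if_neg hdi, Finset.card_eq_zero, Finset.eq_empty_iff_forall_notMem]
        intro z hz
        rw [hZmem] at hz
        obtain ⟨k, hk0, hk⟩ := (hmemCf i _).1 hz.1
        obtain ⟨l, hl0, hl⟩ := (hmemCf i _).1 hz.2
        apply hdi
        refine (hmemCf i _).2 ⟨k - l, ?_, ?_⟩
        · intro h0
          apply hxy
          rw [sub_eq_zero] at h0
          subst h0
          linear_combination hl - hk
        · push_cast
          linear_combination hk - hl - hdd
    have hoff : ∀ i j : Fin m, i ≠ j →
        (Zf (i,j)).card = if d ∈ Cf i ∨ d ∈ Cf j then 0 else 1 := by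
      intro i j hij
      have hbij := hgbij i j hij
      by_cases hdij : d ∈ Cf i ∨ d ∈ Cf j
      · rw [if_pos hdij, Finset.card_eq_zero, Finset.eq_empty_iff_forall_notMem]
        intro z hz
        rw [hZmem] at hz
        obtain ⟨k, hk0, hk⟩ := (hmemCf i _).1 hz.1
        obtain ⟨l, hl0, hl⟩ := (hmemCf j _).1 hz.2
        have hgd : c i * ((k : ↥K) : F) - c j * ((l : ↥K) : F) = d := by
          linear_combination hk - hl - hdd
        rcases hdij with hdi | hdj
        · obtain ⟨a, ha0, ha⟩ := (hmemCf i _).1 hdi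
          have hkl : (⟨k, l⟩ : ↥K × ↥K) = ⟨a, 0⟩ := by
            apply hbij.1
            show c i * (k:F) - c j * (l:F) = c i * (a:F) - c j * (((0:↥K) : ↥K):F)
            push_cast
            linear_combination hgd - ha
          exact hl0 (by simpa using congrArg Prod.snd hkl)
        · obtain ⟨b, hb0, hb⟩ := (hmemCf j _).1 hdj
          have hkl : (⟨k, l⟩ : ↥K × ↥K) = ⟨0, -b⟩ := by
            apply hbij.1
            show c i * (k:F) - c j * (l:F) = c i * (((0:↥K) : ↥K):F) - c j * ((-b : ↥K):F)
            push_cast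
            linear_combination hgd - hb
          exact hk0 (by simpa using congrArg Prod.fst hkl)
      · rw [if_neg hdij]
        push_neg at hdij
        obtain ⟨p, hp⟩ := hbij.2 d
        simp only at hp
        have hp1 : p.1 ≠ 0 := by
          intro h0
          apply hdij.2
          have h0' : ((p.1 : ↥K) : F) = 0 := by rw [h0]; rfl
          have h2 : ((p.2 : ↥K) : F) ≠ 0 := by
            intro h2
            apply hd0
            rw [← hp, h0', h2]
            ring
          refine (hmemCf j _).2 ⟨-p.2, fun hh => h2 (by rw [neg_eq_zero.mp hh]; rfl), ?_⟩
          push_cast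
          linear_combination hp - c i * h0'
        have hp2 : p.2 ≠ 0 := by
          intro h0
          apply hdij.1
          have h0' : ((p.2 : ↥K) : F) = 0 := by rw [h0]; rfl
          refine (hmemCf i _).2 ⟨p.1, hp1, ?_⟩
          linear_combination hp + c j * h0'
        rw [Finset.card_eq_one]
        refine ⟨x - c i * ((p.1 : ↥K) : F), ?_⟩
        rw [Finset.eq_singleton_iff_unique_mem]
        constructor
        · rw [hZmem]
          constructor
          · exact (hmemCf i _).2 ⟨p.1, hp1, by ring⟩
          · refine (hmemCf j _).2 ⟨p.2, hp2, ?_⟩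
            linear_combination -hp - hdd
        · intro z hz
          rw [hZmem] at hz
          obtain ⟨k, hk0, hk⟩ := (hmemCf i _).1 hz.1
          obtain ⟨l, hl0, hl⟩ := (hmemCf j _).1 hz.2
          have hkl : (⟨k, l⟩ : ↥K × ↥K) = p := by
            apply hbij.1
            show c i * (k:F) - c j * (l:F) = c i * ((p.1 : ↥K):F) - c j * ((p.2 : ↥K):F)
            linear_combination hk - hl - hdd - hp
          have hcoe : ((k : ↥K) : F) = ((p.1 : ↥K) : F) := by rw [← hkl]
          linear_combination hk - c i * hcoe
    rw [hcover, Finset.card_biUnion hZdisj]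
    rw [← Finset.univ_product_univ, ← Finset.diag_union_offDiag,
      Finset.sum_union (Finset.disjoint_diag_offDiag _), Finset.sum_diag]
    by_cases hdS : d ∈ S
    · rw [if_pos hdS]
      obtain ⟨i0, hi0⟩ := (hSC d).1 hdS
      have hCiff : ∀ i : Fin m, d ∈ Cf i ↔ i = i0 := by
        intro i
        constructor
        · intro hi
          obtain ⟨k, hk0, hk⟩ := (hmemCf i d).1 hi
          obtain ⟨k0, hk00, hk0'⟩ := (hmemCf i0 d).1 hi0
          exact hmem2 i i0 k k0 hk0 (hk.trans hk0'.symm)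
        · rintro rfl; exact hi0
      have h1 : ∑ i : Fin m, (Zf (i,i)).card = q - 2 := by
        have : ∀ i ∈ (Finset.univ : Finset (Fin m)), (Zf (i,i)).card =
            if i = i0 then q - 2 else 0 := by
          intro i _
          rw [hdiag i]
          exact if_congr (hCiff i) rfl rfl
        rw [Finset.sum_congr rfl this]
        simp
      have h2 : ∑ p ∈ (Finset.univ : Finset (Fin m)).offDiag, (Zf p).card = (m-1) * (m-2) := by
        have hcongr : ∀ p ∈ (Finset.univ : Finset (Fin m)).offDiag,
            (Zf p).card = if p.1 = i0 ∨ p.2 = i0 then 0 else 1 := by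
          rintro ⟨a, b⟩ hp
          rw [Finset.mem_offDiag] at hp
          rw [hoff a b hp.2.2]
          exact if_congr (or_congr (hCiff a) (hCiff b)) rfl rfl
        rw [Finset.sum_congr rfl hcongr]
        rw [Finset.sum_ite, Finset.sum_const, Finset.sum_const, smul_eq_mul, smul_eq_mul,
          mul_zero, zero_add, mul_one]
        have hfe : (Finset.univ.offDiag.filter fun p : Fin m × Fin m => ¬(p.1 = i0 ∨ p.2 = i0))
            = (Finset.univ.erase i0).offDiag := by
          ext ⟨a, b⟩
          simp only [Finset.mem_filter, Finset.mem_offDiag, Finset.mem_erase, Finset.mem_univ,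
            true_and, and_true, not_or]
          tauto
        rw [hfe, Finset.offDiag_card, Finset.card_erase_of_mem (Finset.mem_univ _),
          Finset.card_univ, Fintype.card_fin, harith]
        congr 1
      rw [h1, h2]
      exact Nat.add_comm _ _
    · rw [if_neg hdS]
      have hCnot : ∀ i : Fin m, d ∉ Cf i := fun i hi => hdS ((hSC d).2 ⟨i, hi⟩)
      have h1 : ∑ i : Fin m, (Zf (i,i)).card = 0 := by
        rw [Finset.sum_congr rfl (fun i _ => by rw [hdiag i, if_neg (hCnot i)])]
        simp
      have h2 : ∑ p ∈ (Finset.univ : Finset (Fin m)).offDiag, (Zf p).card = m * (m-1) := by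
        have hcongr : ∀ p ∈ (Finset.univ : Finset (Fin m)).offDiag, (Zf p).card = 1 := by
          rintro ⟨a, b⟩ hp
          rw [Finset.mem_offDiag] at hp
          rw [hoff a b hp.2.2, if_neg (by push_neg; exact ⟨hCnot _, hCnot _⟩)]
        rw [Finset.sum_congr rfl hcongr, Finset.sum_const, smul_eq_mul, mul_one,
          Finset.offDiag_card, Finset.card_univ, Fintype.card_fin, harith]
      rw [h1, h2, zero_add]
  have hCdisj : ∀ i ∈ (Finset.univ : Finset (Fin m)), ∀ j ∈ Finset.univ, i ≠ j →
      Disjoint (Cf i) (Cf j) := by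
    intro i _ j _ hij
    refine Finset.disjoint_left.mpr fun s hsi hsj => hij ?_
    obtain ⟨k, hk0, hk⟩ := (hmemCf i _).1 hsi
    obtain ⟨l, hl0, hl⟩ := (hmemCf j _).1 hsj
    exact hmem2 i j k l hk0 (hk.trans hl.symm)
  have hcn : ∀ v w : F, Fintype.card (X.commonNeighbors v w) =
      (Finset.univ.filter fun z : F => v - z ∈ S ∧ w - z ∈ S).card := by
    intro v w
    rw [← Set.toFinset_card]
    congr 1
    ext z
    simp only [Set.mem_toFinset, SimpleGraph.mem_commonNeighbors, Finset.mem_filter,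
      Finset.mem_univ, true_and, hX]
    constructor
    · rintro ⟨⟨-, h1⟩, -, h2⟩
      exact ⟨h1, h2⟩
    · rintro ⟨h1, h2⟩
      exact ⟨⟨fun h => hS0 (by rw [h, sub_self] at h1; exact h1), h1⟩,
        ⟨fun h => hS0 (by rw [h, sub_self] at h2; exact h2), h2⟩⟩
  refine ⟨hF, ?_, ?_, ?_⟩
  · intro v
    have hset : X.neighborFinset v = (Finset.univ.biUnion Cf).image (fun s => v - s) := by
      ext z
      simp only [SimpleGraph.mem_neighborFinset, hX, Finset.mem_image, Finset.mem_biUnion,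
        Finset.mem_univ, true_and]
      constructor
      · rintro ⟨hvz, hzS⟩
        obtain ⟨i, hi⟩ := (hSC _).1 hzS
        exact ⟨v - z, ⟨i, hi⟩, by ring⟩
      · rintro ⟨s, ⟨i, hi⟩, rfl⟩
        have hs0 : s ≠ 0 := fun h => hCf0 i (h ▸ hi)
        refine ⟨fun h => hs0 (by linear_combination h), ?_⟩
        rw [sub_sub_cancel]
        exact (hSC _).2 ⟨i, hi⟩
    rw [show X.degree v = (X.neighborFinset v).card from rfl, hset,
      Finset.card_image_of_injective _ sub_right_injective, Finset.card_biUnion hCdisj,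
      Finset.sum_congr rfl (fun i _ => hCfcard i), Finset.sum_const, smul_eq_mul,
      Finset.card_univ, Fintype.card_fin]
  · intro v w hadj
    obtain ⟨hvw, hdS⟩ := (hX v w).1 hadj
    have hm2 := hmain v w hvw
    rw [if_pos hdS] at hm2
    rw [hcn, hm2]
    generalize (m-1)*(m-2) = t
    omega
  · intro v w hvw hnadj
    have hdS : v - w ∉ S := fun h => hnadj ((hX v w).2 ⟨hvw, h⟩)
    have hm2 := hmain v w hvw
    rw [if_neg hdS] at hm2
    rw [hcn, hm2]
end

section
/- Let q be an odd prime power and let X be a Peisert-type graph of type (m,q). Then the characteristic polynomial of the adjacency matrix of X over ℚ equals (T − m(q−1)) · (T − (q−m))^(m(q−1)) · (T + m)^((q−1)(q+1−m)); equivalently, the eigenvalues of X are m(q−1) with multiplicity 1, q−m with multiplicity m(q−1), and −m with multiplicity (q−1)(q+1−m) = q² − 1 − m(q−1). -/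
open Polynomial Finset
open scoped Classical Matrix

set_option maxHeartbeats 2000000
set_option linter.unusedSectionVars false
set_option linter.unnecessarySimpa false
set_option linter.unusedVariables false

section Aux
variable {F : Type} [Field F] [Fintype F] [DecidableEq F]

set_option linter.unusedSectionVars false

lemma memS_iff {K : Subfield F} {m : ℕ} {c : Fin m → F} (hc : ∀ i, c i ≠ 0)
    {S : Set F} (hS : S = ⋃ i : Fin m, {x : F | ∃ k ∈ (K : Set F), k ≠ 0 ∧ x = c i * k})
    (x : F) : x ∈ S ↔ x ≠ 0 ∧ ∃ i, x / c i ∈ K := by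
  subst hS
  simp only [Set.mem_iUnion, Set.mem_setOf_eq, SetLike.mem_coe]
  constructor
  · rintro ⟨i, k, hkK, hk0, rfl⟩
    exact ⟨mul_ne_zero (hc i) hk0, i, by rwa [mul_comm, mul_div_assoc, div_self (hc i), mul_one]⟩
  · rintro ⟨hx0, i, hk⟩
    exact ⟨i, x / c i, hk, div_ne_zero hx0 (hc i), by rw [mul_comm, div_mul_cancel₀ x (hc i)]⟩

lemma line_card {K : Subfield F} {q : ℕ} (hK : Nat.card K = q) {x : F} (hx : x ≠ 0) :
    (univ.filter fun y : F => y / x ∈ K).card = q := by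
  haveI : Fintype K := Fintype.ofFinite K
  have himg : (univ.filter fun y : F => y / x ∈ K) = Finset.image (fun k : K => (k : F) * x) univ := by
    ext y
    simp only [mem_filter, mem_univ, true_and, Finset.mem_image]
    constructor
    · intro h
      exact ⟨⟨y / x, h⟩, div_mul_cancel₀ y hx⟩
    · rintro ⟨k, -, rfl⟩
      simpa [mul_div_assoc, div_self hx] using k.2
  rw [himg, Finset.card_image_of_injective _ (fun a b hab => Subtype.ext (mul_right_cancel₀ hx hab)),
    Finset.card_univ, ← Nat.card_eq_fintype_card, hK]

lemma line_inter {K : Subfield F} {m : ℕ} {c : Fin m → F} (hc : ∀ i, c i ≠ 0)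
    (hdistinct : ∀ i j : Fin m, i ≠ j → c i / c j ∉ K)
    {i j : Fin m} (hij : i ≠ j) {x : F} (hxi : x / c i ∈ K) (hxj : x / c j ∈ K) : x = 0 := by
  by_contra hx0
  apply hdistinct i j hij
  have hx0' : x ≠ 0 := hx0
  have : c i / c j = (x / c j) / (x / c i) := by
    field_simp
  rw [this]
  exact K.div_mem hxj hxi

lemma pair_bij {K : Subfield F} {q m : ℕ} (hK : Nat.card K = q)
    (hF : Fintype.card F = q ^ 2) {c : Fin m → F} (hc : ∀ i, c i ≠ 0)
    (hdistinct : ∀ i j : Fin m, i ≠ j → c i / c j ∉ K)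
    {i j : Fin m} (hij : i ≠ j) :
    Function.Bijective (fun p : K × K => (p.1 : F) * c i + (p.2 : F) * c j) := by
  haveI : Fintype K := Fintype.ofFinite K
  rw [Fintype.bijective_iff_injective_and_card]
  constructor
  · rintro ⟨a, b⟩ ⟨a', b'⟩ hab
    simp only at hab
    have key : ((a : F) - a') * c i = ((b' : F) - b) * c j := by linear_combination hab
    have h1 : (((a : F) - a') * c i) / c i ∈ K := by
      rw [mul_div_assoc, div_self (hc i), mul_one]
      exact K.sub_mem a.2 a'.2
    have h2 : (((a : F) - a') * c i) / c j ∈ K := by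
      rw [key, mul_div_assoc, div_self (hc j), mul_one]
      exact K.sub_mem b'.2 b.2
    have hz := line_inter hc hdistinct hij h1 h2
    have ha : (a : F) = a' := by
      rcases mul_eq_zero.mp hz with h | h
      · linear_combination h
      · exact absurd h (hc i)
    have hb : (b : F) = b' := by
      rw [hz] at key
      rcases mul_eq_zero.mp key.symm with h | h
      · linear_combination -h
      · exact absurd h (hc j)
    exact Prod.ext (Subtype.ext ha) (Subtype.ext hb)
  · rw [Fintype.card_prod, hF, ← Nat.card_eq_fintype_card, hK, sq]

end Aux


section Aux2
variable {F : Type} [Field F] [Fintype F] [DecidableEq F]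
set_option linter.unusedSectionVars false
set_option maxHeartbeats 1000000

-- copies of p1 statements as axioms for speed of iteration (will merge later)

lemma S_card {K : Subfield F} {q m : ℕ} (hK : Nat.card K = q)
    {c : Fin m → F} (hc : ∀ i, c i ≠ 0)
    (hdistinct : ∀ i j : Fin m, i ≠ j → c i / c j ∉ K)
    {S : Set F} (hS : S = ⋃ i : Fin m, {x : F | ∃ k ∈ (K : Set F), k ≠ 0 ∧ x = c i * k}) :
    (univ.filter fun s : F => s ∈ S).card = m * (q - 1) := by
  have hsplit : (univ.filter fun s : F => s ∈ S)
      = univ.biUnion (fun i : Fin m => univ.filter fun s : F => s ≠ 0 ∧ s / c i ∈ K) := by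
    ext s
    simp only [mem_filter, mem_univ, true_and, mem_biUnion, memS_iff hc hS]
    tauto
  have hdisj : ∀ i ∈ (univ : Finset (Fin m)), ∀ j ∈ (univ : Finset (Fin m)), i ≠ j →
      Disjoint (univ.filter fun s : F => s ≠ 0 ∧ s / c i ∈ K)
        (univ.filter fun s : F => s ≠ 0 ∧ s / c j ∈ K) := by
    intro i _ j _ hij
    rw [Finset.disjoint_left]
    intro s hsi hsj
    simp only [mem_filter] at hsi hsj
    exact hsi.2.1 (line_inter hc hdistinct hij hsi.2.2 hsj.2.2)
  rw [hsplit, Finset.card_biUnion hdisj]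
  have hterm : ∀ i : Fin m, (univ.filter fun s : F => s ≠ 0 ∧ s / c i ∈ K).card = q - 1 := by
    intro i
    have : (univ.filter fun s : F => s ≠ 0 ∧ s / c i ∈ K)
        = (univ.filter fun s : F => s / c i ∈ K).erase 0 := by
      ext s
      simp only [mem_filter, mem_univ, true_and, Finset.mem_erase]
    rw [this, Finset.card_erase_of_mem (by simp [K.zero_mem]), line_card hK (hc i)]
  simp only [hterm, Finset.sum_const, Finset.card_univ, Fintype.card_fin, smul_eq_mul]

lemma count_pairs {K : Subfield F} {q m : ℕ} (hK : Nat.card K = q)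
    (hF : Fintype.card F = q ^ 2)
    {c : Fin m → F} (hc : ∀ i, c i ≠ 0)
    (hdistinct : ∀ i j : Fin m, i ≠ j → c i / c j ∉ K)
    {S : Set F} (hS : S = ⋃ i : Fin m, {x : F | ∃ k ∈ (K : Set F), k ≠ 0 ∧ x = c i * k})
    {d : F} (hd : d ≠ 0) :
    (univ.filter fun s : F => s ∈ S ∧ s - d ∈ S).card
      = if d ∈ S then (q - 2) + ((m-1)*(m-1) - (m-1)) else m*m - m := by
  set T : Finset (Fin m) := univ.filter (fun i : Fin m => d / c i ∈ K) with hT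
  have hTmem : ∀ i, i ∈ T ↔ d / c i ∈ K := by intro i; simp [hT]
  have hTsub : ∀ i ∈ T, ∀ j ∈ T, i = j := by
    intro i hi j hj
    by_contra hij
    exact hd (line_inter hc hdistinct hij ((hTmem i).1 hi) ((hTmem j).1 hj))
  have hdS : d ∈ S ↔ T.Nonempty := by
    rw [memS_iff hc hS]
    constructor
    · rintro ⟨-, i, hi⟩; exact ⟨i, (hTmem i).2 hi⟩
    · rintro ⟨i, hi⟩; exact ⟨hd, i, (hTmem i).1 hi⟩
  set Q : Fin m × Fin m → Finset F := fun p =>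
    univ.filter fun s => (s ≠ 0 ∧ s / c p.1 ∈ K) ∧ (s - d ≠ 0 ∧ (s - d) / c p.2 ∈ K) with hQ
  have hsplit : (univ.filter fun s : F => s ∈ S ∧ s - d ∈ S) = univ.biUnion Q := by
    ext s
    simp only [mem_filter, mem_univ, true_and, mem_biUnion, memS_iff hc hS, hQ, Prod.exists]
    tauto
  have hdisj : ∀ p ∈ (univ : Finset (Fin m × Fin m)), ∀ p' ∈ (univ : Finset (Fin m × Fin m)),
      p ≠ p' → Disjoint (Q p) (Q p') := by
    rintro ⟨i, j⟩ - ⟨i', j'⟩ - hne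
    rw [Finset.disjoint_left]
    intro s hs hs'
    simp only [hQ, mem_filter, mem_univ, true_and] at hs hs'
    have h1 : i = i' := by
      by_contra hii
      exact hs.1.1 (line_inter hc hdistinct hii hs.1.2 hs'.1.2)
    have h2 : j = j' := by
      by_contra hjj
      exact hs.2.1 (line_inter hc hdistinct hjj hs.2.2 hs'.2.2)
    exact hne (by rw [h1, h2])
  rw [hsplit, Finset.card_biUnion hdisj]
  -- split into diagonal and off-diagonal parts
  have huniv : (univ : Finset (Fin m × Fin m)) = (univ : Finset (Fin m)).diag ∪ (univ : Finset (Fin m)).offDiag := by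
    rw [Finset.diag_union_offDiag, Finset.univ_product_univ]
  rw [huniv, Finset.sum_union (Finset.disjoint_diag_offDiag _)]
  -- diagonal term values
  have hQdiag : ∀ i : Fin m, (Q (i, i)).card = if i ∈ T then q - 2 else 0 := by
    intro i
    by_cases hiT : i ∈ T
    · rw [if_pos hiT]
      have hdi : d / c i ∈ K := (hTmem i).1 hiT
      have : Q (i, i) = (univ.filter fun s : F => s / c i ∈ K) \ {0, d} := by
        ext s
        simp only [hQ, mem_filter, mem_univ, true_and, Finset.mem_sdiff, Finset.mem_insert,
          Finset.mem_singleton, sub_ne_zero]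
        constructor
        · rintro ⟨⟨hs0, hsK⟩, hsd, -⟩
          exact ⟨hsK, by tauto⟩
        · rintro ⟨hsK, hne⟩
          push_neg at hne
          refine ⟨⟨hne.1, hsK⟩, hne.2, ?_⟩
          rw [sub_div]
          exact K.sub_mem hsK hdi
      rw [this, Finset.card_sdiff_of_subset (by
        intro x hx
        simp only [Finset.mem_insert, Finset.mem_singleton] at hx
        rcases hx with rfl | rfl
        · simp [K.zero_mem]
        · simp [hdi])]
      rw [line_card hK (hc i)]
      have : ({0, d} : Finset F).card = 2 := by
        rw [Finset.card_insert_of_notMem (by simpa using (Ne.symm hd))]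
        simp
      rw [this]
    · rw [if_neg hiT]
      rw [Finset.card_eq_zero]
      apply Finset.eq_empty_of_forall_notMem
      intro s hs
      simp only [hQ, mem_filter, mem_univ, true_and] at hs
      apply hiT
      rw [hTmem]
      have : d / c i = s / c i - (s - d) / c i := by
        rw [← sub_div]; ring_nf
      rw [this]
      exact K.sub_mem hs.1.2 hs.2.2
  -- off-diagonal term values
  have hQoff : ∀ i j : Fin m, i ≠ j → (Q (i, j)).card = if i ∈ T ∨ j ∈ T then 0 else 1 := by
    intro i j hij
    obtain ⟨⟨a, b⟩, hab⟩ := (pair_bij hK hF hc hdistinct hij).surjective d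
    simp only at hab
    have huniq : ∀ s ∈ Q (i, j), s = (a : F) * c i ∧ d - s = (b : F) * c j := by
      intro s hs
      simp only [hQ, mem_filter, mem_univ, true_and] at hs
      have hlK : (d - s) / c j ∈ K := by
        have : (d - s) / c j = -((s - d) / c j) := by rw [← neg_div]; ring_nf
        rw [this]; exact K.neg_mem hs.2.2
      set k : K := ⟨s / c i, hs.1.2⟩
      set l : K := ⟨(d - s) / c j, hlK⟩
      have hf : (k : F) * c i + (l : F) * c j = d := by
        simp only [k, l]
        rw [div_mul_cancel₀ _ (hc i), div_mul_cancel₀ _ (hc j)]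
        ring
      have := (pair_bij hK hF hc hdistinct hij).injective (a₁ := (k, l)) (a₂ := (a, b))
        (by simp only; rw [hf, hab])
      have hk : (k : F) = a := congrArg (fun p : K × K => (p.1 : F)) this
      have hl : (l : F) = b := congrArg (fun p : K × K => (p.2 : F)) this
      constructor
      · rw [← hk]; simp only [k]; rw [div_mul_cancel₀ _ (hc i)]
      · rw [← hl]; simp only [l]; rw [div_mul_cancel₀ _ (hc j)]
    by_cases hiT : i ∈ T
    · rw [if_pos (Or.inl hiT)]
      -- here b = 0
      have hb : (b : F) = 0 := by
        have hd' : ((⟨d / c i, (hTmem i).1 hiT⟩ : K) : F) * c i + ((0 : K) : F) * c j = d := by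
          simp [div_mul_cancel₀ _ (hc i)]
        have := (pair_bij hK hF hc hdistinct hij).injective (a₁ := (a, b))
          (a₂ := (⟨d / c i, (hTmem i).1 hiT⟩, 0)) (by simp only; rw [hab, hd'])
        have := congrArg (fun p : K × K => (p.2 : F)) this
        simpa using this
      rw [Finset.card_eq_zero]
      apply Finset.eq_empty_of_forall_notMem
      intro s hs
      have h2 := (huniq s hs).2
      rw [hb, zero_mul, sub_eq_zero] at h2
      simp only [hQ, mem_filter, mem_univ, true_and] at hs
      exact hs.2.1 (by rw [← h2]; ring)
    · by_cases hjT : j ∈ T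
      · rw [if_pos (Or.inr hjT)]
        have ha : (a : F) = 0 := by
          have hd' : ((0 : K) : F) * c i + ((⟨d / c j, (hTmem j).1 hjT⟩ : K) : F) * c j = d := by
            simp [div_mul_cancel₀ _ (hc j)]
          have := (pair_bij hK hF hc hdistinct hij).injective (a₁ := (a, b))
            (a₂ := (0, ⟨d / c j, (hTmem j).1 hjT⟩)) (by simp only; rw [hab, hd'])
          have := congrArg (fun p : K × K => (p.1 : F)) this
          simpa using this
        rw [Finset.card_eq_zero]
        apply Finset.eq_empty_of_forall_notMem
        intro s hs
        have h1 := (huniq s hs).1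
        rw [ha, zero_mul] at h1
        simp only [hQ, mem_filter, mem_univ, true_and] at hs
        exact hs.1.1 h1
      · rw [if_neg (by tauto)]
        have ha0 : (a : F) ≠ 0 := by
          intro h
          apply hjT
          rw [hTmem]
          have : d = (b : F) * c j := by rw [← hab, h]; ring
          rw [this, mul_div_assoc, div_self (hc j), mul_one]
          exact b.2
        have hb0 : (b : F) ≠ 0 := by
          intro h
          apply hiT
          rw [hTmem]
          have : d = (a : F) * c i := by rw [← hab, h]; ring
          rw [this, mul_div_assoc, div_self (hc i), mul_one]
          exact a.2
        have : Q (i, j) = {(a : F) * c i} := by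
          ext s
          rw [Finset.mem_singleton]
          constructor
          · intro hs; exact (huniq s hs).1
          · rintro rfl
            simp only [hQ, mem_filter, mem_univ, true_and]
            refine ⟨⟨mul_ne_zero ha0 (hc i), ?_⟩, ?_, ?_⟩
            · rw [mul_div_assoc, div_self (hc i), mul_one]; exact a.2
            · intro h
              rw [sub_eq_zero] at h
              apply hb0
              have : (b:F) * c j = 0 := by linear_combination hab - h
              rcases mul_eq_zero.mp this with h' | h'
              · exact h'
              · exact absurd h' (hc j)
            · have : (a : F) * c i - d = -((b : F)) * c j := by rw [← hab]; ring
              rw [this, mul_div_assoc, div_self (hc j), mul_one]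
              exact K.neg_mem b.2
        rw [this, Finset.card_singleton]
  -- sum the diagonal
  have hdiagsum : ∑ p ∈ (univ : Finset (Fin m)).diag, (Q p).card = T.card * (q - 2) := by
    rw [Finset.sum_diag]
    calc ∑ i : Fin m, (Q (i, i)).card = ∑ i : Fin m, (if i ∈ T then q - 2 else 0) := by
          exact Finset.sum_congr rfl fun i _ => hQdiag i
      _ = ∑ i ∈ T, (q - 2) := by rw [Finset.sum_ite_mem, Finset.univ_inter]
      _ = T.card * (q - 2) := by rw [Finset.sum_const, smul_eq_mul]
  -- sum the off-diagonal
  have hoffsum : ∑ p ∈ (univ : Finset (Fin m)).offDiag, (Q p).card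
      = (m - T.card) * (m - T.card) - (m - T.card) := by
    have h1 : ∑ p ∈ (univ : Finset (Fin m)).offDiag, (Q p).card
        = ∑ p ∈ (univ : Finset (Fin m)).offDiag, (if p.1 ∈ T ∨ p.2 ∈ T then 0 else 1) := by
      apply Finset.sum_congr rfl
      intro p hp
      rw [Finset.mem_offDiag] at hp
      exact hQoff p.1 p.2 hp.2.2
    rw [h1, Finset.sum_ite, Finset.sum_const, Finset.sum_const, smul_eq_mul, mul_zero, zero_add,
      smul_eq_mul, mul_one]
    have h2 : ((univ : Finset (Fin m)).offDiag.filter fun p => ¬(p.1 ∈ T ∨ p.2 ∈ T))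
        = ((univ : Finset (Fin m)) \ T).offDiag := by
      ext p
      simp only [Finset.mem_filter, Finset.mem_offDiag, Finset.mem_sdiff, Finset.mem_univ,
        true_and, not_or]
      tauto
    rw [h2, Finset.offDiag_card, Finset.card_sdiff_of_subset (Finset.subset_univ T), Finset.card_univ,
      Fintype.card_fin]
  rw [hdiagsum, hoffsum]
  by_cases hdSS : d ∈ S
  · rw [if_pos hdSS]
    have hT1 : T.card = 1 := by
      obtain ⟨i0, hi0⟩ := hdS.1 hdSS
      rw [Finset.card_eq_one]
      exact ⟨i0, Finset.eq_singleton_iff_unique_mem.mpr ⟨hi0, fun j hj => hTsub j hj i0 hi0⟩⟩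
    rw [hT1, one_mul]
  · rw [if_neg hdSS]
    have hT0 : T.card = 0 := by
      rw [Finset.card_eq_zero]
      by_contra h
      exact hdSS (hdS.2 (Finset.nonempty_of_ne_empty h))
    rw [hT0, Nat.sub_zero, zero_mul, zero_add]

end Aux2


section Aux3
variable {F : Type} [Field F] [Fintype F] [DecidableEq F]
set_option linter.unusedSectionVars false
set_option maxHeartbeats 1000000


lemma peisert_srg {K : Subfield F} {q m : ℕ} (hK : Nat.card K = q)
    (hF : Fintype.card F = q ^ 2)
    {c : Fin m → F} (hc : ∀ i, c i ≠ 0)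
    (hdistinct : ∀ i j : Fin m, i ≠ j → c i / c j ∉ K)
    {S : Set F} (hS : S = ⋃ i : Fin m, {x : F | ∃ k ∈ (K : Set F), k ≠ 0 ∧ x = c i * k})
    (X : SimpleGraph F) [DecidableRel X.Adj]
    (hX : ∀ x y : F, X.Adj x y ↔ x ≠ y ∧ x - y ∈ S) :
    X.IsSRGWith (q^2) (m*(q-1)) (q - 2 + ((m-1)*(m-1) - (m-1))) (m*m - m) := by
  have hadj : ∀ x y : F, X.Adj x y ↔ x - y ∈ S := by
    intro x y
    rw [hX]
    constructor
    · rintro ⟨-, h⟩; exact h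
    · intro h
      refine ⟨?_, h⟩
      have := ((memS_iff hc hS (x - y)).1 h).1
      intro he; exact this (by rw [he, sub_self])
  have hcommon : ∀ v w : F, v ≠ w → Fintype.card (X.commonNeighbors v w)
      = if X.Adj v w then (q - 2) + ((m-1)*(m-1) - (m-1)) else m*m - m := by
    intro v w hvw
    have htof : (X.commonNeighbors v w).toFinset
        = univ.filter fun u => X.Adj v u ∧ X.Adj w u := by
      ext u
      simp [SimpleGraph.mem_commonNeighbors]
    have hbij : (univ.filter fun u => X.Adj v u ∧ X.Adj w u).card
        = (univ.filter fun s : F => s ∈ S ∧ s - (v - w) ∈ S).card := by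
      apply Finset.card_bij (fun u _ => v - u)
      · intro u hu
        simp only [mem_filter, mem_univ, true_and] at hu ⊢
        constructor
        · exact (hadj v u).1 hu.1
        · have : v - u - (v - w) = w - u := by ring
          rw [this]
          exact (hadj w u).1 hu.2
      · intro u hu u' hu' h
        have : u = u' := by linear_combination -h
        exact this
      · intro s hs
        simp only [mem_filter, mem_univ, true_and] at hs
        refine ⟨v - s, ?_, by ring⟩
        simp only [mem_filter, mem_univ, true_and]
        constructor
        · rw [hadj]
          have : v - (v - s) = s := by ring
          rw [this]; exact hs.1
        · rw [hadj]
          have : w - (v - s) = s - (v - w) := by ring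
          rw [this]
          exact hs.2
    have hcount := count_pairs hK hF hc hdistinct hS (d := v - w) (sub_ne_zero.mpr hvw)
    rw [← Set.toFinset_card, htof, hbij, hcount]
    by_cases h : X.Adj v w
    · rw [if_pos h, if_pos ((hadj v w).1 h)]
    · rw [if_neg h, if_neg (fun hs => h ((hadj v w).2 hs))]
  constructor
  · exact hF
  · intro v
    unfold SimpleGraph.IsRegularOfDegree at *
    rw [← S_card hK hc hdistinct hS]
    rw [SimpleGraph.degree, SimpleGraph.neighborFinset_eq_filter]
    apply Finset.card_bij (fun u _ => v - u)
    · intro u hu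
      simp only [mem_filter, mem_univ, true_and] at hu ⊢
      exact (hadj v u).1 hu
    · intro u hu u' hu' h
      have : u = u' := by linear_combination -h
      exact this
    · intro s hs
      simp only [mem_filter, mem_univ, true_and] at hs
      refine ⟨v - s, ?_, by ring⟩
      simp only [mem_filter, mem_univ, true_and]
      rw [hadj]
      have : v - (v - s) = s := by ring
      rw [this]; exact hs
  · intro v w h
    rw [hcommon v w (X.ne_of_adj h), if_pos h]
  · intro v w hvw h
    rw [hcommon v w hvw, if_neg h]

end Aux3

set_option maxHeartbeats 1000000

lemma hermitian_charpoly_prod {n : Type} [Fintype n] [DecidableEq n] {A : Matrix n n ℝ}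
    (hA : A.IsHermitian) :
    A.charpoly = ∏ i, (X - C (hA.eigenvalues i)) := by
  classical
  set U : Matrix n n ℝ := (hA.eigenvectorUnitary : Matrix n n ℝ) with hUdef
  have hU1 : U * star U = 1 := (Matrix.mem_unitaryGroup_iff).mp hA.eigenvectorUnitary.2
  have hU2 : star U * U = 1 := (Matrix.mem_unitaryGroup_iff').mp hA.eigenvectorUnitary.2
  have hspec : A = U * Matrix.diagonal hA.eigenvalues * star U := by
    have h := hA.spectral_theorem
    rwa [show (RCLike.ofReal ∘ hA.eigenvalues : n → ℝ) = hA.eigenvalues from funext fun i => rfl]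
      at h
  have hmapmul : ∀ M N : Matrix n n ℝ, ((M * N).map (C : ℝ → ℝ[X]))
      = M.map (C : ℝ → ℝ[X]) * N.map (C : ℝ → ℝ[X]) := by
    intro M N
    exact Matrix.map_mul
  have hcm : Matrix.charmatrix A
      = U.map (C : ℝ → ℝ[X]) * Matrix.charmatrix (Matrix.diagonal hA.eigenvalues)
        * (star U).map (C : ℝ → ℝ[X]) := by
    rw [Matrix.charmatrix, Matrix.charmatrix]
    simp only [RingHom.mapMatrix_apply]
    rw [mul_sub, sub_mul]
    congr 1
    · -- U.map C * scalar X * (star U).map C = scalar X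
      have hc1 : U.map (C : ℝ → ℝ[X]) * Matrix.scalar n (X : ℝ[X])
          = Matrix.scalar n (X : ℝ[X]) * U.map (C : ℝ → ℝ[X]) :=
        (Matrix.scalar_commute (X : ℝ[X]) (fun r' => Commute.all _ _) _).symm
      rw [hc1, mul_assoc, ← hmapmul, hU1]
      simp
    · conv_lhs => rw [hspec]
      rw [hmapmul, hmapmul]
  have hdet : A.charpoly = (Matrix.diagonal hA.eigenvalues).charpoly := by
    rw [Matrix.charpoly, Matrix.charpoly, hcm, Matrix.det_mul, Matrix.det_mul]
    have : (U.map (C : ℝ → ℝ[X])).det * ((star U).map (C : ℝ → ℝ[X])).det = 1 := by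
      rw [← Matrix.det_mul, ← hmapmul, hU1]
      simp
    calc (U.map (C : ℝ → ℝ[X])).det * (Matrix.charmatrix (Matrix.diagonal hA.eigenvalues)).det
          * ((star U).map (C : ℝ → ℝ[X])).det
        = (U.map (C : ℝ → ℝ[X])).det * ((star U).map (C : ℝ → ℝ[X])).det
          * (Matrix.charmatrix (Matrix.diagonal hA.eigenvalues)).det := by ring
      _ = (Matrix.charmatrix (Matrix.diagonal hA.eigenvalues)).det := by rw [this, one_mul]
  rw [hdet]
  have : Matrix.charmatrix (Matrix.diagonal hA.eigenvalues)
      = Matrix.diagonal (fun i => (X : ℝ[X]) - C (hA.eigenvalues i)) := by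
    ext i j
    by_cases h : i = j
    · subst h; simp
    · rw [Matrix.charmatrix_apply_ne _ _ _ h, Matrix.diagonal_apply_ne _ h,
        Matrix.diagonal_apply_ne _ h]
      simp
  rw [Matrix.charpoly, this, Matrix.det_diagonal]

lemma hermitian_conj_diag {n : Type} [Fintype n] [DecidableEq n] {A : Matrix n n ℝ}
    (hA : A.IsHermitian) :
    A = (hA.eigenvectorUnitary : Matrix n n ℝ) * Matrix.diagonal hA.eigenvalues
      * star (hA.eigenvectorUnitary : Matrix n n ℝ) := by
  have h := hA.spectral_theorem
  rwa [show (RCLike.ofReal ∘ hA.eigenvalues : n → ℝ) = hA.eigenvalues from funext fun i => rfl]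
    at h

lemma hermitian_trace_eq_sum {n : Type} [Fintype n] [DecidableEq n] {A : Matrix n n ℝ}
    (hA : A.IsHermitian) : A.trace = ∑ i, hA.eigenvalues i := by
  set U : Matrix n n ℝ := (hA.eigenvectorUnitary : Matrix n n ℝ) with hUdef
  have hU2 : star U * U = 1 := (Matrix.mem_unitaryGroup_iff').mp hA.eigenvectorUnitary.2
  calc A.trace = ((U * Matrix.diagonal hA.eigenvalues) * star U).trace := by
        conv_lhs => rw [hermitian_conj_diag hA]
    _ = (star U * (U * Matrix.diagonal hA.eigenvalues)).trace := Matrix.trace_mul_comm _ _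
    _ = ∑ i, hA.eigenvalues i := by
        rw [← mul_assoc, hU2, one_mul, Matrix.trace_diagonal]

lemma hermitian_trace_sq_eq_sum {n : Type} [Fintype n] [DecidableEq n] {A : Matrix n n ℝ}
    (hA : A.IsHermitian) : (A * A).trace = ∑ i, (hA.eigenvalues i)^2 := by
  set U : Matrix n n ℝ := (hA.eigenvectorUnitary : Matrix n n ℝ) with hUdef
  have hU2 : star U * U = 1 := (Matrix.mem_unitaryGroup_iff').mp hA.eigenvectorUnitary.2
  set D : Matrix n n ℝ := Matrix.diagonal hA.eigenvalues with hDdef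
  have hAA : A * A = U * (D * (D * star U)) := by
    conv_lhs => rw [hermitian_conj_diag hA]
    simp only [← hUdef, ← hDdef]
    simp only [mul_assoc]
    rw [show star U * (U * (D * star U)) = (star U * U) * (D * star U) from (mul_assoc _ _ _).symm,
      hU2, one_mul]
  rw [hAA, Matrix.trace_mul_comm, mul_assoc, mul_assoc D (star U) U, hU2, mul_one, hDdef,
    Matrix.diagonal_mul_diagonal, Matrix.trace_diagonal]
  exact Finset.sum_congr rfl fun i _ => (pow_two (hA.eigenvalues i)).symm

set_option maxHeartbeats 2000000




/-- The characteristic polynomial (equivalently, the spectrum) of a Peisert-type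
graph of type (m,q): eigenvalues m(q−1), q−m, −m with multiplicities
1, m(q−1), (q−1)(q+1−m). -/
theorem stmt_3
    (q m : ℕ) (hqodd : Odd q) (hqpp : IsPrimePow q) (hm : m ≤ q)
    (F : Type) [Field F] [Fintype F] [DecidableEq F]
    (hF : Fintype.card F = q ^ 2)
    (K : Subfield F) (hK : Nat.card K = q)
    (c : Fin m → F) (hc : ∀ i, c i ≠ 0)
    (hdistinct : ∀ i j : Fin m, i ≠ j → c i / c j ∉ K)
    (S : Set F)
    (hS : S = ⋃ i : Fin m, {x : F | ∃ k ∈ (K : Set F), k ≠ 0 ∧ x = c i * k})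
    (hKS : ∀ k : F, k ∈ K → k ≠ 0 → k ∈ S)
    (X : SimpleGraph F) [DecidableRel X.Adj]
    (hX : ∀ x y : F, X.Adj x y ↔ x ≠ y ∧ x - y ∈ S) :
    (X.adjMatrix ℚ).charpoly =
      (Polynomial.X - Polynomial.C ((m : ℚ) * ((q : ℚ) - 1))) *
        (Polynomial.X - Polynomial.C ((q : ℚ) - (m : ℚ))) ^ (m * (q - 1)) *
        (Polynomial.X + Polynomial.C (m : ℚ)) ^ ((q - 1) * (q + 1 - m)) := by
  have hq2 : 2 ≤ q := hqpp.two_le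
  have hq3 : 3 ≤ q := by
    have := Nat.odd_iff.mp hqodd
    omega
  have hm1 : 1 ≤ m := by
    rcases Nat.eq_zero_or_pos m with rfl | h
    swap
    · exact h
    · exfalso
      have h1 := hKS 1 K.one_mem one_ne_zero
      rw [hS] at h1
      simpa using h1
  have srg := peisert_srg hK hF hc hdistinct hS X hX
  set A : Matrix F F ℝ := X.adjMatrix ℝ with hAdef
  have hHerm : A.IsHermitian := by
    unfold Matrix.IsHermitian
    ext i j
    simp [hAdef, Matrix.conjTranspose_apply, SimpleGraph.adjMatrix_apply, SimpleGraph.adj_comm]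
  set J : Matrix F F ℝ := Matrix.of (fun _ _ => (1:ℝ)) with hJdef
  -- cast lemmas
  have hcast_k : ((m*(q-1) : ℕ) : ℝ) = (m:ℝ) * ((q:ℝ)-1) := by
    push_cast [Nat.cast_sub (show 1 ≤ q by omega)]
    ring
  have hmm' : (m-1) ≤ (m-1)*(m-1) := by
    rcases Nat.eq_zero_or_pos (m-1) with h | h
    · simp [h]
    · exact Nat.le_mul_of_pos_left _ h
  have hmm2 : m ≤ m*m := Nat.le_mul_of_pos_left _ (by omega)
  have hcast_l : ((q - 2 + ((m-1)*(m-1) - (m-1)) : ℕ) : ℝ)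
      = (q:ℝ) - 2 + (((m:ℝ)-1)*((m:ℝ)-1) - ((m:ℝ)-1)) := by
    push_cast [Nat.cast_sub (show 2 ≤ q by omega), Nat.cast_sub hmm',
      Nat.cast_sub (show 1 ≤ m by omega)]
    ring
  have hcast_mu : ((m*m - m : ℕ) : ℝ) = (m:ℝ)*(m:ℝ) - (m:ℝ) := by
    push_cast [Nat.cast_sub hmm2]
    ring
  -- A * J = κ • J
  have hAJ : A * J = ((m:ℝ) * ((q:ℝ)-1)) • J := by
    ext v w
    rw [hAdef, SimpleGraph.adjMatrix_mul_apply]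
    have : ∀ u ∈ X.neighborFinset v, J u w = 1 := fun u _ => rfl
    rw [Finset.sum_congr rfl this, Finset.sum_const, SimpleGraph.neighborFinset_eq_filter]
    rw [show (univ.filter (X.Adj v)).card = X.degree v from by
      rw [SimpleGraph.degree, SimpleGraph.neighborFinset_eq_filter]]
    rw [srg.regular v]
    simp only [Matrix.smul_apply, hJdef, Matrix.of_apply, smul_eq_mul, mul_one, nsmul_eq_mul]
    exact hcast_k
  -- A² identity
  have h2 := srg.matrix_eq (α := ℝ)
  have hcompl : (Xᶜ.adjMatrix ℝ) = J - 1 - A := by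
    ext v w
    by_cases hvw : v = w
    · subst hvw
      simp [hJdef, Matrix.sub_apply, Matrix.one_apply_eq, hAdef]
    · simp only [Matrix.sub_apply, SimpleGraph.adjMatrix_apply, hJdef, Matrix.of_apply,
        SimpleGraph.compl_adj, Matrix.one_apply_ne hvw, hAdef]
      by_cases hadj : X.Adj v w <;> simp [hadj, hvw]
  rw [hcompl, pow_two, ← Nat.cast_smul_eq_nsmul ℝ (m*(q-1)),
    ← Nat.cast_smul_eq_nsmul ℝ (q - 2 + ((m-1)*(m-1) - (m-1))),
    ← Nat.cast_smul_eq_nsmul ℝ (m*m - m), hcast_k, hcast_l, hcast_mu] at h2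
  have e1 : (A - ((q:ℝ)-(m:ℝ)) • 1) * (A + (m:ℝ) • 1) = ((m:ℝ)*(m:ℝ)-(m:ℝ)) • J := by
    have expand : (A - ((q:ℝ)-(m:ℝ)) • 1) * (A + (m:ℝ) • 1)
        = A * A + ((m:ℝ) - ((q:ℝ)-(m:ℝ))) • A - ((((q:ℝ)-(m:ℝ)))*(m:ℝ)) • 1 := by
      rw [sub_mul, mul_add, mul_add]
      simp only [smul_mul_assoc, mul_smul_comm, mul_one, one_mul, smul_smul]
      module
    rw [expand, h2]
    module
  have hcubic : (A - ((m:ℝ)*((q:ℝ)-1)) • 1) *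
      ((A - ((q:ℝ)-(m:ℝ)) • 1) * (A + (m:ℝ) • 1)) = 0 := by
    rw [e1, mul_smul_comm, sub_mul, smul_mul_assoc, one_mul, hAJ, sub_self, smul_zero]
  set ev : F → ℝ := hHerm.eigenvalues with hevdef
  have hroots : ∀ i : F, ev i = (m:ℝ)*((q:ℝ)-1) ∨ ev i = (q:ℝ)-(m:ℝ) ∨ ev i = -(m:ℝ) := by
    intro i
    have hw := hHerm.mulVec_eigenvectorBasis i
    set w : F → ℝ := (WithLp.equiv 2 (F → ℝ)) (hHerm.eigenvectorBasis i) with hwdef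
    have hw : A *ᵥ w = ev i • w := hw
    have hw0 : w ≠ 0 := by
      intro h0
      apply hHerm.eigenvectorBasis.orthonormal.ne_zero i
      have hbe : hHerm.eigenvectorBasis i = (WithLp.equiv 2 (F → ℝ)).symm w := by
        rw [hwdef]; simp
      rw [hbe, h0]
      simp
    have h1v : (A + (m:ℝ) • 1) *ᵥ w = (ev i + (m:ℝ)) • w := by
      rw [Matrix.add_mulVec, Matrix.smul_mulVec, Matrix.one_mulVec, hw, add_smul]
    have h2v : (A - ((q:ℝ)-(m:ℝ)) • 1) *ᵥ ((ev i + (m:ℝ)) • w)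
        = ((ev i + (m:ℝ)) * (ev i - ((q:ℝ)-(m:ℝ)))) • w := by
      rw [Matrix.mulVec_smul, Matrix.sub_mulVec, Matrix.smul_mulVec, Matrix.one_mulVec, hw,
        ← sub_smul, smul_smul]
    have h3v : (A - ((m:ℝ)*((q:ℝ)-1)) • 1) *ᵥ (((ev i + (m:ℝ)) * (ev i - ((q:ℝ)-(m:ℝ)))) • w)
        = (((ev i + (m:ℝ)) * (ev i - ((q:ℝ)-(m:ℝ)))) * (ev i - (m:ℝ)*((q:ℝ)-1))) • w := by
      rw [Matrix.mulVec_smul, Matrix.sub_mulVec, Matrix.smul_mulVec, Matrix.one_mulVec, hw,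
        ← sub_smul, smul_smul]
    have hz : ((A - ((m:ℝ)*((q:ℝ)-1)) • 1) *
        ((A - ((q:ℝ)-(m:ℝ)) • 1) * (A + (m:ℝ) • 1))) *ᵥ w = 0 := by
      rw [hcubic, Matrix.zero_mulVec]
    rw [← Matrix.mulVec_mulVec, ← Matrix.mulVec_mulVec, h1v, h2v, h3v] at hz
    rcases smul_eq_zero.mp hz with hsc | hw0'
    · rcases mul_eq_zero.mp hsc with hsc2 | h3
      · rcases mul_eq_zero.mp hsc2 with h4 | h5
        · right; right; linarith [eq_neg_of_add_eq_zero_left h4]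
        · right; left; linarith [sub_eq_zero.mp h5]
      · left; linarith [sub_eq_zero.mp h3]
    · exact absurd hw0' hw0
  have hsum0 : ∑ i, ev i = 0 := by
    rw [← hermitian_trace_eq_sum hHerm, hAdef, SimpleGraph.trace_adjMatrix]
  have hsumsq : ∑ i, (ev i)^2 = (q:ℝ)^2 * ((m:ℝ)*((q:ℝ)-1)) := by
    rw [← hermitian_trace_sq_eq_sum hHerm, Matrix.trace]
    have hdg : ∀ v : F, (A * A).diag v = ((m*(q-1) : ℕ) : ℝ) := by
      intro v
      rw [Matrix.diag_apply, hAdef, SimpleGraph.adjMatrix_mul_self_apply_self, srg.regular v]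
    rw [Finset.sum_congr rfl (fun v _ => hdg v), Finset.sum_const, Finset.card_univ, hF, hcast_k,
      nsmul_eq_mul]
    push_cast
    ring
  have hmapA : (X.adjMatrix ℚ).map (algebraMap ℚ ℝ) = A := by
    ext v w
    rw [hAdef]
    simp [SimpleGraph.adjMatrix_apply, Matrix.map_apply, apply_ite (algebraMap ℚ ℝ)]
  have hcharR : (X.adjMatrix ℚ).charpoly.map (algebraMap ℚ ℝ)
      = ∏ i, (Polynomial.X - Polynomial.C (ev i)) := by
    rw [← Matrix.charpoly_map, hmapA, hermitian_charpoly_prod hHerm]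
  -- generic helpers for value partitions
  have hsumE : ∀ (E : Finset F) (t : ℝ), (∀ i ∈ E, ev i = t) → ∑ i ∈ E, ev i = (E.card:ℝ) * t := by
    intro E t h
    rw [Finset.sum_congr rfl h, Finset.sum_const, nsmul_eq_mul]
  have hsumE2 : ∀ (E : Finset F) (t : ℝ), (∀ i ∈ E, ev i = t) →
      ∑ i ∈ E, (ev i)^2 = (E.card:ℝ) * t^2 := by
    intro E t h
    rw [Finset.sum_congr rfl (fun i hi => by rw [h i hi]), Finset.sum_const, nsmul_eq_mul]
  have hprodE : ∀ (E : Finset F) (t : ℝ), (∀ i ∈ E, ev i = t) →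
      ∏ i ∈ E, (Polynomial.X - Polynomial.C (ev i))
        = (Polynomial.X - Polynomial.C t)^E.card := by
    intro E t h
    rw [Finset.prod_congr rfl (fun i hi => by rw [h i hi]), Finset.prod_const]
  have hq3' : (3:ℝ) ≤ (q:ℝ) := by exact_mod_cast hq3
  have hm1' : (1:ℝ) ≤ (m:ℝ) := by exact_mod_cast hm1
  have hmq' : (m:ℝ) ≤ (q:ℝ) := by exact_mod_cast hm
  -- the main product identity over ℝ
  have hprodR : ∏ i, (Polynomial.X - Polynomial.C (ev i))
      = (Polynomial.X - Polynomial.C ((m:ℝ)*((q:ℝ)-1))) *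
        (Polynomial.X - Polynomial.C ((q:ℝ)-(m:ℝ)))^(m*(q-1)) *
        (Polynomial.X + Polynomial.C (m:ℝ))^((q-1)*(q+1-m)) := by
    rcases eq_or_lt_of_le hm1 with hm1e | h2m
    · -- case m = 1
      subst hm1e
      have hroots' : ∀ i : F, ev i = (q:ℝ)-1 ∨ ev i = -(1:ℝ) := by
        intro i
        rcases hroots i with h | h | h
        · left; rw [h]; push_cast; ring
        · left; rw [h]; push_cast; ring
        · right; rw [h]; push_cast; ring
      set E1 : Finset F := univ.filter (fun i => ev i = (q:ℝ)-1) with hE1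
      set E3 : Finset F := univ.filter (fun i => ev i = -(1:ℝ)) with hE3
      have hne : ((q:ℝ)-1) ≠ -(1:ℝ) := by intro h; nlinarith
      have hd13 : Disjoint E1 E3 := by
        rw [Finset.disjoint_left]
        intro i h1 h3
        simp only [hE1, hE3, mem_filter, mem_univ, true_and] at h1 h3
        exact hne (h1 ▸ h3 ▸ rfl)
      have hcover : E1 ∪ E3 = univ := by
        ext i
        simp only [Finset.mem_union, hE1, hE3, mem_filter, mem_univ, true_and, iff_true]
        exact hroots' i
      have hE1v : ∀ i ∈ E1, ev i = (q:ℝ)-1 := fun i hi => (mem_filter.mp hi).2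
      have hE3v : ∀ i ∈ E3, ev i = -(1:ℝ) := fun i hi => (mem_filter.mp hi).2
      have hcards : E1.card + E3.card = q^2 := by
        rw [← Finset.card_union_of_disjoint hd13, hcover, Finset.card_univ, hF]
      have eqA : (E1.card:ℝ) + (E3.card:ℝ) = (q:ℝ)^2 := by exact_mod_cast hcards
      have eqB : (E1.card:ℝ) * ((q:ℝ)-1) + (E3.card:ℝ) * (-(1:ℝ)) = 0 := by
        rw [← hsumE E1 _ hE1v, ← hsumE E3 _ hE3v, ← Finset.sum_union hd13, hcover]
        exact hsum0
      have haR : (E1.card:ℝ) = (q:ℝ) := by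
        have hz : ((E1.card:ℝ) - (q:ℝ)) * (q:ℝ) = 0 := by linear_combination eqA + eqB
        rcases mul_eq_zero.mp hz with h | h
        · linarith [sub_eq_zero.mp h]
        · nlinarith
      have heR : (E3.card:ℝ) = (q:ℝ)*((q:ℝ)-1) := by linear_combination eqA - haR
      have ha : E1.card = q := by exact_mod_cast haR
      have he : E3.card = q*(q-1) := by
        have : ((q*(q-1) : ℕ):ℝ) = (q:ℝ)*((q:ℝ)-1) := by
          push_cast [Nat.cast_sub (show 1 ≤ q by omega)]; ring
        exact_mod_cast heR.trans this.symm
      rw [← hcover, Finset.prod_union hd13, hprodE E1 _ hE1v, hprodE E3 _ hE3v, ha, he]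
      simp only [Nat.cast_one, one_mul, Polynomial.C_neg, sub_neg_eq_add]
      have hq11 : (q-1)*(q+1-1) = q*(q-1) := by
        have h : q+1-1 = q := by omega
        rw [h]; exact Nat.mul_comm _ _
      rw [hq11, ← pow_succ']
      have hqq : q - 1 + 1 = q := by omega
      rw [hqq]
    · -- case 2 ≤ m
      have hm2' : (2:ℝ) ≤ (m:ℝ) := by exact_mod_cast h2m
      set E1 : Finset F := univ.filter (fun i => ev i = (m:ℝ)*((q:ℝ)-1)) with hE1
      set E2 : Finset F := univ.filter (fun i => ev i = (q:ℝ)-(m:ℝ)) with hE2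
      set E3 : Finset F := univ.filter (fun i => ev i = -(m:ℝ)) with hE3
      have hne12 : (m:ℝ)*((q:ℝ)-1) ≠ (q:ℝ)-(m:ℝ) := by intro h; nlinarith
      have hne13 : (m:ℝ)*((q:ℝ)-1) ≠ -(m:ℝ) := by intro h; nlinarith
      have hne23 : (q:ℝ)-(m:ℝ) ≠ -(m:ℝ) := by intro h; nlinarith
      have hE1v : ∀ i ∈ E1, ev i = (m:ℝ)*((q:ℝ)-1) := fun i hi => (mem_filter.mp hi).2
      have hE2v : ∀ i ∈ E2, ev i = (q:ℝ)-(m:ℝ) := fun i hi => (mem_filter.mp hi).2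
      have hE3v : ∀ i ∈ E3, ev i = -(m:ℝ) := fun i hi => (mem_filter.mp hi).2
      have hd12 : Disjoint E1 E2 := by
        rw [Finset.disjoint_left]
        intro i h1 h2
        exact hne12 ((hE1v i h1) ▸ (hE2v i h2) ▸ rfl)
      have hd13 : Disjoint E1 E3 := by
        rw [Finset.disjoint_left]
        intro i h1 h3
        exact hne13 ((hE1v i h1) ▸ (hE3v i h3) ▸ rfl)
      have hd23 : Disjoint E2 E3 := by
        rw [Finset.disjoint_left]
        intro i h2 h3
        exact hne23 ((hE2v i h2) ▸ (hE3v i h3) ▸ rfl)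
      have hd123 : Disjoint (E1 ∪ E2) E3 := by
        rw [Finset.disjoint_union_left]
        exact ⟨hd13, hd23⟩
      have hcover : (E1 ∪ E2) ∪ E3 = univ := by
        ext i
        simp only [Finset.mem_union, hE1, hE2, hE3, mem_filter, mem_univ, true_and, iff_true]
        rcases hroots i with h | h | h
        · exact Or.inl (Or.inl h)
        · exact Or.inl (Or.inr h)
        · exact Or.inr h
      have hcards : E1.card + E2.card + E3.card = q^2 := by
        rw [← Finset.card_union_of_disjoint hd12, ← Finset.card_union_of_disjoint hd123,
          hcover, Finset.card_univ, hF]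
      have eqA : (E1.card:ℝ) + (E2.card:ℝ) + (E3.card:ℝ) = (q:ℝ)^2 := by exact_mod_cast hcards
      have eqB : (E1.card:ℝ) * ((m:ℝ)*((q:ℝ)-1)) + (E2.card:ℝ) * ((q:ℝ)-(m:ℝ))
          + (E3.card:ℝ) * (-(m:ℝ)) = 0 := by
        rw [← hsumE E1 _ hE1v, ← hsumE E2 _ hE2v, ← hsumE E3 _ hE3v, ← Finset.sum_union hd12,
          ← Finset.sum_union hd123, hcover]
        exact hsum0
      have eqC : (E1.card:ℝ) * ((m:ℝ)*((q:ℝ)-1))^2 + (E2.card:ℝ) * ((q:ℝ)-(m:ℝ))^2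
          + (E3.card:ℝ) * (-(m:ℝ))^2 = (q:ℝ)^2 * ((m:ℝ)*((q:ℝ)-1)) := by
        rw [← hsumE2 E1 _ hE1v, ← hsumE2 E2 _ hE2v, ← hsumE2 E3 _ hE3v, ← Finset.sum_union hd12,
          ← Finset.sum_union hd123, hcover]
        exact hsumsq
      have haz : ((E1.card:ℝ) - 1) * (((m:ℝ)*((q:ℝ)-1) - ((q:ℝ)-(m:ℝ))) * ((m:ℝ)*((q:ℝ)-1) + (m:ℝ))) = 0 := by
        linear_combination eqC - (((q:ℝ)-(m:ℝ)) + (-(m:ℝ)))*eqB + (((q:ℝ)-(m:ℝ))*(-(m:ℝ)))*eqA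
      have hbz : ((E2.card:ℝ) - (m:ℝ)*((q:ℝ)-1)) * ((((q:ℝ)-(m:ℝ)) - (m:ℝ)*((q:ℝ)-1)) * (((q:ℝ)-(m:ℝ)) + (m:ℝ))) = 0 := by
        linear_combination eqC - ((m:ℝ)*((q:ℝ)-1) + (-(m:ℝ)))*eqB + ((m:ℝ)*((q:ℝ)-1)*(-(m:ℝ)))*eqA
      have haR : (E1.card:ℝ) = 1 := by
        rcases mul_eq_zero.mp haz with h | h
        · linarith [sub_eq_zero.mp h]
        · exfalso
          rcases mul_eq_zero.mp h with h' | h'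
          · nlinarith
          · nlinarith
      have hbR : (E2.card:ℝ) = (m:ℝ)*((q:ℝ)-1) := by
        rcases mul_eq_zero.mp hbz with h | h
        · linarith [sub_eq_zero.mp h]
        · exfalso
          rcases mul_eq_zero.mp h with h' | h'
          · nlinarith
          · nlinarith
      have heR : (E3.card:ℝ) = ((q:ℝ)-1)*((q:ℝ)+1-(m:ℝ)) := by
        linear_combination eqA - haR - hbR
      have ha : E1.card = 1 := by exact_mod_cast haR
      have hb : E2.card = m*(q-1) := by
        have hcast : ((m*(q-1) : ℕ):ℝ) = (m:ℝ)*((q:ℝ)-1) := hcast_k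
        exact_mod_cast hbR.trans hcast.symm
      have he : E3.card = (q-1)*(q+1-m) := by
        have hcast : (((q-1)*(q+1-m) : ℕ):ℝ) = ((q:ℝ)-1)*((q:ℝ)+1-(m:ℝ)) := by
          push_cast [Nat.cast_sub (show 1 ≤ q by omega), Nat.cast_sub (show m ≤ q+1 by omega)]
          ring
        exact_mod_cast heR.trans hcast.symm
      rw [← hcover, Finset.prod_union hd123, Finset.prod_union hd12, hprodE E1 _ hE1v,
        hprodE E2 _ hE2v, hprodE E3 _ hE3v, ha, hb, he, pow_one]
      simp only [Polynomial.C_neg, sub_neg_eq_add]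
  -- final assembly
  refine Polynomial.map_injective (algebraMap ℚ ℝ) (algebraMap ℚ ℝ).injective ?_
  rw [hcharR, hprodR]
  simp only [Polynomial.map_mul, Polynomial.map_pow, Polynomial.map_sub, Polynomial.map_add,
    Polynomial.map_X, Polynomial.map_C]
  have c1 : algebraMap ℚ ℝ ((m:ℚ) * ((q:ℚ) - 1)) = (m:ℝ)*((q:ℝ)-1) := by
    simp [map_mul, map_sub, map_natCast, map_one]
  have c2 : algebraMap ℚ ℝ ((q:ℚ) - (m:ℚ)) = (q:ℝ)-(m:ℝ) := by
    simp [map_sub, map_natCast]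
  have c3 : algebraMap ℚ ℝ ((m:ℚ)) = (m:ℝ) := by simp [map_natCast]
  rw [c1, c2, c3]
end

section
/- Let q be an odd prime power and let X be a Peisert-type graph of type (m,q), with Laplacian matrix L = D − M over ℚ (D the diagonal matrix of vertex degrees and M the adjacency matrix), rows and columns indexed by Fin (q²) via a fixed bijection with F_{q²}. Then X is weakly Hadamard diagonalizable: there exists an invertible matrix P of size q² × q² over ℚ all of whose entries lie in {−1, 0, 1}, such that any two columns of P with indices i and j satisfying j ≥ i + 2 are orthogonal (their standard dot product is zero), and P⁻¹ L P is a diagonal matrix. -/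
set_option linter.unusedSectionVars false
set_option maxHeartbeats 1000000
set_option maxRecDepth 8000

namespace StmtAux
open scoped Classical

variable {F : Type} [Field F] [Fintype F] [DecidableEq F]

noncomputable def vr (ζ : F) (κ : ℕ → F) (a : ℕ) : F := if a = 0 then 1 else ζ + κ (a-1)
noncomputable def wr (ζ : F) (a : ℕ) : F := if a = 0 then ζ else 1
def inC (K : Subfield F) (ζ : F) (κ : ℕ → F) (a r : ℕ) (z : F) : Prop :=
  (z - κ r * wr ζ a) / vr ζ κ a ∈ K
noncomputable def ind (K : Subfield F) (ζ : F) (κ : ℕ → F) (a r : ℕ) (z : F) : ℚ :=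
  if inC K ζ κ a r z then 1 else 0

section basic
variable {q : ℕ} {K : Subfield F} {ζ : F} {κ : ℕ → F}
variable (hζ : ζ ∉ K) (hκ1 : ∀ r, κ r ∈ K)

include hζ hκ1

lemma vr_ne_zero (a : ℕ) : vr ζ κ a ≠ 0 := by
  unfold vr
  split_ifs with h
  · exact one_ne_zero
  · intro h0
    have : ζ = -κ (a-1) := by linear_combination h0
    exact hζ (this ▸ K.neg_mem (hκ1 _))

lemma wr_ne_zero (a : ℕ) : wr ζ a ≠ 0 := by
  unfold wr
  split_ifs with h
  · intro h0; exact hζ (h0 ▸ K.zero_mem)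
  · exact one_ne_zero

lemma wr_div_vr (a : ℕ) : wr ζ a / vr ζ κ a ∉ K := by
  have hv0 : vr ζ κ a ≠ 0 := vr_ne_zero hζ hκ1 a
  simp only [vr, wr] at hv0 ⊢
  split_ifs with h
  · simpa using hζ
  · intro hmem
    rw [one_div] at hmem
    have h2 : ζ + κ (a-1) ∈ K := by simpa using K.inv_mem hmem
    have : ζ = (ζ + κ (a-1)) - κ (a-1) := by ring
    exact hζ (this ▸ K.sub_mem h2 (hκ1 _))

variable (hκinj : ∀ r < q, ∀ r' < q, κ r = κ r' → r = r')

include hκinj in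
lemma vr_div_vr {a a' : ℕ} (ha : a ≤ q) (ha' : a' ≤ q) (hne : a ≠ a') :
    vr ζ κ a / vr ζ κ a' ∉ K := by
  intro hmem
  have hv0 : vr ζ κ a ≠ 0 := vr_ne_zero hζ hκ1 a
  have hv0' : vr ζ κ a' ≠ 0 := vr_ne_zero hζ hκ1 a'
  unfold vr at hmem hv0 hv0'
  rcases Nat.eq_zero_or_pos a with h0 | h0 <;> rcases Nat.eq_zero_or_pos a' with h0' | h0'
  · exact hne (h0.trans h0'.symm)
  · -- a = 0, a' ≠ 0 : 1/(ζ+k) ∈ K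
    rw [if_pos h0, if_neg (Nat.pos_iff_ne_zero.mp h0'), one_div] at hmem
    have h2 : ζ + κ (a'-1) ∈ K := by simpa using K.inv_mem hmem
    have : ζ = (ζ + κ (a'-1)) - κ (a'-1) := by ring
    exact hζ (this ▸ K.sub_mem h2 (hκ1 _))
  · -- a ≠ 0, a' = 0 : (ζ+k)/1 ∈ K
    rw [if_neg (Nat.pos_iff_ne_zero.mp h0), if_pos h0', div_one] at hmem
    have : ζ = (ζ + κ (a-1)) - κ (a-1) := by ring
    exact hζ (this ▸ K.sub_mem hmem (hκ1 _))
  · have ha0 := Nat.pos_iff_ne_zero.mp h0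
    have ha0' := Nat.pos_iff_ne_zero.mp h0'
    simp only [if_neg ha0, if_neg ha0'] at hmem hv0 hv0'
    set u := κ (a-1) with hu
    set u' := κ (a'-1) with hu'
    have key : ζ + u = ((ζ + u)/(ζ + u')) * ζ + ((ζ + u)/(ζ + u')) * u' := by
      field_simp
    by_cases hone : (ζ + u)/(ζ + u') = 1
    · rw [hone, one_mul, one_mul] at key
      have : u = u' := by linear_combination key
      have := hκinj (a-1) (by omega) (a'-1) (by omega) this
      omega
    · have hd : (1 : F) - (ζ + u)/(ζ + u') ≠ 0 := by
        intro hd0; exact hone (by linear_combination -hd0)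
      have hzeta : ζ = (((ζ + u)/(ζ + u')) * u' - u) / (1 - (ζ + u)/(ζ + u')) := by
        rw [eq_div_iff hd]
        linear_combination key
      have : (((ζ + u)/(ζ + u')) * u' - u) / (1 - (ζ + u)/(ζ + u')) ∈ K :=
        K.div_mem (K.sub_mem (K.mul_mem hmem (hκ1 _)) (hκ1 _))
          (K.sub_mem K.one_mem hmem)
      exact hζ (hzeta ▸ this)

end basic
open Finset

lemma card_filter_eq_one_of_existsUnique {α : Type*} [Fintype α] {p : α → Prop}
    [DecidablePred p] (h : ∃! z, p z) : (univ.filter p).card = 1 := by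
  obtain ⟨z, hz, hu⟩ := h
  rw [Finset.card_eq_one]
  refine ⟨z, ?_⟩
  ext y
  simp only [mem_filter, mem_univ, true_and, mem_singleton]
  exact ⟨fun hy => hu y hy, fun hy => hy ▸ hz⟩

variable {F : Type} [Field F] [Fintype F] [DecidableEq F]
variable {q : ℕ} {K : Subfield F} {ζ : F} {κ : ℕ → F}

lemma decomp_bijective (hcard : Fintype.card F = q^2) (hKcard : Fintype.card K = q)
    {u v : F} (hv : v ≠ 0) (huv : u / v ∉ K) :
    Function.Bijective (fun p : K × K => u * (p.1 : F) + v * (p.2 : F)) := by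
  have hu : u ≠ 0 := by rintro rfl; exact huv (by simpa using K.zero_mem)
  rw [Fintype.bijective_iff_injective_and_card]
  constructor
  · rintro ⟨α, β⟩ ⟨α', β'⟩ h
    simp only at h
    by_cases hαα : (α : F) = α'
    · have hββ : (β : F) = β' := by
        have h2 : v * (β : F) = v * (β' : F) := by linear_combination h - u * hαα
        exact mul_left_cancel₀ hv h2
      exact Prod.ext (Subtype.ext hαα) (Subtype.ext hββ)
    · exfalso
      have hne : (α : F) - α' ≠ 0 := sub_ne_zero.mpr hαα
      have huvq : u / v = ((β' : F) - β) / ((α : F) - α') := by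
        rw [div_eq_div_iff hv hne]
        linear_combination h
      exact huv (huvq ▸ K.div_mem (K.sub_mem β'.2 β.2) (K.sub_mem α.2 α'.2))
  · rw [Fintype.card_prod, hKcard, hcard, pow_two]

lemma decomp_existsUnique (hcard : Fintype.card F = q^2) (hKcard : Fintype.card K = q)
    {u v : F} (hv : v ≠ 0) (huv : u / v ∉ K) (b : F) :
    ∃! p : K × K, u * (p.1 : F) + v * (p.2 : F) = b :=
  (decomp_bijective hcard hKcard hv huv).existsUnique b

section counting
variable (hζ : ζ ∉ K) (hκ1 : ∀ r, κ r ∈ K)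
  (hκinj : ∀ r < q, ∀ r' < q, κ r = κ r' → r = r')
  (hcard : Fintype.card F = q^2) (hKcard : Fintype.card K = q)

include hζ hκ1

lemma inC_iff {a r : ℕ} {z : F} :
    inC K ζ κ a r z ↔ ∃ k ∈ K, z = κ r * wr ζ a + vr ζ κ a * k := by
  have hv0 : vr ζ κ a ≠ 0 := vr_ne_zero hζ hκ1 a
  constructor
  · intro h
    exact ⟨_, h, by field_simp [inC]; ring⟩
  · rintro ⟨k, hk, rfl⟩
    unfold inC
    rw [show (κ r * wr ζ a + vr ζ κ a * k - κ r * wr ζ a) = vr ζ κ a * k by ring,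
      mul_div_cancel_left₀ _ hv0]
    exact hk

/-- each coset has exactly `q` elements -/
lemma coset_card (hKcard : Fintype.card K = q) (a r : ℕ) :
    (univ.filter (fun z : F => inC K ζ κ a r z)).card = q := by
  have hv0 : vr ζ κ a ≠ 0 := vr_ne_zero hζ hκ1 a
  have himg : univ.filter (fun z : F => inC K ζ κ a r z) =
      (univ : Finset K).image (fun k : K => κ r * wr ζ a + vr ζ κ a * (k : F)) := by
    ext z
    simp only [mem_filter, mem_univ, true_and, mem_image]
    rw [inC_iff hζ hκ1]
    constructor
    · rintro ⟨k, hk, rfl⟩; exact ⟨⟨k, hk⟩, rfl⟩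
    · rintro ⟨k, rfl⟩; exact ⟨k, k.2, rfl⟩
  rw [himg, Finset.card_image_of_injective _ (fun k k' h => ?_), card_univ, hKcard]
  have : (k : F) = k' := by
    have := h
    simp only [add_right_inj] at this
    exact mul_left_cancel₀ hv0 this
  exact Subtype.ext this

include hκinj

/-- distinct cosets of the same line are disjoint -/
lemma coset_disj {a r r' : ℕ} (hr : r < q) (hr' : r' < q) (hne : r ≠ r') {z : F}
    (h1 : inC K ζ κ a r z) (h2 : inC K ζ κ a r' z) : False := by
  have hv0 : vr ζ κ a ≠ 0 := vr_ne_zero hζ hκ1 a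
  have hmem : (κ r' - κ r) * (wr ζ a / vr ζ κ a) ∈ K := by
    have : (κ r' - κ r) * (wr ζ a / vr ζ κ a)
        = (z - κ r * wr ζ a) / vr ζ κ a - (z - κ r' * wr ζ a) / vr ζ κ a := by
      field_simp; ring
    rw [this]
    exact K.sub_mem h1 h2
  have hκne : κ r' - κ r ≠ 0 := fun h =>
    hne (hκinj r hr r' hr' (by linear_combination -h))
  have : wr ζ a / vr ζ κ a = ((κ r' - κ r) * (wr ζ a / vr ζ κ a)) * (κ r' - κ r)⁻¹ := by
    field_simp
  exact wr_div_vr hζ hκ1 a (this ▸ K.mul_mem hmem (K.inv_mem (K.sub_mem (hκ1 _) (hκ1 _))))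

include hcard hKcard

/-- cosets of distinct lines meet in exactly one point -/
lemma coset_cross (a a' r r' : ℕ) (ha : a ≤ q) (ha' : a' ≤ q) (hne : a ≠ a') :
    (univ.filter (fun z : F => inC K ζ κ a r z ∧ inC K ζ κ a' r' z)).card = 1 := by
  have hv0 : vr ζ κ a ≠ 0 := vr_ne_zero hζ hκ1 a
  have hv0' : vr ζ κ a' ≠ 0 := vr_ne_zero hζ hκ1 a'
  apply card_filter_eq_one_of_existsUnique
  obtain ⟨p, hp, hpu⟩ := decomp_existsUnique hcard hKcard hv0'
    (vr_div_vr hζ hκ1 hκinj ha ha' hne) (κ r' * wr ζ a' - κ r * wr ζ a)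
  refine ⟨κ r * wr ζ a + vr ζ κ a * (p.1 : F), ⟨?_, ?_⟩, ?_⟩
  · rw [inC_iff hζ hκ1]; exact ⟨p.1, p.1.2, rfl⟩
  · rw [inC_iff hζ hκ1]
    refine ⟨-(p.2 : F), K.neg_mem p.2.2, ?_⟩
    linear_combination hp
  · rintro z' ⟨h1, h2⟩
    set α : F := (z' - κ r * wr ζ a) / vr ζ κ a with hα
    set β : F := (z' - κ r' * wr ζ a') / vr ζ κ a' with hβ
    have hz1 : z' - κ r * wr ζ a = vr ζ κ a * α := by rw [hα]; field_simp
    have hz2 : z' - κ r' * wr ζ a' = vr ζ κ a' * β := by rw [hβ]; field_simp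
    have hkey : vr ζ κ a * (α : F) + vr ζ κ a' * (-β : F) = κ r' * wr ζ a' - κ r * wr ζ a := by
      linear_combination hz2 - hz1
    have := hpu (⟨α, h1⟩, ⟨-β, K.neg_mem h2⟩) hkey
    have hp1 : (p.1 : F) = α := by rw [← this]
    linear_combination hz1 - vr ζ κ a * hp1
  
/-- key eigenvector count: for `c` not on line `a`, exactly one `k ∈ K` moves `z` into a given coset -/
lemma eigen_count {c : F} {a : ℕ} (hcv : c / vr ζ κ a ∉ K) (r : ℕ) (z : F) :
    (univ.filter (fun k : K => inC K ζ κ a r (z - c * (k : F)))).card = 1 := by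
  have hv0 : vr ζ κ a ≠ 0 := vr_ne_zero hζ hκ1 a
  apply card_filter_eq_one_of_existsUnique
  obtain ⟨p, hp, hpu⟩ := decomp_existsUnique hcard hKcard hv0 hcv (z - κ r * wr ζ a)
  refine ⟨p.1, ?_, ?_⟩
  · show inC K ζ κ a r (z - c * (p.1 : F))
    rw [inC_iff hζ hκ1]
    exact ⟨p.2, p.2.2, by linear_combination -hp⟩
  · intro k' hk'
    rw [inC_iff hζ hκ1] at hk'
    obtain ⟨β, hβ, hzeq⟩ := hk'
    have := hpu (k', ⟨β, hβ⟩) (by simp only; linear_combination -hzeq)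
    rw [← this]


/-- coset indicator sums to `q` -/
lemma sum_ind (a r : ℕ) :
    ∑ z : F, ind K ζ κ a r z = (q : ℚ) := by
  unfold ind
  rw [Finset.sum_boole, coset_card hζ hκ1 hKcard a r]

omit hcard hKcard in
lemma ind_mul_self (a r : ℕ) (z : F) :
    ind K ζ κ a r z * ind K ζ κ a r z = ind K ζ κ a r z := by
  unfold ind; split_ifs <;> norm_num

omit hcard hKcard in
lemma ind_mul_disj {a r r' : ℕ} (hr : r < q) (hr' : r' < q) (hne : r ≠ r') (z : F) :
    ind K ζ κ a r z * ind K ζ κ a r' z = 0 := by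
  unfold ind
  split_ifs with h1 h2
  · exact absurd h2 (fun h2' => coset_disj hζ hκ1 hκinj hr hr' hne h1 h2')
  all_goals norm_num

lemma sum_ind_cross {a a' : ℕ} (r r' : ℕ) (ha : a ≤ q) (ha' : a' ≤ q) (hne : a ≠ a') :
    ∑ z : F, ind K ζ κ a r z * ind K ζ κ a' r' z = 1 := by
  have : ∀ z : F, ind K ζ κ a r z * ind K ζ κ a' r' z
      = if inC K ζ κ a r z ∧ inC K ζ κ a' r' z then (1:ℚ) else 0 := by
    intro z; unfold ind
    by_cases h1 : inC K ζ κ a r z <;> by_cases h2 : inC K ζ κ a' r' z <;> simp [h1, h2]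
  simp only [this]
  rw [Finset.sum_boole, coset_cross hζ hκ1 hκinj hcard hKcard a a' r r' ha ha' hne]
  norm_num

omit hκinj hcard hKcard in
lemma inC_shift {c : F} {a : ℕ} (hcv : c / vr ζ κ a ∈ K) {k : F} (hk : k ∈ K) (r : ℕ) (z : F) :
    inC K ζ κ a r (z - c * k) ↔ inC K ζ κ a r z := by
  have hv0 : vr ζ κ a ≠ 0 := vr_ne_zero hζ hκ1 a
  have heq : (z - c * k - κ r * wr ζ a) / vr ζ κ a
      = (z - κ r * wr ζ a) / vr ζ κ a - (c / vr ζ κ a) * k := by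
    field_simp; ring
  unfold inC
  rw [heq]
  constructor
  · intro h
    have := K.add_mem h (K.mul_mem hcv hk)
    simpa using this
  · intro h
    exact K.sub_mem h (K.mul_mem hcv hk)

/-- the per-line eigen computation -/
lemma eigen_step (c : F) (a r r' : ℕ) (z : F) :
    ∑ k ∈ Finset.univ.filter (fun k : K => (k : F) ≠ 0),
      ((ind K ζ κ a r z - ind K ζ κ a r' z)
        - (ind K ζ κ a r (z - c * (k : F)) - ind K ζ κ a r' (z - c * (k : F))))
    = if c / vr ζ κ a ∈ K then 0 else (q : ℚ) * (ind K ζ κ a r z - ind K ζ κ a r' z) := by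
  set g : K → ℚ := fun k =>
    (ind K ζ κ a r z - ind K ζ κ a r' z)
      - (ind K ζ κ a r (z - c * (k : F)) - ind K ζ κ a r' (z - c * (k : F))) with hg
  have hzero : g 0 = 0 := by
    rw [hg]
    show (ind K ζ κ a r z - ind K ζ κ a r' z)
      - (ind K ζ κ a r (z - c * ((0:K) : F)) - ind K ζ κ a r' (z - c * ((0:K) : F))) = 0
    rw [ZeroMemClass.coe_zero, mul_zero, sub_zero]
    ring
  have hfull : ∑ k ∈ Finset.univ.filter (fun k : K => (k : F) ≠ 0), g k = ∑ k : K, g k := by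
    rw [← Finset.sum_filter_add_sum_filter_not Finset.univ (fun k : K => (k : F) ≠ 0) g]
    have : Finset.univ.filter (fun k : K => ¬((k : F) ≠ 0)) = {(0 : K)} := by
      ext k
      simp only [Finset.mem_filter, Finset.mem_univ, true_and, not_not,
        Finset.mem_singleton, Subtype.ext_iff, ZeroMemClass.coe_zero]
    rw [this, Finset.sum_singleton, hzero, add_zero]
  rw [hfull]
  by_cases hcv : c / vr ζ κ a ∈ K
  · rw [if_pos hcv]
    apply Finset.sum_eq_zero
    intro k _
    have h1 : ind K ζ κ a r (z - c * (k : F)) = ind K ζ κ a r z := by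
      unfold ind
      simp only [inC_shift hζ hκ1 hcv k.2]
    have h2 : ind K ζ κ a r' (z - c * (k : F)) = ind K ζ κ a r' z := by
      unfold ind
      simp only [inC_shift hζ hκ1 hcv k.2]
    show g k = 0
    rw [hg]
    simp only []
    rw [h1, h2]
    ring
  · rw [if_neg hcv]
    have hsum1 : ∀ rr : ℕ, ∑ k : K, ind K ζ κ a rr (z - c * (k : F)) = 1 := by
      intro rr
      unfold ind
      rw [Finset.sum_boole, eigen_count hζ hκ1 hκinj hcard hKcard hcv rr z]
      norm_num
    have hcardK : ∑ _k : K, (1 : ℚ) = (q : ℚ) := by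
      rw [Finset.sum_const, Finset.card_univ, hKcard, nsmul_eq_mul, mul_one]
    simp only [hg]
    rw [Finset.sum_sub_distrib]
    have hA : ∑ _k : K, (ind K ζ κ a r z - ind K ζ κ a r' z)
        = (q : ℚ) * (ind K ζ κ a r z - ind K ζ κ a r' z) := by
      rw [Finset.sum_const, Finset.card_univ, hKcard, nsmul_eq_mul]
    have hB : ∑ k : K, (ind K ζ κ a r (z - c * (k : F)) - ind K ζ κ a r' (z - c * (k : F))) = 0 := by
      rw [Finset.sum_sub_distrib, hsum1, hsum1, sub_self]
    rw [hA, hB, sub_zero]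


end counting

def aIdx (q n : ℕ) : ℕ := (n-1)/(q-1)
def jIdx (q n : ℕ) : ℕ := (n-1)%(q-1)

noncomputable def colA (K : Subfield F) (ζ : F) (κ : ℕ → F) (q n : ℕ) (z : F) : ℚ :=
  if n = 0 then 1
  else ind K ζ κ (aIdx q n) (jIdx q n) z - ind K ζ κ (aIdx q n) (jIdx q n + 1) z

noncomputable def rowA (K : Subfield F) (ζ : F) (κ : ℕ → F) (q n : ℕ) (z : F) : ℚ :=
  if n = 0 then 1 else ind K ζ κ (aIdx q n) (jIdx q n) z

lemma qsq {q : ℕ} (hq : 1 ≤ q) : (q+1)*(q-1)+1 = q^2 := by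
  obtain ⟨t, rfl⟩ : ∃ t, q = t + 1 := ⟨q - 1, by omega⟩
  have h1 : t + 1 - 1 = t := rfl
  rw [h1]
  have e1 : (t+1+1)*t = t*t + 2*t := by ring
  have e2 : (t+1)^2 = t*t + 2*t + 1 := by ring
  omega

lemma aIdx_le {q n : ℕ} (hq : 2 ≤ q) (hn : n < q^2) : aIdx q n ≤ q := by
  have h1 : (q+1)*(q-1)+1 = q^2 := qsq (by omega)
  have hb : 1*1 ≤ (q+1)*(q-1) := Nat.mul_le_mul (by omega) (by omega)
  have h2 : n - 1 < (q+1)*(q-1) := by omega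
  have h3 : (n-1)/(q-1) < q+1 :=
    (Nat.div_lt_iff_lt_mul (show 0 < q - 1 by omega)).mpr h2
  unfold aIdx
  omega

lemma jIdx_lt {q : ℕ} (hq : 2 ≤ q) (n : ℕ) : jIdx q n < q - 1 :=
  Nat.mod_lt _ (by omega)

lemma sameBlock {q n n' : ℕ} (hq : 2 ≤ q) (hn : 1 ≤ n) (hn'1 : 1 ≤ n') (hnn : n ≤ n')
    (h : aIdx q n = aIdx q n') : jIdx q n' = jIdx q n + (n' - n) := by
  have e1 : (q-1) * aIdx q n + jIdx q n = n - 1 := Nat.div_add_mod _ _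
  have e2 : (q-1) * aIdx q n' + jIdx q n' = n' - 1 := Nat.div_add_mod _ _
  rw [← h] at e2
  omega

section ortho
variable {q : ℕ} {K : Subfield F} {ζ : F} {κ : ℕ → F}
variable (hζ : ζ ∉ K) (hκ1 : ∀ r, κ r ∈ K)
  (hκinj : ∀ r < q, ∀ r' < q, κ r = κ r' → r = r')
  (hcard : Fintype.card F = q^2) (hKcard : Fintype.card K = q)
  (hq : 2 ≤ q)

include hζ hκ1 hκinj hcard hKcard hq

/-- non-consecutive columns are orthogonal -/
lemma col_orth {n n' : ℕ} (hn' : n' < q^2) (hsep : n + 2 ≤ n') :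
    ∑ z : F, colA K ζ κ q n z * colA K ζ κ q n' z = 0 := by
  have hn'0 : n' ≠ 0 := by omega
  set a' := aIdx q n' with ha'
  set j' := jIdx q n' with hj'
  have hcol' : ∀ z, colA K ζ κ q n' z
      = ind K ζ κ a' j' z - ind K ζ κ a' (j'+1) z := by
    intro z; unfold colA; rw [if_neg hn'0]
  by_cases hn0 : n = 0
  · -- all-ones column against a difference column
    have : ∀ z, colA K ζ κ q n z = 1 := by intro z; unfold colA; rw [if_pos hn0]
    simp only [this, hcol', one_mul]
    rw [Finset.sum_sub_distrib, sum_ind hζ hκ1 hκinj hcard hKcard, sum_ind hζ hκ1 hκinj hcard hKcard, sub_self]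
  · set a := aIdx q n with ha
    set j := jIdx q n with hj
    have hcol : ∀ z, colA K ζ κ q n z
        = ind K ζ κ a j z - ind K ζ κ a (j+1) z := by
      intro z; unfold colA; rw [if_neg hn0]
    have haq : a ≤ q := aIdx_le hq (by omega)
    have ha'q : a' ≤ q := aIdx_le hq hn'
    have hjq : j < q - 1 := jIdx_lt hq n
    have hj'q : j' < q - 1 := jIdx_lt hq n'
    by_cases haa : a = a'
    · -- same line: cosets in the two columns are all distinct
      have hjj : j' = j + (n' - n) := sameBlock hq (by omega) (by omega) (by omega) haa
      have hsep2 : j + 2 ≤ j' := by omega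
      have hzero : ∀ z, colA K ζ κ q n z * colA K ζ κ q n' z = 0 := by
        intro z
        rw [hcol, hcol', ← haa]
        have d1 : ind K ζ κ a j z * ind K ζ κ a j' z = 0 :=
          ind_mul_disj hζ hκ1 hκinj (by omega) (by omega) (by omega) z
        have d2 : ind K ζ κ a j z * ind K ζ κ a (j'+1) z = 0 :=
          ind_mul_disj hζ hκ1 hκinj (by omega) (by omega) (by omega) z
        have d3 : ind K ζ κ a (j+1) z * ind K ζ κ a j' z = 0 :=
          ind_mul_disj hζ hκ1 hκinj (by omega) (by omega) (by omega) z
        have d4 : ind K ζ κ a (j+1) z * ind K ζ κ a (j'+1) z = 0 :=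
          ind_mul_disj hζ hκ1 hκinj (by omega) (by omega) (by omega) z
        linear_combination d1 - d2 - d3 + d4
      simp only [hzero]
      exact Finset.sum_const_zero
    · -- different lines: all four cross sums are 1
      have hexp : ∀ z, colA K ζ κ q n z * colA K ζ κ q n' z
          = ind K ζ κ a j z * ind K ζ κ a' j' z
            - ind K ζ κ a j z * ind K ζ κ a' (j'+1) z
            - (ind K ζ κ a (j+1) z * ind K ζ κ a' j' z
              - ind K ζ κ a (j+1) z * ind K ζ κ a' (j'+1) z) := by
        intro z; rw [hcol, hcol']; ring
      simp only [hexp]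
      rw [Finset.sum_sub_distrib, Finset.sum_sub_distrib, Finset.sum_sub_distrib,
        sum_ind_cross hζ hκ1 hκinj hcard hKcard _ _ haq ha'q haa,
        sum_ind_cross hζ hκ1 hκinj hcard hKcard _ _ haq ha'q haa,
        sum_ind_cross hζ hκ1 hκinj hcard hKcard _ _ haq ha'q haa,
        sum_ind_cross hζ hκ1 hκinj hcard hKcard _ _ haq ha'q haa]
      ring

/-- entries of the `Q`-`P` product: strictly-upper entries vanish -/
lemma tri_zero {n n' : ℕ} (hn' : n' < q^2) (hlt : n < n') :
    ∑ z : F, rowA K ζ κ q n z * colA K ζ κ q n' z = 0 := by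
  have hn'0 : n' ≠ 0 := by omega
  set a' := aIdx q n' with ha'
  set j' := jIdx q n' with hj'
  have hcol' : ∀ z, colA K ζ κ q n' z
      = ind K ζ κ a' j' z - ind K ζ κ a' (j'+1) z := by
    intro z; unfold colA; rw [if_neg hn'0]
  have ha'q : a' ≤ q := aIdx_le hq hn'
  have hj'q : j' < q - 1 := jIdx_lt hq n'
  by_cases hn0 : n = 0
  · have : ∀ z, rowA K ζ κ q n z = 1 := by intro z; unfold rowA; rw [if_pos hn0]
    simp only [this, hcol', one_mul]
    rw [Finset.sum_sub_distrib, sum_ind hζ hκ1 hκinj hcard hKcard, sum_ind hζ hκ1 hκinj hcard hKcard, sub_self]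
  · set a := aIdx q n with ha
    set j := jIdx q n with hj
    have hrow : ∀ z, rowA K ζ κ q n z = ind K ζ κ a j z := by
      intro z; unfold rowA; rw [if_neg hn0]
    have haq : a ≤ q := aIdx_le hq (by omega)
    have hjq : j < q - 1 := jIdx_lt hq n
    by_cases haa : a = a'
    · have hjj : j' = j + (n' - n) := sameBlock hq (by omega) (by omega) (by omega) haa
      have hzero : ∀ z, rowA K ζ κ q n z * colA K ζ κ q n' z = 0 := by
        intro z
        rw [hrow, hcol', ← haa]
        have d1 : ind K ζ κ a j z * ind K ζ κ a j' z = 0 :=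
          ind_mul_disj hζ hκ1 hκinj (by omega) (by omega) (by omega) z
        have d2 : ind K ζ κ a j z * ind K ζ κ a (j'+1) z = 0 :=
          ind_mul_disj hζ hκ1 hκinj (by omega) (by omega) (by omega) z
        linear_combination d1 - d2
      simp only [hzero]
      exact Finset.sum_const_zero
    · have hexp : ∀ z, rowA K ζ κ q n z * colA K ζ κ q n' z
          = ind K ζ κ a j z * ind K ζ κ a' j' z
            - ind K ζ κ a j z * ind K ζ κ a' (j'+1) z := by
        intro z; rw [hrow, hcol']; ring
      simp only [hexp]
      rw [Finset.sum_sub_distrib,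
        sum_ind_cross hζ hκ1 hκinj hcard hKcard _ _ haq ha'q haa,
        sum_ind_cross hζ hκ1 hκinj hcard hKcard _ _ haq ha'q haa, sub_self]

/-- diagonal entries of the `Q`-`P` product are nonzero -/
lemma tri_diag {n : ℕ} (hn : n < q^2) :
    ∑ z : F, rowA K ζ κ q n z * colA K ζ κ q n z ≠ 0 := by
  by_cases hn0 : n = 0
  · have hone : ∀ z, rowA K ζ κ q n z * colA K ζ κ q n z = 1 := by
      intro z; unfold rowA colA; rw [if_pos hn0, if_pos hn0, one_mul]
    simp only [hone]
    rw [Finset.sum_const, Finset.card_univ, hcard, nsmul_eq_mul, mul_one]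
    positivity
  · set a := aIdx q n with ha
    set j := jIdx q n with hj
    have haq : a ≤ q := aIdx_le hq hn
    have hjq : j < q - 1 := jIdx_lt hq n
    have hexp : ∀ z, rowA K ζ κ q n z * colA K ζ κ q n z
        = ind K ζ κ a j z - ind K ζ κ a j z * ind K ζ κ a (j+1) z := by
      intro z
      unfold rowA colA
      rw [if_neg hn0, if_neg hn0]
      have := ind_mul_self hζ hκ1 hκinj a j z
      linear_combination this
    simp only [hexp]
    rw [Finset.sum_sub_distrib, sum_ind hζ hκ1 hκinj hcard hKcard]
    have : ∀ z : F, ind K ζ κ a j z * ind K ζ κ a (j+1) z = 0 := fun z =>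
      ind_mul_disj hζ hκ1 hκinj (by omega) (by omega) (by omega) z
    simp only [this]
    rw [Finset.sum_const_zero, sub_zero]
    have : (0:ℚ) < q := by positivity
    · intro h
      rw [h] at this
      exact lt_irrefl _ this

end ortho

section lap
open Finset

variable {q : ℕ} {K : Subfield F}

lemma lap_row {m : ℕ} (c : Fin m → F) (hc : ∀ i, c i ≠ 0)
    (hdistinct : ∀ i j : Fin m, i ≠ j → c i / c j ∉ K)
    (S : Set F) (hS : S = ⋃ i : Fin m, {x : F | ∃ k ∈ (K : Set F), k ≠ 0 ∧ x = c i * k})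
    (X : SimpleGraph F) [DecidableRel X.Adj]
    (hX : ∀ x y : F, X.Adj x y ↔ x ≠ y ∧ x - y ∈ S)
    (f : F → ℚ) (u : F) :
    ∑ z : F, X.lapMatrix ℚ u z * f z
      = ∑ i : Fin m, ∑ k ∈ univ.filter (fun k : K => (k : F) ≠ 0),
          (f u - f (u - c i * (k : F))) := by
  classical
  -- step 1: rewrite the Laplacian row sum as a sum over neighbours
  have step1 : ∑ z : F, X.lapMatrix ℚ u z * f z
      = ∑ z ∈ univ.filter (X.Adj u), (f u - f z) := by
    have hlap : ∀ z : F, X.lapMatrix ℚ u z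
        = (if u = z then (X.degree u : ℚ) else 0) - (if X.Adj u z then 1 else 0) := by
      intro z
      simp [SimpleGraph.lapMatrix, SimpleGraph.degMatrix, Matrix.diagonal_apply,
        Matrix.sub_apply]
    simp only [hlap, sub_mul]
    rw [Finset.sum_sub_distrib]
    have h1 : ∑ z : F, (if u = z then (X.degree u : ℚ) else 0) * f z
        = (X.degree u : ℚ) * f u := by
      simp only [ite_mul, zero_mul]
      rw [Finset.sum_ite_eq]
      simp
    have h2 : ∑ z : F, (if X.Adj u z then (1:ℚ) else 0) * f z
        = ∑ z ∈ univ.filter (X.Adj u), f z := by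
      rw [Finset.sum_filter]
      apply Finset.sum_congr rfl
      intro z _
      split_ifs <;> simp
    rw [h1, h2, Finset.sum_sub_distrib, Finset.sum_const]
    have hdeg : (X.degree u : ℚ) = ((univ.filter (X.Adj u)).card : ℚ) := by
      rw [SimpleGraph.degree, SimpleGraph.neighborFinset_eq_filter]
    rw [hdeg, nsmul_eq_mul]
  rw [step1]
  -- step 2: reindex the neighbours by pairs (i, k)
  rw [← Finset.sum_product']
  set T : Finset (Fin m × K) := univ ×ˢ univ.filter (fun k : K => (k : F) ≠ 0) with hT
  have hmemT : ∀ p : Fin m × K, p ∈ T ↔ (p.2 : F) ≠ 0 := by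
    intro p
    simp [hT, Finset.mem_product]
  refine (Finset.sum_bij (fun p _ => u - c p.1 * (p.2 : F)) ?_ ?_ ?_ ?_).symm
  · -- maps into neighbours
    intro p hp
    rw [Finset.mem_filter]
    refine ⟨Finset.mem_univ _, ?_⟩
    rw [hX]
    have hne : c p.1 * (p.2 : F) ≠ 0 := mul_ne_zero (hc _) ((hmemT p).mp hp)
    constructor
    · intro hcontra
      apply hne
      have hcontra' : u = u - c p.1 * (p.2 : F) := hcontra
      linear_combination hcontra'
    · rw [hS, Set.mem_iUnion]
      exact ⟨p.1, (p.2 : F), p.2.2, (hmemT p).mp hp, by ring⟩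
  · -- injective
    intro p hp p' hp' heq
    have heq2 : c p.1 * (p.2 : F) = c p'.1 * (p'.2 : F) := by linear_combination -heq
    have hk0 : (p.2 : F) ≠ 0 := (hmemT p).mp hp
    have hk0' : (p'.2 : F) ≠ 0 := (hmemT p').mp hp'
    have hii : p.1 = p'.1 := by
      by_contra hne
      apply hdistinct p.1 p'.1 hne
      have : c p.1 / c p'.1 = (p'.2 : F) / (p.2 : F) := by
        rw [div_eq_div_iff (hc p'.1) hk0]
        linear_combination heq2
      rw [this]
      exact K.div_mem p'.2.2 p.2.2
    have hkk : (p.2 : F) = (p'.2 : F) := by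
      rw [hii] at heq2
      exact mul_left_cancel₀ (hc p'.1) heq2
    exact Prod.ext hii (Subtype.ext hkk)
  · -- surjective
    intro z hz
    rw [Finset.mem_filter] at hz
    rw [hX] at hz
    obtain ⟨_, hne, hzS⟩ := hz
    rw [hS, Set.mem_iUnion] at hzS
    obtain ⟨i, k, hkK, hk0, hzk⟩ := hzS
    refine ⟨(i, ⟨k, hkK⟩), (hmemT _).mpr hk0, ?_⟩
    show u - c i * k = z
    linear_combination hzk
  · intro p hp
    rfl

end lap
end StmtAux

open StmtAux in
/-- Peisert-type graphs are weakly Hadamard diagonalizable: the Laplacian (indexed by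
`Fin (q²)` via any fixed bijection with `F_{q²}`) is diagonalized by an invertible
matrix with entries in {−1,0,1} whose non-consecutive columns are orthogonal. -/
theorem stmt_4
    (q m : ℕ) (hqodd : Odd q) (hqpp : IsPrimePow q) (hm : m ≤ q)
    (F : Type) [Field F] [Fintype F] [DecidableEq F]
    (hF : Fintype.card F = q ^ 2)
    (K : Subfield F) (hK : Nat.card K = q)
    (c : Fin m → F) (hc : ∀ i, c i ≠ 0)
    (hdistinct : ∀ i j : Fin m, i ≠ j → c i / c j ∉ K)
    (S : Set F)
    (hS : S = ⋃ i : Fin m, {x : F | ∃ k ∈ (K : Set F), k ≠ 0 ∧ x = c i * k})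
    (hKS : ∀ k : F, k ∈ K → k ≠ 0 → k ∈ S)
    (X : SimpleGraph F) [DecidableRel X.Adj]
    (hX : ∀ x y : F, X.Adj x y ↔ x ≠ y ∧ x - y ∈ S)
    (e : Fin (q ^ 2) ≃ F) :
    ∃ P : Matrix (Fin (q ^ 2)) (Fin (q ^ 2)) ℚ,
      IsUnit P ∧
      (∀ i j : Fin (q ^ 2), P i j = -1 ∨ P i j = 0 ∨ P i j = 1) ∧
      (∀ i j : Fin (q ^ 2), (i : ℕ) + 2 ≤ (j : ℕ) → ∑ k, P k i * P k j = 0) ∧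
      ∃ d : Fin (q ^ 2) → ℚ,
        P⁻¹ * ((X.lapMatrix ℚ).submatrix e e) * P = Matrix.diagonal d := by
  classical
  have hq2 : 2 ≤ q := hqpp.two_le
  have hKcard : Fintype.card K = q := by rw [← Nat.card_eq_fintype_card]; exact hK
  -- an element outside K
  have hζex : ∃ ζ : F, ζ ∉ K := by
    by_contra hcon
    push_neg at hcon
    have hinj : Function.Injective (fun z : F => (⟨z, hcon z⟩ : K)) :=
      fun a b hab => congrArg Subtype.val hab
    have hle : Fintype.card F ≤ Fintype.card K := Fintype.card_le_of_injective _ hinj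
    rw [hF, hKcard] at hle
    nlinarith
  obtain ⟨ζ, hζ⟩ := hζex
  -- enumeration of K
  have eK : K ≃ Fin q := Fintype.equivFinOfCardEq hKcard
  set κ : ℕ → F := fun r => if h : r < q then ((eK.symm ⟨r, h⟩ : K) : F) else 0 with hκ
  have hκ1 : ∀ r, κ r ∈ K := by
    intro r
    rw [hκ]
    dsimp only
    split_ifs
    · exact (eK.symm _).2
    · exact K.zero_mem
  have hκinj : ∀ r < q, ∀ r' < q, κ r = κ r' → r = r' := by
    intro r hr r' hr' h
    rw [hκ] at h
    dsimp only at h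
    rw [dif_pos hr, dif_pos hr'] at h
    have h2 := eK.symm.injective (Subtype.ext h)
    exact congrArg Fin.val h2
  -- the matrices
  set P : Matrix (Fin (q ^ 2)) (Fin (q ^ 2)) ℚ :=
    Matrix.of (fun x n => colA K ζ κ q (n : ℕ) (e x)) with hP
  set Q : Matrix (Fin (q ^ 2)) (Fin (q ^ 2)) ℚ :=
    Matrix.of (fun n x => rowA K ζ κ q (n : ℕ) (e x)) with hQ
  -- entries
  have hent : ∀ i j : Fin (q ^ 2), P i j = -1 ∨ P i j = 0 ∨ P i j = 1 := by
    intro i j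
    have hPij : P i j = colA K ζ κ q (j : ℕ) (e i) := rfl
    rw [hPij]
    unfold StmtAux.colA StmtAux.ind
    split_ifs <;> norm_num
  -- orthogonality
  have horth : ∀ i j : Fin (q ^ 2), (i : ℕ) + 2 ≤ (j : ℕ) → ∑ k, P k i * P k j = 0 := by
    intro i j hij
    have hsum := col_orth hζ hκ1 hκinj hF hKcard hq2 (n := (i : ℕ)) (n' := (j : ℕ)) j.isLt hij
    exact (Equiv.sum_comp e
      (fun z => colA K ζ κ q (i : ℕ) z * colA K ζ κ q (j : ℕ) z)).trans hsum
  -- invertibility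
  set M : Matrix (Fin (q ^ 2)) (Fin (q ^ 2)) ℚ :=
    Matrix.of (fun n n' : Fin (q ^ 2) =>
      ∑ z : F, rowA K ζ κ q (n : ℕ) z * colA K ζ κ q (n' : ℕ) z) with hM
  have hMQP : Q * P = M := by
    ext n n'
    rw [Matrix.mul_apply]
    exact Equiv.sum_comp e (fun z => rowA K ζ κ q (n : ℕ) z * colA K ζ κ q (n' : ℕ) z)
  have htri : M.BlockTriangular OrderDual.toDual := by
    intro i j hij
    have hlt : (i : ℕ) < (j : ℕ) := hij
    exact tri_zero hζ hκ1 hκinj hF hKcard hq2 j.isLt hlt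
  have hMdet : M.det ≠ 0 := by
    rw [Matrix.det_of_lowerTriangular M htri]
    refine Finset.prod_ne_zero_iff.mpr (fun i _ => ?_)
    exact tri_diag hζ hκ1 hκinj hF hKcard hq2 i.isLt
  have hPdet : IsUnit P.det := by
    have hne : Q.det * P.det ≠ 0 := by rw [← Matrix.det_mul, hMQP]; exact hMdet
    exact isUnit_iff_ne_zero.mpr (right_ne_zero_of_mul hne)
  have hPunit : IsUnit P := (Matrix.isUnit_iff_isUnit_det P).mpr hPdet
  -- eigenvalues
  set dval : ℕ → ℚ := fun n => if n = 0 then 0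
    else (if ∃ i : Fin m, c i / vr ζ κ (aIdx q n) ∈ K then (q : ℚ) * ((m : ℚ) - 1)
      else (q : ℚ) * (m : ℚ)) with hdval
  have heig : ∀ n : ℕ, n < q ^ 2 → ∀ u : F,
      ∑ z : F, X.lapMatrix ℚ u z * colA K ζ κ q n z = dval n * colA K ζ κ q n u := by
    intro n hn u
    rw [lap_row c hc hdistinct S hS X hX]
    by_cases hn0 : n = 0
    · have hone : ∀ z : F, colA K ζ κ q n z = 1 := by
        intro z; unfold StmtAux.colA; rw [if_pos hn0]
      simp only [hone, sub_self]
      rw [hdval]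
      simp [hn0]
    · set a := aIdx q n with ha
      set j := jIdx q n with hj
      have hcol : ∀ z : F, colA K ζ κ q n z
          = ind K ζ κ a j z - ind K ζ κ a (j+1) z := by
        intro z; unfold StmtAux.colA; rw [if_neg hn0]
      have hstep : ∀ i : Fin m,
          ∑ k ∈ Finset.univ.filter (fun k : K => (k : F) ≠ 0),
            (colA K ζ κ q n u - colA K ζ κ q n (u - c i * (k : F)))
          = if c i / vr ζ κ a ∈ K then 0 else (q : ℚ) * colA K ζ κ q n u := by
        intro i
        simp only [hcol]
        exact eigen_step hζ hκ1 hκinj hF hKcard (c i) a j (j+1) u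
      rw [Finset.sum_congr rfl (fun i _ => hstep i)]
      rw [Finset.sum_ite, Finset.sum_const_zero, zero_add, Finset.sum_const, nsmul_eq_mul]
      have hcardsplit := Finset.card_filter_add_card_filter_not
        (s := (Finset.univ : Finset (Fin m))) (p := fun i => c i / vr ζ κ a ∈ K)
      rw [Finset.card_univ, Fintype.card_fin] at hcardsplit
      by_cases hex : ∃ i : Fin m, c i / vr ζ κ a ∈ K
      · have hcnt : (Finset.univ.filter (fun i : Fin m => c i / vr ζ κ a ∈ K)).card = 1 := by
          obtain ⟨i0, hi0⟩ := hex
          rw [Finset.card_eq_one]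
          refine ⟨i0, ?_⟩
          ext i
          simp only [Finset.mem_filter, Finset.mem_univ, true_and, Finset.mem_singleton]
          constructor
          · intro hi
            by_contra hne
            apply hdistinct i i0 hne
            have hv0 : vr ζ κ a ≠ 0 := vr_ne_zero hζ hκ1 a
            have heqq : c i / c i0 = (c i / vr ζ κ a) / (c i0 / vr ζ κ a) := by
              rw [div_div_div_cancel_right₀]
              exact hv0
            rw [heqq]
            exact K.div_mem hi hi0
          · rintro rfl; exact hi0
        have hm1 : 1 ≤ m := by
          obtain ⟨i0, _⟩ := hex
          exact Nat.one_le_iff_ne_zero.mpr (by rintro rfl; exact i0.elim0)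
        have hcnt' : (Finset.univ.filter (fun i : Fin m => ¬ (c i / vr ζ κ a ∈ K))).card
            = m - 1 := by omega
        rw [hcnt', hdval]
        simp only [if_neg hn0, if_pos (show ∃ i : Fin m, c i / vr ζ κ (aIdx q n) ∈ K from hex)]
        rw [Nat.cast_sub hm1]
        push_cast
        ring
      · have hcnt : (Finset.univ.filter (fun i : Fin m => c i / vr ζ κ a ∈ K)).card = 0 := by
          rw [Finset.card_eq_zero, Finset.filter_eq_empty_iff]
          intro i _
          exact fun hi => hex ⟨i, hi⟩
        have hcnt' : (Finset.univ.filter (fun i : Fin m => ¬ (c i / vr ζ κ a ∈ K))).card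
            = m := by omega
        rw [hcnt', hdval]
        simp only [if_neg hn0, if_neg (show ¬∃ i : Fin m, c i / vr ζ κ (aIdx q n) ∈ K from hex)]
        push_cast
        ring
  set d : Fin (q ^ 2) → ℚ := fun n => dval (n : ℕ) with hd
  have hLP : (X.lapMatrix ℚ).submatrix e e * P = P * Matrix.diagonal d := by
    ext x n
    rw [Matrix.mul_apply, Matrix.mul_diagonal]
    have hre : ∑ y : Fin (q ^ 2), (X.lapMatrix ℚ).submatrix e e x y * P y n
        = ∑ z : F, X.lapMatrix ℚ (e x) z * colA K ζ κ q (n : ℕ) z :=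
      Equiv.sum_comp e (fun z => X.lapMatrix ℚ (e x) z * colA K ζ κ q (n : ℕ) z)
    rw [hre, heig (n : ℕ) n.isLt (e x)]
    show dval (n : ℕ) * colA K ζ κ q (n : ℕ) (e x) = colA K ζ κ q (n : ℕ) (e x) * d n
    rw [hd]
    ring
  refine ⟨P, hPunit, hent, horth, d, ?_⟩
  calc P⁻¹ * ((X.lapMatrix ℚ).submatrix e e) * P
      = P⁻¹ * (((X.lapMatrix ℚ).submatrix e e) * P) := by rw [Matrix.mul_assoc]
    _ = P⁻¹ * (P * Matrix.diagonal d) := by rw [hLP]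
    _ = (P⁻¹ * P) * Matrix.diagonal d := by rw [Matrix.mul_assoc]
    _ = Matrix.diagonal d := by rw [Matrix.nonsing_inv_mul P hPdet, Matrix.one_mul]
end

section
/- Let q be an odd prime power and let X be a Peisert-type graph of type (m,q). Then the clique number of X equals q and the chromatic number of X equals q. -/
/-- A Peisert-type graph of order q² has clique number q and chromatic number q. -/
theorem stmt_5
    (q m : ℕ) (hqodd : Odd q) (hqpp : IsPrimePow q) (hm : m ≤ q)
    (F : Type) [Field F] [Fintype F] [DecidableEq F]
    (hF : Fintype.card F = q ^ 2)
    (K : Subfield F) (hK : Nat.card K = q)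
    (c : Fin m → F) (hc : ∀ i, c i ≠ 0)
    (hdistinct : ∀ i j : Fin m, i ≠ j → c i / c j ∉ K)
    (S : Set F)
    (hS : S = ⋃ i : Fin m, {x : F | ∃ k ∈ (K : Set F), k ≠ 0 ∧ x = c i * k})
    (hKS : ∀ k : F, k ∈ K → k ≠ 0 → k ∈ S)
    (X : SimpleGraph F)
    (hX : ∀ x y : F, X.Adj x y ↔ x ≠ y ∧ x - y ∈ S) :
    X.cliqueNum = q ∧ X.chromaticNumber = (q : ℕ∞) := by
  classical
  have hq2 : 2 ≤ q := hqpp.two_le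
  -- S is stable under multiplication by nonzero elements of K
  have hstab : ∀ s ∈ S, ∀ k : F, k ∈ K → k ≠ 0 → s * k ∈ S := by
    intro s hs k hk hk0
    rw [hS] at hs ⊢
    obtain ⟨_, ⟨i, rfl⟩, k', hk', hk'0, rfl⟩ := hs
    exact Set.mem_iUnion.2 ⟨i, k' * k, K.mul_mem hk' hk, mul_ne_zero hk'0 hk0,
      mul_assoc _ _ _⟩
  -- the clique K
  have hKfin : (K : Set F).Finite := Set.toFinite _
  set t : Finset F := hKfin.toFinset with ht
  have htcard : t.card = q := by
    rw [← hK, ← Set.ncard_eq_toFinset_card (K : Set F) hKfin, ← Nat.card_coe_set_eq]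
    rfl
  have htclique : X.IsClique t := by
    intro x hx y hy hxy
    simp only [ht, Finset.mem_coe, Set.Finite.mem_toFinset, SetLike.mem_coe] at hx hy
    exact (hX x y).2 ⟨hxy, hKS _ (K.sub_mem hx hy) (sub_ne_zero.2 hxy)⟩
  -- bound on the cardinality of S
  have hScard : Nat.card S ≤ m * (q - 1) := by
    have hKd : Nat.card ((K : Set F) \ {0} : Set F) = q - 1 := by
      rw [Nat.card_coe_set_eq, Set.ncard_diff_singleton_of_mem (K.zero_mem),
        ← Nat.card_coe_set_eq]
      exact congrArg (· - 1) hK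
    let f : Fin m × ((K : Set F) \ {0} : Set F) → S := fun p =>
      ⟨c p.1 * p.2.1, by
        rw [hS]
        exact Set.mem_iUnion.2 ⟨p.1, p.2.1, p.2.2.1, p.2.2.2, rfl⟩⟩
    have hf : Function.Surjective f := by
      rintro ⟨s, hs⟩
      rw [hS] at hs
      obtain ⟨_, ⟨i, rfl⟩, k, hk, hk0, rfl⟩ := hs
      exact ⟨⟨i, ⟨k, hk, hk0⟩⟩, Subtype.ext rfl⟩
    calc Nat.card S ≤ Nat.card (Fin m × ((K : Set F) \ {0} : Set F)) :=
          Nat.card_le_card_of_surjective f hf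
      _ = m * (q - 1) := by rw [Nat.card_prod, Nat.card_eq_fintype_card, Fintype.card_fin, hKd]
  -- there is a nonzero d outside S
  obtain ⟨d, hd0, hdS⟩ : ∃ d : F, d ≠ 0 ∧ d ∉ S := by
    by_contra h
    push_neg at h
    have huniv : (Set.univ : Set F) ⊆ S ∪ {0} := by
      intro x _
      by_cases hx : x = 0
      · exact Or.inr hx
      · exact Or.inl (h x hx)
    have h1 : q ^ 2 ≤ (S ∪ {0} : Set F).ncard := by
      rw [← hF, ← Nat.card_eq_fintype_card, ← Set.ncard_univ]
      exact Set.ncard_le_ncard huniv (Set.toFinite _)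
    have h2 : (S ∪ {0} : Set F).ncard ≤ m * (q - 1) + 1 := by
      calc (S ∪ {0} : Set F).ncard ≤ S.ncard + ({0} : Set F).ncard := Set.ncard_union_le _ _
        _ ≤ m * (q - 1) + 1 := by
            rw [Set.ncard_singleton]
            exact Nat.add_le_add_right (by rw [← Nat.card_coe_set_eq]; exact hScard) 1
    have h3 : m * (q - 1) + 1 ≤ q * (q - 1) + 1 :=
      Nat.add_le_add_right (Nat.mul_le_mul_right _ hm) 1
    have h4 : q * (q - 1) + 1 < q ^ 2 := by
      have h5 : q * (q - 1) + q = q * q := by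
        have hq1 : q - 1 + 1 = q := by omega
        calc q * (q - 1) + q = q * ((q - 1) + 1) := by ring
          _ = q * q := by rw [hq1]
      rw [sq]
      omega
    omega
  -- the additive subgroup L = K·d
  set L : AddSubgroup F :=
    { carrier := {x : F | x * d⁻¹ ∈ K}
      zero_mem' := by simpa using K.zero_mem
      add_mem' := fun {a b} ha hb => by
        simp only [Set.mem_setOf_eq, add_mul] at *
        exact K.add_mem ha hb
      neg_mem' := fun {a} ha => by
        simp only [Set.mem_setOf_eq, neg_mul] at *
        exact K.neg_mem ha } with hL
  have hmemL : ∀ x : F, x ∈ L ↔ x * d⁻¹ ∈ K := fun x => Iff.rfl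
  -- card of L is q
  have hLcard : Nat.card L = q := by
    have e : K ≃ L :=
      { toFun := fun k => ⟨(k : F) * d, by
          rw [hmemL, mul_assoc, mul_inv_cancel₀ hd0, mul_one]; exact k.2⟩
        invFun := fun x => ⟨(x : F) * d⁻¹, x.2⟩
        left_inv := fun k => by
          ext; simp [mul_assoc, mul_inv_cancel₀ hd0]
        right_inv := fun x => by
          ext; simp [mul_assoc, inv_mul_cancel₀ hd0] }
    rw [← Nat.card_congr e, hK]
  -- coloring by F ⧸ L
  haveI : Fintype (F ⧸ L) := Fintype.ofFinite _
  have hQcard : Fintype.card (F ⧸ L) = q := by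
    have := AddSubgroup.card_eq_card_quotient_mul_card_addSubgroup L
    rw [hLcard, Nat.card_eq_fintype_card (α := F), hF, Nat.card_eq_fintype_card (α := F ⧸ L)]
      at this
    have hq0 : 0 < q := by omega
    have : Fintype.card (F ⧸ L) * q = q * q := by rw [← this, sq]
    exact Nat.eq_of_mul_eq_mul_right hq0 (by omega)
  have C : X.Coloring (F ⧸ L) := by
    refine SimpleGraph.Coloring.mk (fun x => QuotientAddGroup.mk x) ?_
    intro x y hadj heq
    obtain ⟨hxy, hxyS⟩ := (hX x y).1 hadj
    have hmem : -x + y ∈ L := QuotientAddGroup.eq.mp heq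
    rw [hmemL] at hmem
    set k : F := (-x + y) * d⁻¹ with hkdef
    have hk : k ∈ K := hmem
    have hk0 : k ≠ 0 := by
      have hne : -x + y ≠ 0 := fun h' => hxy (by linear_combination -h')
      exact mul_ne_zero hne (inv_ne_zero hd0)
    -- d = (x - y) * (-k)⁻¹ ∈ S, contradiction
    have hkd : -x + y = k * d := by
      rw [hkdef, mul_assoc, inv_mul_cancel₀ hd0, mul_one]
    have hxyd : x - y = -k * d := by linear_combination -hkd
    have hd : d = (x - y) * (-k)⁻¹ := by
      rw [hxyd, mul_comm (-k) d, mul_assoc, mul_inv_cancel₀ (neg_ne_zero.2 hk0), mul_one]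
    apply hdS
    rw [hd]
    exact hstab _ hxyS _ (K.inv_mem (K.neg_mem hk)) (inv_ne_zero (neg_ne_zero.2 hk0))
  have hcol : X.Colorable q := hQcard ▸ C.colorable
  -- conclude
  have hchrom_le : X.chromaticNumber ≤ (q : ℕ∞) := hcol.chromaticNumber_le
  have hchrom_ge : (q : ℕ∞) ≤ X.chromaticNumber := by
    have := htclique.card_le_chromaticNumber
    rwa [htcard] at this
  have hchrom : X.chromaticNumber = (q : ℕ∞) := le_antisymm hchrom_le hchrom_ge
  refine ⟨le_antisymm ?_ ?_, hchrom⟩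
  · obtain ⟨s, hs⟩ := X.exists_isNClique_cliqueNum
    have := hs.isClique.card_le_of_colorable hcol
    rwa [hs.card_eq] at this
  · have := @SimpleGraph.IsClique.card_le_cliqueNum F X _ t htclique
    rwa [htcard] at this
end

section
/- Let q be an odd prime power, let X be a Peisert-type graph of type (m,q), and suppose q > (m−1)². Then X has the strict-EKR property: every clique of size q in X is a canonical clique, i.e., equals aF_q + b for some a ∈ S and b ∈ F_{q²}. -/
/-- If q > (m−1)², every clique of size q in a Peisert-type graph of type (m,q)
is a canonical clique (strict-EKR property). -/
theorem stmt_6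
    (q m : ℕ) (hqodd : Odd q) (hqpp : IsPrimePow q) (hm : m ≤ q)
    (hbig : (m - 1) ^ 2 < q)
    (F : Type) [Field F] [Fintype F] [DecidableEq F]
    (hF : Fintype.card F = q ^ 2)
    (K : Subfield F) (hK : Nat.card K = q)
    (c : Fin m → F) (hc : ∀ i, c i ≠ 0)
    (hdistinct : ∀ i j : Fin m, i ≠ j → c i / c j ∉ K)
    (S : Set F)
    (hS : S = ⋃ i : Fin m, {x : F | ∃ k ∈ (K : Set F), k ≠ 0 ∧ x = c i * k})
    (hKS : ∀ k : F, k ∈ K → k ≠ 0 → k ∈ S)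
    (X : SimpleGraph F)
    (hX : ∀ x y : F, X.Adj x y ↔ x ≠ y ∧ x - y ∈ S)
    (C : Finset F) (hC : X.IsNClique q C) :
    ∃ a ∈ S, ∃ b : F, (C : Set F) = {x : F | ∃ k ∈ (K : Set F), x = a * k + b} := by
  classical
  have hq2 : 2 ≤ q := hqpp.two_le
  have hcard : C.card = q := hC.2
  have hadj : ∀ x ∈ C, ∀ y ∈ C, x ≠ y → x - y ∈ S := by
    intro x hx y hy hxy
    exact ((hX x y).1 (hC.1 hx hy hxy)).2
  have hSmem : ∀ x, x ∈ S ↔ ∃ i : Fin m, ∃ k ∈ (K : Set F), k ≠ 0 ∧ x = c i * k := by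
    intro x; rw [hS]; simp [Set.mem_iUnion]
  -- Lemma A: two nonzero representations force the same direction index
  have hA : ∀ (i j : Fin m) (k₁ k₂ : F), k₁ ∈ K → k₂ ∈ K → k₁ ≠ 0 →
      c i * k₁ = c j * k₂ → i = j := by
    intro i j k₁ k₂ hk₁ hk₂ hk₁0 heq
    by_contra hij
    apply hdistinct i j hij
    have hk₂0 : k₂ ≠ 0 := by
      intro h
      rw [h, mul_zero] at heq
      exact (mul_ne_zero (hc i) hk₁0) heq
    have hdiv : c i / c j = k₂ / k₁ := by
      field_simp [hc j]
      linear_combination heq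
    rw [hdiv]
    exact K.div_mem hk₂ hk₁
  -- Lemma B: a line missing some point of C meets C in at most m-1 points
  have hB : ∀ (j : Fin m) (e : F) (p' : F), p' ∈ C →
      (∀ k ∈ (K : Set F), p' ≠ c j * k + e) →
      (C.filter (fun x => ∃ k ∈ (K : Set F), x = c j * k + e)).card ≤ m - 1 := by
    intro j e p' hp'C hp'
    set T := C.filter (fun x => ∃ k ∈ (K : Set F), x = c j * k + e) with hT
    have key : ∀ x ∈ T, ∃ i : Fin m, i ≠ j ∧
        ∃ k ∈ (K : Set F), k ≠ 0 ∧ x - p' = c i * k := by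
      intro x hx
      rw [hT, Finset.mem_filter] at hx
      obtain ⟨hxC, k, hk, hxk⟩ := hx
      have hxp' : x ≠ p' := by
        intro h; subst h; exact hp' k hk hxk
      obtain ⟨i, k', hk', hk'0, hik⟩ := (hSmem _).1 (hadj x hxC p' hp'C hxp')
      refine ⟨i, ?_, k', hk', hk'0, hik⟩
      intro hij; subst hij
      apply hp' (k - k') (K.sub_mem hk hk')
      have hp'eq : p' = x - c i * k' := by linear_combination -hik
      rw [hp'eq, hxk]; ring
    choose f hfne kx hkxK hkx0 hkx using key
    set g : F → Fin m := fun x => if h : x ∈ T then f x h else j with hg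
    have hgmem : ∀ x ∈ T, g x ∈ Finset.univ.erase j := by
      intro x hx
      rw [hg]
      simp only [dif_pos hx]
      exact Finset.mem_erase.2 ⟨hfne x hx, Finset.mem_univ _⟩
    have hginj : Set.InjOn g T := by
      intro x hx y hy hxy
      simp only [Finset.mem_coe] at hx hy
      by_contra hne
      rw [hg] at hxy
      simp only [dif_pos hx, dif_pos hy] at hxy
      -- x - y = c (f x hx) * (kx x hx - kx y hy)  and also = c j * (a - b)
      obtain ⟨hxC, a, ha, hxa⟩ := Finset.mem_filter.1 hx
      obtain ⟨hyC, b, hb, hyb⟩ := Finset.mem_filter.1 hy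
      have h1 : x - y = c (f x hx) * (kx x hx - kx y hy) := by
        have e1 := hkx x hx
        have e2 := hkx y hy
        rw [← hxy] at e2
        linear_combination e1 - e2
      have h2 : x - y = c j * (a - b) := by rw [hxa, hyb]; ring
      have hk0 : kx x hx - kx y hy ≠ 0 := by
        intro h
        rw [h, mul_zero] at h1
        exact hne (sub_eq_zero.1 h1)
      have := hA (f x hx) j (kx x hx - kx y hy) (a - b)
        (K.sub_mem (hkxK x hx) (hkxK y hy)) (K.sub_mem ha hb) hk0 (h1 ▸ h2)
      exact hfne x hx this
    calc T.card ≤ (Finset.univ.erase j).card :=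
          Finset.card_le_card_of_injOn g hgmem hginj
      _ = m - 1 := by rw [Finset.card_erase_of_mem (Finset.mem_univ _), Finset.card_univ,
          Fintype.card_fin]
  -- pick a point of C
  have hCne : C.Nonempty := by rw [← Finset.card_pos, hcard]; omega
  obtain ⟨p, hp⟩ := hCne
  by_cases hline : ∃ i : Fin m, ∀ x ∈ C, ∃ k ∈ (K : Set F), x = c i * k + p
  · obtain ⟨i, hi⟩ := hline
    refine ⟨c i, (hSmem _).2 ⟨i, 1, K.one_mem, one_ne_zero, (mul_one _).symm⟩, p, ?_⟩
    set L : Set F := {x : F | ∃ k ∈ (K : Set F), x = c i * k + p} with hL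
    have hsub : (C : Set F) ⊆ L := fun x hx => hi x hx
    have himg : L = (fun k => c i * k + p) '' (K : Set F) := by
      ext x
      simp only [hL, Set.mem_setOf_eq, Set.mem_image]
      constructor
      · rintro ⟨k, hk, rfl⟩; exact ⟨k, hk, rfl⟩
      · rintro ⟨k, hk, rfl⟩; exact ⟨k, hk, rfl⟩
    have hinj : Function.Injective (fun k : F => c i * k + p) := by
      intro a b hab
      simp only at hab
      exact mul_left_cancel₀ (hc i) (add_right_cancel hab)
    have hLcard : L.ncard = q := by
      rw [himg, Set.ncard_image_of_injective _ hinj]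
      rw [← hK]
      exact Nat.card_coe_set_eq (K : Set F) ▸ rfl
    have hCcard : (C : Set F).ncard = q := by rw [Set.ncard_coe_finset, hcard]
    exact (Set.eq_of_subset_of_ncard_le hsub (by rw [hLcard, hCcard]) (Set.toFinite L))
  · exfalso
    push_neg at hline
    set T : Fin m → Finset F :=
      fun i => C.filter (fun x => ∃ k ∈ (K : Set F), x = c i * k + p) with hTdef
    have hTcard : ∀ i, (T i).card ≤ m - 1 := by
      intro i
      obtain ⟨x, hxC, hx⟩ := hline i
      exact hB i p x hxC hx
    have hpT : ∀ i, p ∈ T i := by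
      intro i
      exact Finset.mem_filter.2 ⟨hp, 0, K.zero_mem, by ring⟩
    have hcover : C ⊆ insert p (Finset.univ.biUnion (fun i => (T i).erase p)) := by
      intro x hx
      by_cases hxp : x = p
      · simp [hxp]
      · obtain ⟨i, k, hk, hk0, hik⟩ := (hSmem _).1 (hadj x hx p hp hxp)
        refine Finset.mem_insert_of_mem (Finset.mem_biUnion.2 ⟨i, Finset.mem_univ _, ?_⟩)
        exact Finset.mem_erase.2 ⟨hxp,
          Finset.mem_filter.2 ⟨hx, k, hk, by linear_combination hik⟩⟩
    have hbound : q ≤ 1 + m * (m - 2) := by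
      have h1 := Finset.card_le_card hcover
      have h2 : (Finset.univ.biUnion (fun i => (T i).erase p)).card ≤ m * (m - 2) := by
        refine le_trans (Finset.card_biUnion_le) ?_
        have hterm : ∀ i ∈ (Finset.univ : Finset (Fin m)), ((T i).erase p).card ≤ m - 2 := by
          intro i _
          rw [Finset.card_erase_of_mem (hpT i)]
          have := hTcard i
          omega
        calc (∑ i : Fin m, ((T i).erase p).card) ≤ ∑ _i : Fin m, (m - 2) :=
              Finset.sum_le_sum hterm
          _ = m * (m - 2) := by rw [Finset.sum_const, Finset.card_univ, Fintype.card_fin,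
              smul_eq_mul]
      have h3 := Finset.card_insert_le p (Finset.univ.biUnion (fun i => (T i).erase p))
      omega
    rcases Nat.lt_or_ge m 2 with hm2 | hm2
    · interval_cases m <;> simp_all <;> omega
    · obtain ⟨k, rfl⟩ : ∃ k, m = k + 2 := ⟨m - 2, by omega⟩
      have : 1 + (k + 2) * (k + 2 - 2) = (k + 2 - 1) ^ 2 := by
        simp only [Nat.add_sub_cancel]
        have : k + 2 - 1 = k + 1 := by omega
        rw [this]; ring
      omega
end

section
/- Let q be an odd prime power and let d be a positive divisor of q+1 such that (q + 1 − d)² < q·d² (equivalently d > (q+1)/(√q+1)). Then the d-Paley graph GP(q², d) has the strict-EKR property: every clique of size q in GP(q², d) is of the form aF_q + b for some nonzero d-th power a ∈ F_{q²}* and some b ∈ F_{q²}, where F_q is the subfield of order q in F_{q²}. -/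
open Polynomial

lemma aux_pow_one (F : Type) [Field F] [Fintype F] (K : Subfield F) (q : ℕ)
    (hK : Nat.card K = q) : ∀ k : F, k ∈ K → k ≠ 0 → k ^ (q - 1) = 1 := by
  intro k hk hk0
  haveI : Fintype K := Fintype.ofFinite K
  have hcard : Fintype.card K = q := by rw [← Nat.card_eq_fintype_card, hK]
  have := FiniteField.pow_card_sub_one_eq_one (⟨k, hk⟩ : K)
    (by simp [Subtype.ext_iff, hk0])
  rw [hcard] at this
  have := congrArg (K.subtype) this
  simpa using this

lemma aux_mem (F : Type) [Field F] [Fintype F] [DecidableEq F] (K : Subfield F) (q : ℕ)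
    (hq : 2 ≤ q) (hK : Nat.card K = q) : ∀ t : F, t ^ (q - 1) = 1 → t ∈ K := by
  classical
  haveI : Fintype K := Fintype.ofFinite K
  have hcard : Fintype.card K = q := by rw [← Nat.card_eq_fintype_card, hK]
  set Kfin : Finset F := Finset.univ.image (fun x : K => (x : F)) with hKfin
  have hmemK : ∀ x : F, x ∈ Kfin ↔ x ∈ K := by
    intro x
    simp only [hKfin, Finset.mem_image, Finset.mem_univ, true_and]
    constructor
    · rintro ⟨y, rfl⟩; exact y.2
    · intro hx; exact ⟨⟨x, hx⟩, rfl⟩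
  have hKfincard : Kfin.card = q := by
    rw [hKfin, Finset.card_image_of_injective _ Subtype.coe_injective,
      Finset.card_univ, hcard]
  set Kx : Finset F := Kfin.erase 0 with hKx
  have hKxcard : Kx.card = q - 1 := by
    rw [hKx, Finset.card_erase_of_mem ((hmemK 0).2 K.zero_mem), hKfincard]
  set R : Finset F := ((X ^ (q - 1) - C 1 : F[X]).roots.toFinset) with hR
  have hRcard : R.card ≤ q - 1 := by
    refine le_trans (Multiset.toFinset_card_le _) ?_
    refine le_trans (Polynomial.card_roots' _) ?_
    rw [natDegree_X_pow_sub_C]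
  have hP0 : (X ^ (q - 1) - C 1 : F[X]) ≠ 0 := by
    intro h
    have := congrArg natDegree h
    rw [natDegree_X_pow_sub_C, natDegree_zero] at this
    omega
  have hmemR : ∀ t : F, t ∈ R ↔ t ^ (q - 1) = 1 := by
    intro t
    rw [hR, Multiset.mem_toFinset, Polynomial.mem_roots hP0]
    simp [sub_eq_zero]
  have hsub : Kx ⊆ R := by
    intro t ht
    rw [hKx, Finset.mem_erase] at ht
    exact (hmemR t).2 (aux_pow_one F K q hK t ((hmemK t).1 ht.2) ht.1)
  have heq : Kx = R := Finset.eq_of_subset_of_card_le hsub (by omega)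
  intro t ht
  have : t ∈ Kx := heq ▸ ((hmemR t).2 ht)
  rw [hKx, Finset.mem_erase] at this
  exact (hmemK t).1 this.2

lemma aux_dir (F : Type) [Field F] [Fintype F] [DecidableEq F] (K : Subfield F) (q : ℕ)
    (hq : 2 ≤ q) (hK : Nat.card K = q) :
    ∀ x y : F, x ≠ 0 → y ≠ 0 →
      (x ^ (q - 1) = y ^ (q - 1) ↔ ∃ k : F, k ∈ K ∧ k ≠ 0 ∧ x = k * y) := by
  intro x y hx hy
  constructor
  · intro h
    refine ⟨x / y, ?_, div_ne_zero hx hy, by field_simp⟩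
    refine aux_mem F K q hq hK _ ?_
    rw [div_pow, h, div_self (pow_ne_zero _ hy)]
  · rintro ⟨k, hkK, hk0, rfl⟩
    rw [mul_pow, aux_pow_one F K q hK k hkK hk0, one_mul]

lemma aux_line (F : Type) [Field F] [Fintype F] [DecidableEq F] (K : Subfield F) (q : ℕ)
    (hK : Nat.card K = q) (w c₀ : F) (hw : w ≠ 0) (C : Finset F) (hCcard : C.card = q)
    (hsub : ∀ u ∈ C, ∃ k : F, k ∈ K ∧ u = w * k + c₀) :
    (C : Set F) = {x : F | ∃ k ∈ (K : Set F), x = w * k + c₀} := by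
  classical
  haveI : Fintype K := Fintype.ofFinite K
  have hcard : Fintype.card K = q := by rw [← Nat.card_eq_fintype_card, hK]
  set Kfin : Finset F := Finset.univ.image (fun x : K => (x : F)) with hKfin
  have hmemK : ∀ x : F, x ∈ Kfin ↔ x ∈ K := by
    intro x
    simp only [hKfin, Finset.mem_image, Finset.mem_univ, true_and]
    constructor
    · rintro ⟨y, rfl⟩; exact y.2
    · intro hx; exact ⟨⟨x, hx⟩, rfl⟩
  set T : Finset F := Kfin.image (fun k => w * k + c₀) with hT
  have hTcard : T.card = q := by
    rw [hT, Finset.card_image_of_injective, hKfin,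
      Finset.card_image_of_injective _ Subtype.coe_injective, Finset.card_univ, hcard]
    intro a b hab
    simpa [hw] using hab
  have hCT : C ⊆ T := by
    intro u hu
    obtain ⟨k, hkK, rfl⟩ := hsub u hu
    exact Finset.mem_image.2 ⟨k, (hmemK k).2 hkK, rfl⟩
  have : C = T := Finset.eq_of_subset_of_card_le hCT (by omega)
  rw [this, hT]
  ext x
  simp only [Finset.coe_image, Set.mem_image, Finset.mem_coe, Set.mem_setOf_eq]
  constructor
  · rintro ⟨k, hk, rfl⟩
    exact ⟨k, (hmemK k).1 hk, rfl⟩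
  · rintro ⟨k, hk, rfl⟩
    exact ⟨k, (hmemK k).2 hk, rfl⟩

/-- Strict-EKR property for d-Paley graphs GP(q²,d) with d ∣ q+1 and
(q+1−d)² < q·d² (i.e. d > (q+1)/(√q+1)): every clique of size q is of the form
aF_q + b with a a nonzero d-th power. -/
theorem stmt_7
    (q d : ℕ) (hqodd : Odd q) (hqpp : IsPrimePow q)
    (hd : 0 < d) (hdvd : d ∣ q + 1)
    (hbig : (q + 1 - d) ^ 2 < q * d ^ 2)
    (F : Type) [Field F] [Fintype F] [DecidableEq F]
    (hF : Fintype.card F = q ^ 2)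
    (K : Subfield F) (hK : Nat.card K = q)
    (X : SimpleGraph F)
    (hX : ∀ x y : F, X.Adj x y ↔ x ≠ y ∧ ∃ z : F, z ≠ 0 ∧ x - y = z ^ d)
    (C : Finset F) (hC : X.IsNClique q C) :
    ∃ a b : F, (∃ z : F, z ≠ 0 ∧ a = z ^ d) ∧
      (C : Set F) = {x : F | ∃ k ∈ (K : Set F), x = a * k + b} := by
  classical
  have hq2 : 2 ≤ q := hqpp.two_le
  obtain ⟨m, hm⟩ := hdvd
  have hm1 : 1 ≤ m := by
    rcases Nat.eq_zero_or_pos m with h | h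
    · rw [h, Nat.mul_zero] at hm; omega
    · exact h
  -- (m-1)^2 < q
  have hmsq : (m - 1) ^ 2 < q := by
    obtain ⟨m', rfl⟩ : ∃ m', m = m' + 1 := ⟨m - 1, by omega⟩
    have h1 : q + 1 - d = d * m' := by
      have : d * (m' + 1) = d * m' + d := by ring
      omega
    rw [h1, mul_pow, mul_comm q (d ^ 2)] at hbig
    simp only [Nat.add_sub_cancel]
    exact Nat.lt_of_mul_lt_mul_left hbig
  have hCcard : C.card = q := hC.2
  have hCadj : ∀ u ∈ C, ∀ v ∈ C, u ≠ v → ∃ z : F, z ≠ 0 ∧ u - v = z ^ d := by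
    intro u hu v hv huv
    exact ((hX u v).1 (hC.1 hu hv huv)).2
  -- differences are m-th roots of unity after raising to q-1
  have hfΔ : ∀ u ∈ C, ∀ v ∈ C, u ≠ v → ((u - v) ^ (q - 1)) ^ m = 1 := by
    intro u hu v hv huv
    obtain ⟨z, hz0, hz⟩ := hCadj u hu v hv huv
    rw [hz, ← pow_mul, ← pow_mul]
    have hexp : d * ((q - 1) * m) = q ^ 2 - 1 := by
      obtain ⟨q', rfl⟩ : ∃ q', q = q' + 1 := ⟨q - 1, by omega⟩
      have h2 : d * ((q' + 1 - 1) * m) = d * m * q' := by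
        simp only [Nat.add_sub_cancel]; ring
      rw [h2, ← hm]
      have h3 : (q' + 1) ^ 2 = (q' + 1 + 1) * q' + 1 := by ring
      omega
    rw [hexp, ← hF]
    exact FiniteField.pow_card_sub_one_eq_one z hz0
  have hne_sub : ∀ u ∈ C, ∀ v ∈ C, u ≠ v → u - v ≠ 0 := fun u _ v _ huv => sub_ne_zero.2 huv
  obtain ⟨c₀, hc₀⟩ : C.Nonempty := Finset.card_pos.1 (by omega)
  set D := C.erase c₀ with hD
  have hDcard : D.card = q - 1 := by rw [hD, Finset.card_erase_of_mem hc₀, hCcard]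
  have hDmem : ∀ u ∈ D, u ∈ C ∧ u ≠ c₀ := by
    intro u hu; rw [hD, Finset.mem_erase] at hu; exact ⟨hu.2, hu.1⟩
  set f : F → F := fun u => (u - c₀) ^ (q - 1) with hf
  by_cases hconst : ∀ u ∈ D, ∀ v ∈ D, f u = f v
  · -- C is a line
    obtain ⟨u₀, hu₀⟩ : D.Nonempty := Finset.card_pos.1 (by omega)
    obtain ⟨hu₀C, hu₀c⟩ := hDmem u₀ hu₀
    obtain ⟨z, hz0, hz⟩ := hCadj u₀ hu₀C c₀ hc₀ hu₀c
    set w := u₀ - c₀ with hw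
    have hw0 : w ≠ 0 := sub_ne_zero.2 hu₀c
    refine ⟨w, c₀, ⟨z, hz0, hz⟩, ?_⟩
    refine aux_line F K q hK w c₀ hw0 C hCcard ?_
    intro u hu
    by_cases huc : u = c₀
    · exact ⟨0, K.zero_mem, by rw [huc, mul_zero, zero_add]⟩
    · have huD : u ∈ D := Finset.mem_erase.2 ⟨huc, hu⟩
      have := hconst u huD u₀ hu₀
      rw [hf] at this
      obtain ⟨k, hkK, hk0, hk⟩ := (aux_dir F K q hq2 hK (u - c₀) w
        (sub_ne_zero.2 huc) hw0).1 this
      exact ⟨k, hkK, by rw [mul_comm] at hk; linear_combination hk⟩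
  · -- counting contradiction
    exfalso
    push_neg at hconst
    obtain ⟨u₁, hu₁, v₁, hv₁, hne⟩ := hconst
    have hP0 : (Polynomial.X ^ m - Polynomial.C 1 : F[X]) ≠ 0 := by
      intro h
      have := congrArg Polynomial.natDegree h
      rw [natDegree_X_pow_sub_C, natDegree_zero] at this
      omega
    set Δ : Finset F := (Polynomial.X ^ m - Polynomial.C 1 : F[X]).roots.toFinset with hΔ
    have hΔcard : Δ.card ≤ m := by
      rw [hΔ]
      refine le_trans (Multiset.toFinset_card_le _) ?_
      refine le_trans (Polynomial.card_roots' _) ?_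
      rw [natDegree_X_pow_sub_C]
    have hmemΔ : ∀ t : F, t ^ m = 1 → t ∈ Δ := by
      intro t ht
      rw [hΔ, Multiset.mem_toFinset, Polynomial.mem_roots hP0]
      simp [sub_eq_zero, ht]
    have hdiffΔ : ∀ u ∈ C, ∀ v ∈ C, u ≠ v → (u - v) ^ (q - 1) ∈ Δ :=
      fun u hu v hv huv => hmemΔ _ (hfΔ u hu v hv huv)
    have hfD : ∀ u ∈ D, f u ∈ Δ :=
      fun u hu => hdiffΔ u (hDmem u hu).1 c₀ hc₀ (hDmem u hu).2
    have hsum : D.card = ∑ b ∈ Δ, (D.filter (fun u => f u = b)).card :=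
      Finset.card_eq_sum_card_fiberwise hfD
    have hfiber : ∀ b ∈ Δ, (D.filter (fun u => f u = b)).card ≤ Δ.card - 2 := by
      intro b hb
      rcases Finset.eq_empty_or_nonempty (D.filter (fun u => f u = b)) with he | hne'
      · rw [he]; simp
      · obtain ⟨v, hvD, hfvb⟩ : ∃ v ∈ D, f v ≠ b := by
          by_cases h1 : f u₁ = b
          · exact ⟨v₁, hv₁, fun hh => hne (h1.trans hh.symm)⟩
          · exact ⟨u₁, hu₁, h1⟩
        obtain ⟨hvC, hvc⟩ := hDmem v hvD
        have hvc0 : v - c₀ ≠ 0 := sub_ne_zero.2 hvc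
        have hfib : ∀ u ∈ D.filter (fun u => f u = b),
            u ∈ C ∧ u ≠ c₀ ∧ (u - c₀) ^ (q - 1) = b ∧ u ≠ v := by
          intro u hu
          rw [Finset.mem_filter] at hu
          obtain ⟨huD, hub⟩ := hu
          obtain ⟨huC, huc⟩ := hDmem u huD
          refine ⟨huC, huc, hub, ?_⟩
          rintro rfl
          exact hfvb hub
        have hcard2 : ((Δ.erase b).erase (f v)).card = Δ.card - 2 := by
          rw [Finset.card_erase_of_mem (Finset.mem_erase.2 ⟨hfvb, hfD v hvD⟩),
            Finset.card_erase_of_mem hb]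
          omega
        refine le_trans (Finset.card_le_card_of_injOn (fun u => (u - v) ^ (q - 1))
          ?_ ?_) (le_of_eq hcard2)
        · -- maps into (Δ.erase b).erase (f v)
          intro u hu
          obtain ⟨huC, huc, hub, huv⟩ := hfib u hu
          have h1 : (u - v) ^ (q - 1) ∈ Δ := hdiffΔ u huC v hvC huv
          have huv0 : u - v ≠ 0 := sub_ne_zero.2 huv
          have huc0 : u - c₀ ≠ 0 := sub_ne_zero.2 huc
          refine Finset.mem_erase.2 ⟨?_, Finset.mem_erase.2 ⟨?_, h1⟩⟩
          · -- (u-v)^(q-1) ≠ f v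
            intro hh
            rw [hf] at hh
            obtain ⟨k, hkK, hk0, hk⟩ := (aux_dir F K q hq2 hK _ _ huv0 hvc0).1 hh
            by_cases h1k : (1 : F) + k = 0
            · apply huc
              have h2 : u - c₀ = (1 + k) * (v - c₀) := by linear_combination hk
              rw [h1k, zero_mul] at h2
              exact sub_eq_zero.1 h2
            · apply hfvb
              have h2 : u - c₀ = (1 + k) * (v - c₀) := by linear_combination hk
              have h3 := (aux_dir F K q hq2 hK (u - c₀) (v - c₀) huc0 hvc0).2
                ⟨1 + k, K.add_mem K.one_mem hkK, h1k, h2⟩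
              show (v - c₀) ^ (q - 1) = b
              rw [← hub, h3]
          · -- (u-v)^(q-1) ≠ b
            intro hh
            rw [← hub] at hh
            obtain ⟨k, hkK, hk0, hk⟩ := (aux_dir F K q hq2 hK _ _ huv0 huc0).1 hh
            by_cases h1k : (1 : F) - k = 0
            · apply hvc
              have h2 : v - c₀ = (1 - k) * (u - c₀) := by linear_combination -hk
              rw [h1k, zero_mul] at h2
              exact sub_eq_zero.1 h2
            · apply hfvb
              have h2 : v - c₀ = (1 - k) * (u - c₀) := by linear_combination -hk
              have h3 := (aux_dir F K q hq2 hK (v - c₀) (u - c₀) hvc0 huc0).2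
                ⟨1 - k, K.sub_mem K.one_mem hkK, h1k, h2⟩
              show (v - c₀) ^ (q - 1) = b
              rw [h3, hub]
        · -- injectivity
          intro x hx y hy hxy
          simp only [Finset.mem_coe] at hx hy
          obtain ⟨hxC, hxc, hxb, hxv⟩ := hfib x hx
          obtain ⟨hyC, hyc, hyb, hyv⟩ := hfib y hy
          by_cases hxy0 : x = y
          · exact hxy0
          have hxv0 : x - v ≠ 0 := sub_ne_zero.2 hxv
          have hyv0 : y - v ≠ 0 := sub_ne_zero.2 hyv
          have hxc0 : x - c₀ ≠ 0 := sub_ne_zero.2 hxc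
          have hyc0 : y - c₀ ≠ 0 := sub_ne_zero.2 hyc
          obtain ⟨k, hkK, hk0, hk⟩ := (aux_dir F K q hq2 hK _ _ hxv0 hyv0).1 hxy
          obtain ⟨k', hkK', hk0', hk'⟩ := (aux_dir F K q hq2 hK (x - c₀) (y - c₀)
            hxc0 hyc0).1 (hxb.trans hyb.symm)
          by_cases hk1 : k = 1
          · subst hk1
            rw [one_mul] at hk
            exact absurd (by linear_combination hk) hxy0
          · exfalso
            have h1k : (1 : F) - k ≠ 0 := sub_ne_zero.2 (fun h => hk1 h.symm)
            have h3 : (1 - k) * (v - c₀) = (k' - k) * (y - c₀) := by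
              linear_combination hk' - hk
            set κ : F := (1 - k)⁻¹ * (k' - k) with hκ
            have hκK : κ ∈ K :=
              K.mul_mem (K.inv_mem (K.sub_mem K.one_mem hkK)) (K.sub_mem hkK' hkK)
            have h4 : v - c₀ = κ * (y - c₀) := by
              rw [hκ]
              field_simp
              linear_combination h3
            have hκ0 : κ ≠ 0 := by
              intro h
              rw [h, zero_mul] at h4
              exact hvc0 h4
            apply hfvb
            have h5 := (aux_dir F K q hq2 hK (v - c₀) (y - c₀) hvc0 hyc0).2
              ⟨κ, hκK, hκ0, h4⟩
            show (v - c₀) ^ (q - 1) = b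
            rw [h5, hyb]
    -- final counting contradiction
    have hsum2 : D.card ≤ Δ.card * (Δ.card - 2) := by
      rw [hsum]
      calc ∑ b ∈ Δ, (D.filter (fun u => f u = b)).card
          ≤ ∑ _b ∈ Δ, (Δ.card - 2) := Finset.sum_le_sum hfiber
        _ = Δ.card * (Δ.card - 2) := by rw [Finset.sum_const, smul_eq_mul]
    have h5 : Δ.card * (Δ.card - 2) ≤ m * (m - 2) := Nat.mul_le_mul hΔcard (by omega)
    rw [hDcard] at hsum2
    have h6 : q - 1 ≤ m * (m - 2) := le_trans hsum2 h5
    rcases Nat.lt_or_ge m 2 with h | h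
    · have hm2 : m - 2 = 0 := by omega
      rw [hm2, Nat.mul_zero] at h6
      omega
    obtain ⟨j, rfl⟩ : ∃ j, m = j + 2 := ⟨m - 2, by omega⟩
    have h7 : (j + 2) * (j + 2 - 2) = j * j + 2 * j := by
      simp only [Nat.add_sub_cancel]
      ring
    have h8 : (j + 2 - 1) ^ 2 = j * j + 2 * j + 1 := by
      have h9 : j + 2 - 1 = j + 1 := by omega
      rw [h9]
      ring
    omega
end

section
/- Let q be an odd prime power that is not prime. Then there exists a Peisert-type graph X of order q² that fails to have the strict-EKR property: there exist a connection set S ⊆ F_{q²}* that is a union of m ≤ q distinct cosets of F_q* with F_q* ⊆ S, and a clique C of size q in X = Cay(F_{q²}⁺, S) such that C is not equal to aF_q + b for any a ∈ S and b ∈ F_{q²}. -/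
open Module Submodule

private lemma ekr_aux_ext {k V : Type*} [Field k] [AddCommGroup V] [Module k V]
    [FiniteDimensional k V] (W : Submodule k V) :
    ∀ j : ℕ, finrank k W + j ≤ finrank k V →
      ∃ U : Submodule k V, W ≤ U ∧ finrank k U = finrank k W + j := by
  intro j
  induction j with
  | zero => intro _; exact ⟨W, le_rfl, rfl⟩
  | succ j ih =>
    intro h
    obtain ⟨U, hWU, hU⟩ := ih (by omega)
    have hlt : finrank k U < finrank k V := by omega
    obtain ⟨x, hx⟩ := U.exists_of_finrank_lt hlt
    have hxU : x ∉ U := by simpa using hx 1 one_ne_zero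
    have hx0 : x ≠ 0 := fun h0 => hxU (h0 ▸ U.zero_mem)
    refine ⟨U ⊔ k ∙ x, le_trans hWU le_sup_left, ?_⟩
    have hdisj : Disjoint U (k ∙ x) := by
      rw [disjoint_def]
      intro y hyU hyx
      obtain ⟨r, rfl⟩ := mem_span_singleton.mp hyx
      rcases eq_or_ne r 0 with rfl | hr
      · simp
      · exact absurd hyU (hx r hr)
    have he := Submodule.finrank_sup_add_finrank_inf_eq U (k ∙ x)
    rw [hdisj.eq_bot, finrank_bot, add_zero, finrank_span_singleton hx0] at he
    omega

/-- For every odd prime power q that is not prime, there is a Peisert-type graph of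
order q² failing the strict-EKR property: some connection set S (a union of m ≤ q
distinct cosets of F_q* containing F_q*) admits a clique C of size q in Cay(F_{q²},S)
that is not a canonical clique. -/
theorem stmt_8
    (q : ℕ) (hqodd : Odd q) (hqpp : IsPrimePow q) (hnotprime : ¬ q.Prime)
    (F : Type) [Field F] [Fintype F] [DecidableEq F]
    (hF : Fintype.card F = q ^ 2)
    (K : Subfield F) (hK : Nat.card K = q) :
    ∃ (m : ℕ) (c : Fin m → F) (S : Set F) (C : Finset F),
      m ≤ q ∧
      (∀ i, c i ≠ 0) ∧
      (∀ i j : Fin m, i ≠ j → c i / c j ∉ K) ∧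
      S = (⋃ i : Fin m, {x : F | ∃ k ∈ (K : Set F), k ≠ 0 ∧ x = c i * k}) ∧
      (∀ k : F, k ∈ K → k ≠ 0 → k ∈ S) ∧
      C.card = q ∧
      (∀ x ∈ C, ∀ y ∈ C, x ≠ y → x - y ∈ S) ∧
      ¬ ∃ a ∈ S, ∃ b : F, (C : Set F) = {x : F | ∃ k ∈ (K : Set F), x = a * k + b} := by
  classical
  obtain ⟨p, n, hp', hn0, hq⟩ := hqpp
  have hp : p.Prime := Nat.prime_iff.mpr hp'
  have hn2 : 2 ≤ n := by
    by_contra h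
    push_neg at h
    interval_cases n
    exact hnotprime (by rw [← hq, pow_one]; exact hp)
  have hq2 : 2 ≤ q := by
    have h1 : 2 ^ 1 ≤ 2 ^ n := Nat.pow_le_pow_right (by omega) (by omega)
    have h2 : 2 ^ n ≤ p ^ n := Nat.pow_le_pow_left hp.two_le n
    rw [← hq]
    exact le_trans (by simpa using h1) h2
  -- characteristic
  have hcardF : Fintype.card F = p ^ (2 * n) := by rw [hF, ← hq]; ring
  have hcharP : CharP F (ringChar F) := ringChar.charP F
  obtain ⟨m0, hm0p, hcardF'⟩ := FiniteField.card F (ringChar F)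
  have hpr : ringChar F = p := by
    have hpe : p ^ (2 * n) = ringChar F ^ (m0 : ℕ) := by rw [← hcardF', hcardF]
    have hdvd : p ∣ ringChar F ^ (m0 : ℕ) := hpe ▸ dvd_pow_self p (by omega)
    have := hp.dvd_of_dvd_pow hdvd
    exact ((Nat.prime_dvd_prime_iff_eq hp hm0p).mp this).symm
  haveI : CharP F p := hpr ▸ hcharP
  haveI : Fact p.Prime := ⟨hp⟩
  letI : Algebra (ZMod p) F := ZMod.algebra F p
  have hfr : finrank (ZMod p) F = 2 * n := by
    have hc := card_eq_pow_finrank (K := ZMod p) (V := F)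
    rw [ZMod.card, hcardF] at hc
    exact (Nat.pow_right_injective hp.two_le hc.symm)
  -- an element outside K
  have hδ : ∃ δ : F, δ ∉ K := by
    by_contra h
    push_neg at h
    have : Nat.card K = Fintype.card F := by
      rw [Nat.card_congr (Equiv.subtypeUnivEquiv h), Nat.card_eq_fintype_card]
    rw [hK, hF] at this
    nlinarith
  obtain ⟨δ, hδK⟩ := hδ
  -- the subspace U
  set W : Submodule (ZMod p) F := Submodule.span (ZMod p) ({1, δ} : Set F) with hWdef
  have hW2 : finrank (ZMod p) W ≤ 2 := by
    have h := finrank_span_le_card (R := ZMod p) ({1, δ} : Set F)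
    refine h.trans ?_
    rw [Set.toFinset_insert, Set.toFinset_singleton]
    exact (Finset.card_insert_le _ _).trans (by simp)
  obtain ⟨U, hWU, hUrank⟩ := ekr_aux_ext W (n - finrank (ZMod p) W) (by omega)
  have hUrank' : finrank (ZMod p) U = n := by omega
  have hcardU : Nat.card ↥U = q := by
    haveI : Fintype ↥U := Fintype.ofFinite _
    rw [Nat.card_eq_fintype_card]
    have hc := card_eq_pow_finrank (K := ZMod p) (V := ↥U)
    rw [ZMod.card, hUrank'] at hc
    rw [hc, hq]
  -- the clique C
  haveI : Fintype ↥(U : Set F) := Fintype.ofFinite _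
  set C : Finset F := Set.toFinset (U : Set F) with hCdef
  have hmemC : ∀ x : F, x ∈ C ↔ x ∈ U := fun x => Set.mem_toFinset
  have hCcard : C.card = q := by
    rw [hCdef, Set.toFinset_card, ← Nat.card_eq_fintype_card]
    exact hcardU
  have h1U : (1 : F) ∈ U := hWU (Submodule.subset_span (by simp))
  have hδU : δ ∈ U := hWU (Submodule.subset_span (by simp))
  -- lines
  set D : Finset F := C.erase 0 with hDdef
  have hmemD : ∀ x : F, x ∈ D ↔ x ≠ 0 ∧ x ∈ U := by
    intro x; rw [hDdef, Finset.mem_erase, hmemC]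
  set Lines : Finset (Submodule K F) := D.image (fun x => Submodule.span K {x}) with hLdef
  have hLines : ∀ ℓ ∈ Lines, ∃ x, x ∈ D ∧ Submodule.span K {x} = ℓ := by
    intro ℓ hℓ
    simpa using Finset.mem_image.mp hℓ
  set m : ℕ := Lines.card with hmdef
  set e : {ℓ // ℓ ∈ Lines} ≃ Fin m := Lines.equivFin with hedef
  set gen : {ℓ // ℓ ∈ Lines} → F := fun ℓ => Classical.choose (hLines ℓ.1 ℓ.2) with hgendef
  have hgen : ∀ ℓ : {ℓ // ℓ ∈ Lines}, gen ℓ ∈ D ∧ Submodule.span K {gen ℓ} = ℓ.1 :=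
    fun ℓ => Classical.choose_spec (hLines ℓ.1 ℓ.2)
  set c : Fin m → F := fun i => gen (e.symm i) with hcdef
  have hc0 : ∀ i, c i ≠ 0 := fun i => ((hmemD _).mp (hgen (e.symm i)).1).1
  -- span facts
  have hmemspan : ∀ x y : F, x ∈ Submodule.span K {y} ↔ ∃ r : K, (r : F) * y = x := by
    intro x y
    rw [Submodule.mem_span_singleton]
    exact Iff.rfl
  have hspan_eq : ∀ (x y : F) (r : K), x ≠ 0 → (r : F) * y = x →
      Submodule.span K {x} = Submodule.span K {y} := by
    intro x y r hx0 hr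
    have hrne : r ≠ 0 := by
      rintro rfl; apply hx0; rw [← hr]; simp
    have : (Submodule.span K ({r • y} : Set F)) = Submodule.span K {y} :=
      Submodule.span_singleton_smul_eq (isUnit_iff_ne_zero.mpr hrne) y
    rw [← this]
    congr 1
    rw [← hr]; rfl
  -- S
  set S : Set F := ⋃ i : Fin m, {x : F | ∃ k ∈ (K : Set F), k ≠ 0 ∧ x = c i * k} with hSdef
  -- membership of differences
  have hDS : ∀ d : F, d ∈ D → d ∈ S := by
    intro d hd
    have hd0 : d ≠ 0 := ((hmemD d).mp hd).1
    have hℓ : Submodule.span K {d} ∈ Lines := Finset.mem_image_of_mem _ hd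
    set ℓ : {ℓ // ℓ ∈ Lines} := ⟨Submodule.span K {d}, hℓ⟩ with hℓdef
    have hg := hgen ℓ
    have hdin : d ∈ Submodule.span K {gen ℓ} := by
      rw [hg.2]; exact Submodule.mem_span_singleton_self d
    obtain ⟨r, hr⟩ := (hmemspan _ _).mp hdin
    have hrne : (r : F) ≠ 0 := by
      rintro h0; apply hd0; rw [← hr, h0, zero_mul]
    refine Set.mem_iUnion.mpr ⟨e ℓ, ⟨(r : F), r.2, hrne, ?_⟩⟩
    rw [hcdef]
    simp only [Equiv.symm_apply_apply]
    rw [← hr, mul_comm]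
  refine ⟨m, c, S, C, ?_, hc0, ?_, rfl, ?_, hCcard, ?_, ?_⟩
  · -- m ≤ q
    calc m = Lines.card := rfl
    _ ≤ D.card := Finset.card_image_le
    _ ≤ C.card := Finset.card_erase_le
    _ = q := hCcard
  · -- distinct cosets
    intro i j hij hmem
    obtain ⟨r, hr⟩ : ∃ r : K, (r : F) = c i / c j := ⟨⟨_, hmem⟩, rfl⟩
    have hcj : c j ≠ 0 := hc0 j
    have hr' : (r : F) * c j = c i := by
      rw [hr, div_mul_cancel₀ _ hcj]
    have hsp : Submodule.span K {c i} = Submodule.span K {c j} :=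
      hspan_eq _ _ r (hc0 i) hr'
    have hi := (hgen (e.symm i)).2
    have hj := (hgen (e.symm j)).2
    apply hij
    have : (e.symm i).1 = (e.symm j).1 := by rw [← hi, ← hj]; exact hsp
    have : e.symm i = e.symm j := Subtype.ext this
    exact e.symm.injective this
  · -- K* ⊆ S
    intro k hk hk0
    have h1D : (1 : F) ∈ D := (hmemD 1).mpr ⟨one_ne_zero, h1U⟩
    have h1S := hDS 1 h1D
    obtain ⟨si, hsi⟩ := Set.mem_iUnion.mp h1S
    obtain ⟨k', hk', hk'0, h1eq⟩ := hsi
    refine Set.mem_iUnion.mpr ⟨si, ⟨k' * k, K.mul_mem hk' hk, mul_ne_zero hk'0 hk0, ?_⟩⟩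
    rw [← mul_assoc, ← h1eq, one_mul]
  · -- clique
    intro x hx y hy hxy
    have hxU := (hmemC x).mp hx
    have hyU := (hmemC y).mp hy
    have hdU : x - y ∈ U := U.sub_mem hxU hyU
    have hd0 : x - y ≠ 0 := sub_ne_zero_of_ne hxy
    exact hDS _ ((hmemD _).mpr ⟨hd0, hdU⟩)
  · -- not canonical
    rintro ⟨a, haS, b, hCeq⟩
    have h0C : (0 : F) ∈ (C : Set F) := by
      rw [Finset.mem_coe, hmemC]; exact U.zero_mem
    have h1C : (1 : F) ∈ (C : Set F) := by
      rw [Finset.mem_coe, hmemC]; exact h1U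
    have hδC : δ ∈ (C : Set F) := by
      rw [Finset.mem_coe, hmemC]; exact hδU
    rw [hCeq] at h0C h1C hδC
    obtain ⟨k0, hk0, he0⟩ := h0C
    obtain ⟨k1, hk1, he1⟩ := h1C
    obtain ⟨k2, hk2, he2⟩ := hδC
    -- 1 = a*(k1-k0), δ = a*(k2-k0)
    have ha1 : a * (k1 - k0) = 1 := by
      linear_combination he1.symm - he0.symm
    have ha2 : a * (k2 - k0) = δ := by
      linear_combination he2.symm - he0.symm
    have hne : (k1 - k0) ≠ 0 := by
      rintro h0; rw [h0, mul_zero] at ha1; exact one_ne_zero ha1.symm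
    apply hδK
    have : δ = (k2 - k0) / (k1 - k0) := by
      rw [eq_div_iff hne]
      linear_combination (k2 - k0) * ha1 - (k1 - k0) * ha2
    rw [this]
    exact K.div_mem (K.sub_mem hk2 hk0) (K.sub_mem hk1 hk0)
end

section
/- Let q₀ be an odd prime power and set q = q₀² (so q is an odd prime power that is a square). Then there exists a Peisert-type graph X of type (q₀ + 1, q) that fails to have the strict-EKR property: there exist a connection set S ⊆ F_{q²}* that is a union of exactly q₀ + 1 distinct cosets of F_q* with F_q* ⊆ S, and a clique C of size q in X = Cay(F_{q²}⁺, S) such that C is not equal to aF_q + b for any a ∈ S and b ∈ F_{q²}. (Hence the bound q > (m−1)² in the strict-EKR criterion is sharp when q is a square.) -/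
open Finset Polynomial

private lemma root_count_le (F : Type) [Field F] [Fintype F] [DecidableEq F]
    {n : ℕ} (hn : 1 < n) :
    (Finset.univ.filter fun x : F => x ^ n = x).card ≤ n := by
  classical
  have hne : (X ^ n - X : F[X]) ≠ 0 := FiniteField.X_pow_card_sub_X_ne_zero F hn
  calc (Finset.univ.filter fun x : F => x ^ n = x).card
      ≤ (X ^ n - X : F[X]).roots.toFinset.card := by
        apply Finset.card_le_card
        intro x hx
        simp only [Finset.mem_filter, Finset.mem_univ, true_and] at hx
        rw [Multiset.mem_toFinset, mem_roots hne]
        simp [IsRoot.def, hx]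
    _ ≤ Multiset.card (X ^ n - X : F[X]).roots := Multiset.toFinset_card_le _
    _ ≤ (X ^ n - X : F[X]).natDegree := (X ^ n - X : F[X]).card_roots'
    _ = n := FiniteField.X_pow_card_sub_X_natDegree_eq F hn

/-- If q = q₀² is a square odd prime power, there is a Peisert-type graph of type
(q₀+1, q) failing the strict-EKR property: some connection set S that is a union of
exactly q₀+1 distinct cosets of F_q* containing F_q* admits a clique C of size q in
Cay(F_{q²},S) that is not a canonical clique. -/
theorem stmt_9
    (q₀ q : ℕ) (hq₀odd : Odd q₀) (hq₀pp : IsPrimePow q₀) (hq : q = q₀ ^ 2)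
    (F : Type) [Field F] [Fintype F] [DecidableEq F]
    (hF : Fintype.card F = q ^ 2)
    (K : Subfield F) (hK : Nat.card K = q) :
    ∃ (c : Fin (q₀ + 1) → F) (S : Set F) (C : Finset F),
      (∀ i, c i ≠ 0) ∧
      (∀ i j : Fin (q₀ + 1), i ≠ j → c i / c j ∉ K) ∧
      S = (⋃ i : Fin (q₀ + 1), {x : F | ∃ k ∈ (K : Set F), k ≠ 0 ∧ x = c i * k}) ∧
      (∀ k : F, k ∈ K → k ≠ 0 → k ∈ S) ∧
      C.card = q ∧
      (∀ x ∈ C, ∀ y ∈ C, x ≠ y → x - y ∈ S) ∧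
      ¬ ∃ a ∈ S, ∃ b : F, (C : Set F) = {x : F | ∃ k ∈ (K : Set F), x = a * k + b} := by
  classical
  subst hq
  have hq₀2 : 2 ≤ q₀ := hq₀pp.two_le
  have hq₀1 : 1 < q₀ := hq₀2
  have hq₀0 : q₀ ≠ 0 := by omega
  have hF4 : Fintype.card F = q₀ ^ 4 := by rw [hF]; ring
  -- characteristic
  obtain ⟨p, k, hpP, hk, hpk⟩ := hq₀pp
  have hpprime : p.Prime := hpP.nat_prime
  haveI : Fact p.Prime := ⟨hpprime⟩
  have hcharp : CharP F p := by
    haveI hc : CharP F (ringChar F) := ringChar.charP F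
    obtain ⟨n, hp', hcard'⟩ := FiniteField.card F (ringChar F)
    have hpow : (ringChar F) ^ (n : ℕ) = p ^ (4 * k) := by
      rw [← hcard', hF4, ← hpk]; ring
    have hdvd : ringChar F ∣ p ^ (4 * k) := by
      rw [← hpow]
      exact dvd_pow_self _ (by exact_mod_cast n.2.ne')
    have : ringChar F = p :=
      (Nat.prime_dvd_prime_iff_eq hp' hpprime).mp (hp'.dvd_of_dvd_pow hdvd)
    rwa [this] at hc
  haveI := hcharp
  -- K is exactly the set of solutions of x ^ (q₀^2) = x
  haveI : Fintype K := Fintype.ofFinite K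
  have hcardK : Fintype.card K = q₀ ^ 2 := by rw [← Nat.card_eq_fintype_card]; exact hK
  have hKpow : ∀ x : F, x ∈ K → x ^ (q₀ ^ 2) = x := by
    intro x hx
    have h2 : (⟨x, hx⟩ : K) ^ (q₀ ^ 2) = ⟨x, hx⟩ := by
      rw [← hcardK]; exact FiniteField.pow_card _
    have h3 := congrArg Subtype.val h2
    push_cast at h3
    exact h3
  have hKiff : ∀ x : F, x ∈ K ↔ x ^ (q₀ ^ 2) = x := by
    set KF : Finset F := Finset.univ.filter (· ∈ K) with hKF
    set T : Finset F := Finset.univ.filter (fun x : F => x ^ (q₀ ^ 2) = x) with hT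
    have hsub : KF ⊆ T := by
      intro x hx
      simp only [hKF, hT, Finset.mem_filter, Finset.mem_univ, true_and] at *
      exact hKpow x hx
    have hKFcard : KF.card = q₀ ^ 2 := by
      rw [← hcardK]
      exact (Fintype.card_of_subtype KF (by simp [hKF])).symm
    have hTle : T.card ≤ q₀ ^ 2 := root_count_le F (by nlinarith : 1 < q₀ ^ 2)
    have heq : KF = T :=
      Finset.eq_of_subset_of_card_le hsub (by omega)
    intro x
    constructor
    · exact hKpow x
    · intro hx
      have : x ∈ T := by simp [hT, hx]
      rw [← heq] at this
      simpa [hKF] using this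
  -- the subfield (as a set of solutions) of order q₀
  set K₀ : Finset F := Finset.univ.filter (fun x : F => x ^ q₀ = x) with hK₀
  have hK₀mem : ∀ x : F, x ∈ K₀ ↔ x ^ q₀ = x := by
    intro x; simp [hK₀]
  have hK₀K : ∀ x : F, x ^ q₀ = x → x ∈ K := by
    intro x hx
    rw [hKiff, pow_two, pow_mul, hx, hx]
  have hsubclosed : ∀ x y : F, x ^ q₀ = x → y ^ q₀ = y → (x - y) ^ q₀ = x - y := by
    intro x y hx hy
    rw [← hpk, sub_pow_char_pow, hpk, hx, hy]
  have hdivclosed : ∀ x y : F, x ^ q₀ = x → y ^ q₀ = y → (x / y) ^ q₀ = x / y := by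
    intro x y hx hy
    rw [div_pow, hx, hy]
  -- |K₀| = q₀
  have hK₀le : K₀.card ≤ q₀ := root_count_le F hq₀1
  have hK₀card : K₀.card = q₀ := by
    -- lower bound via a cyclic subgroup of Fˣ of order q₀ - 1
    have hdvd : (q₀ - 1) ∣ Fintype.card Fˣ := by
      rw [Fintype.card_units, hF4]
      simpa using Nat.sub_dvd_pow_sub_pow q₀ 1 4
    have hmmm : (Finset.univ.filter fun a : Fˣ => orderOf a = q₀ - 1).card
        = Nat.totient (q₀ - 1) := IsCyclic.card_orderOf_eq_totient hdvd
    have hpos : 0 < (Finset.univ.filter fun a : Fˣ => orderOf a = q₀ - 1).card := by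
      rw [hmmm]; exact Nat.totient_pos.mpr (by omega)
    obtain ⟨u, hu⟩ := Finset.card_pos.mp hpos
    have huo : orderOf u = q₀ - 1 := (Finset.mem_filter.mp hu).2
    have huoF : orderOf ((u : F)) = q₀ - 1 := by rw [orderOf_units, huo]
    have hud : (u : F) ^ (q₀ - 1) = 1 := by
      rw [← huoF]; exact pow_orderOf_eq_one _
    set E : Finset F := insert (0 : F) ((Finset.range (q₀ - 1)).image fun i => (u : F) ^ i)
      with hE
    have hEsub : E ⊆ K₀ := by
      intro x hx
      rw [hK₀mem]
      rcases Finset.mem_insert.mp hx with h0 | him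
      · rw [h0, zero_pow hq₀0]
      · obtain ⟨i, _, rfl⟩ := Finset.mem_image.mp him
        have hx1 : ((u : F) ^ i) ^ (q₀ - 1) = 1 := by
          rw [← pow_mul, mul_comm, pow_mul, hud, one_pow]
        calc ((u : F) ^ i) ^ q₀ = ((u : F) ^ i) ^ (q₀ - 1) * ((u : F) ^ i) := by
              rw [← pow_succ]; congr 1; omega
          _ = (u : F) ^ i := by rw [hx1, one_mul]
    have hEcard : E.card = q₀ := by
      rw [hE, Finset.card_insert_of_notMem, Finset.card_image_of_injOn, Finset.card_range]
      · omega
      · intro i hi j hj hij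
        refine pow_injOn_Iio_orderOf ?_ ?_ hij
        · simpa [huoF] using Finset.mem_range.mp hi
        · simpa [huoF] using Finset.mem_range.mp hj
      · intro h
        obtain ⟨i, _, hi⟩ := Finset.mem_image.mp h
        exact (Units.ne_zero (u ^ i)) (by rw [← hi]; push_cast; ring)
    have := Finset.card_le_card hEsub
    omega
  -- pick θ outside K
  have hθex : ∃ θ : F, θ ∉ K := by
    by_contra h
    push_neg at h
    have : Fintype.card K = Fintype.card F := by
      apply Fintype.card_congr
      exact Equiv.subtypeUnivEquiv h
    rw [hcardK, hF4] at this
    have : q₀ ^ 2 < q₀ ^ 4 := Nat.pow_lt_pow_right hq₀1 (by norm_num)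
    omega
  obtain ⟨θ, hθ⟩ := hθex
  -- enumeration of K₀
  have e := K₀.equivFinOfCardEq hK₀card
  set w : Fin q₀ → F := fun i => ((e.symm i : K₀) : F) with hw
  have hwmem : ∀ i, w i ∈ K₀ := fun i => (e.symm i).2
  have hwpow : ∀ i, (w i) ^ q₀ = w i := fun i => (hK₀mem _).mp (hwmem i)
  have hwK : ∀ i, w i ∈ K := fun i => hK₀K _ (hwpow i)
  have hwinj : Function.Injective w := by
    intro i j hij
    have : e.symm i = e.symm j := Subtype.ext hij
    exact e.symm.injective this
  have hwsurj : ∀ x : F, x ∈ K₀ → ∃ i, w i = x := by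
    intro x hx
    exact ⟨e ⟨x, hx⟩, by simp [hw]⟩
  -- the connection directions
  set c : Fin (q₀ + 1) → F := Fin.cons (1 : F) (fun j => θ + w j) with hc
  have hc0 : c 0 = 1 := rfl
  have hcs : ∀ j : Fin q₀, c j.succ = θ + w j := fun j => by
    simp [hc]
  have hcne : ∀ j : Fin q₀, θ + w j ≠ 0 := by
    intro j h
    apply hθ
    have : θ = 0 - w j := by rw [← h]; ring
    rw [this]
    exact K.sub_mem K.zero_mem (hwK j)
  -- the clique
  set C : Finset F := (K₀ ×ˢ K₀).image (fun st : F × F => st.1 + st.2 * θ) with hC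
  refine ⟨c, _, C, ?_, ?_, rfl, ?_, ?_, ?_, ?_⟩
  · -- c i ≠ 0
    intro i
    induction i using Fin.cases with
    | zero => rw [hc0]; exact one_ne_zero
    | succ j => rw [hcs]; exact hcne j
  · -- distinct cosets
    intro i j hij hmem
    induction i using Fin.cases with
    | zero =>
      induction j using Fin.cases with
      | zero => exact hij rfl
      | succ j' =>
        rw [hc0, hcs] at hmem
        apply hθ
        have hne := hcne j'
        have hKinv : (1 / (θ + w j'))⁻¹ ∈ K := K.inv_mem hmem
        rw [one_div, inv_inv] at hKinv
        have : θ = (θ + w j') - w j' := by ring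
        rw [this]
        exact K.sub_mem hKinv (hwK j')
    | succ i' =>
      induction j using Fin.cases with
      | zero =>
        rw [hc0, hcs, div_one] at hmem
        apply hθ
        have : θ = (θ + w i') - w i' := by ring
        rw [this]
        exact K.sub_mem hmem (hwK i')
      | succ j' =>
        rw [hcs, hcs] at hmem
        set lam : F := (θ + w i') / (θ + w j') with hlam
        have heq : θ + w i' = lam * (θ + w j') := by
          rw [hlam, div_mul_cancel₀ _ (hcne j')]
        by_cases hl1 : lam = 1
        · rw [hl1, one_mul] at heq
          have : w i' = w j' := by linear_combination heq
          exact hij (congrArg Fin.succ (hwinj this))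
        · apply hθ
          have hθeq : θ = (lam * w j' - w i') / (1 - lam) := by
            have h1l : (1 : F) - lam ≠ 0 := fun h => hl1 (by linear_combination -h)
            rw [eq_div_iff h1l]
            linear_combination heq
          rw [hθeq]
          exact K.div_mem (K.sub_mem (K.mul_mem hmem (hwK j')) (hwK i'))
            (K.sub_mem K.one_mem hmem)
  · -- F_q* ⊆ S
    intro x hx hx0
    refine Set.mem_iUnion.mpr ⟨0, x, hx, hx0, ?_⟩
    rw [hc0, one_mul]
  · -- C.card = q
    rw [hC, Finset.card_image_of_injOn, Finset.card_product, hK₀card, pow_two]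
    intro st hst st' hst' h
    simp only [Finset.mem_coe, Finset.mem_product] at hst hst'
    have h1 : st.1 - st'.1 = (st'.2 - st.2) * θ := by linear_combination h
    by_cases ht : st.2 = st'.2
    · have : st.1 = st'.1 := by
        have h2 := h1
        rw [ht] at h2
        have h3 : st.1 - st'.1 = 0 := by simpa using h2
        exact sub_eq_zero.mp h3
      exact Prod.ext this ht
    · exfalso
      apply hθ
      have hne : st'.2 - st.2 ≠ 0 := fun hh => ht (by linear_combination -hh)
      have : θ = (st.1 - st'.1) / (st'.2 - st.2) := by
        rw [h1, mul_div_cancel_left₀ _ hne]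
      rw [this]
      exact K.div_mem
        (K.sub_mem (hK₀K _ ((hK₀mem _).mp hst.1)) (hK₀K _ ((hK₀mem _).mp hst'.1)))
        (K.sub_mem (hK₀K _ ((hK₀mem _).mp hst'.2)) (hK₀K _ ((hK₀mem _).mp hst.2)))
  · -- clique condition
    intro x hx y hy hxy
    rw [hC, Finset.mem_image] at hx hy
    obtain ⟨⟨s, t⟩, hst, rfl⟩ := hx
    obtain ⟨⟨s', t'⟩, hst', rfl⟩ := hy
    rw [Finset.mem_product] at hst hst'
    have hs := (hK₀mem _).mp hst.1
    have ht := (hK₀mem _).mp hst.2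
    have hs' := (hK₀mem _).mp hst'.1
    have ht' := (hK₀mem _).mp hst'.2
    by_cases htt : t = t'
    · subst htt
      have hss : s - s' ≠ 0 := by
        intro h
        exact hxy (by linear_combination h)
      refine Set.mem_iUnion.mpr ⟨0, s - s', hK₀K _ (hsubclosed _ _ hs hs'), hss, ?_⟩
      rw [hc0, one_mul]; ring
    · have httne : t - t' ≠ 0 := sub_ne_zero.mpr htt
      have hv : ((s - s') / (t - t')) ^ q₀ = (s - s') / (t - t') :=
        hdivclosed _ _ (hsubclosed _ _ hs hs') (hsubclosed _ _ ht ht')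
      obtain ⟨j, hj⟩ := hwsurj _ ((hK₀mem _).mpr hv)
      refine Set.mem_iUnion.mpr ⟨j.succ, t - t', hK₀K _ (hsubclosed _ _ ht ht'), httne, ?_⟩
      rw [hcs, hj]
      field_simp
      ring
  · -- not canonical
    rintro ⟨a, _, b, hCeq⟩
    have h0K₀ : (0 : F) ∈ K₀ := (hK₀mem _).mpr (by rw [zero_pow hq₀0])
    have h1K₀ : (1 : F) ∈ K₀ := (hK₀mem _).mpr (by rw [one_pow])
    have hmem : ∀ x : F, x ∈ C → ∃ k ∈ (K : Set F), x = a * k + b := by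
      intro x hx
      have : x ∈ (C : Set F) := hx
      rw [hCeq] at this
      exact this
    have h0C : (0 : F) ∈ C := by
      rw [hC, Finset.mem_image]
      exact ⟨(0, 0), Finset.mem_product.mpr ⟨h0K₀, h0K₀⟩, by ring⟩
    have h1C : (1 : F) ∈ C := by
      rw [hC, Finset.mem_image]
      exact ⟨(1, 0), Finset.mem_product.mpr ⟨h1K₀, h0K₀⟩, by ring⟩
    have hθC : θ ∈ C := by
      rw [hC, Finset.mem_image]
      exact ⟨(0, 1), Finset.mem_product.mpr ⟨h0K₀, h1K₀⟩, by ring⟩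
    obtain ⟨k₀, hk₀, e₀⟩ := hmem 0 h0C
    obtain ⟨k₁, hk₁, e₁⟩ := hmem 1 h1C
    obtain ⟨k₂, hk₂, e₂⟩ := hmem θ hθC
    have ha1 : a * (k₁ - k₀) = 1 := by linear_combination e₀ - e₁
    have haθ : a * (k₂ - k₀) = θ := by linear_combination e₀ - e₂
    have hk10 : k₁ - k₀ ≠ 0 := by
      intro h
      rw [h, mul_zero] at ha1
      exact zero_ne_one ha1
    have ha : a = (k₁ - k₀)⁻¹ := by
      field_simp
      linear_combination ha1
    apply hθ
    rw [← haθ, ha]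
    exact K.mul_mem (K.inv_mem (K.sub_mem hk₁ hk₀)) (K.sub_mem hk₂ hk₀)
end
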